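/- arXiv:1610.06309 — 11 statements merged into one kernel-verified Lean document; each statement's English description precedes it below -/
import Mathlib

section
/- Let A : ℕ → ℝ be a nondecreasing sequence of arrival times with A(0) = 0, and L : ℕ → ℝ a sequence of nonnegative service times. Define the start-of-service times by V(1) = A(1) and V(n) = max{A(n), V(n−1) + L(n−1)} for n ≥ 2, and the departure times by D(n) = V(n) + L(n). Then for all n ≥ 1, V(n) = max_{m ∈ [1,n]} { A(m) + Σ_{ν=m}^{n−1} L(ν) } and D(n) = max_{m ∈ [1,n]} { A(m) + Σ_{ν=m}^{n} L(ν) }; that is, a lossless work-conserving first-in first-out system is an exact max-plus server with service process S(m,n) = Σ_{ν=m}^{n} L(ν). -/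
/-- **Work-conserving system is an exact max-plus server.**
`A` are nondecreasing arrival times with `A 0 = 0`, `L` nonnegative service times,
`V` the start-of-service times defined by the work-conserving FIFO recursion, and
`D n = V n + L n` the departure times.  Then for all `n ≥ 1`,
`V n = max_{m ∈ [1,n]} (A m + ∑_{ν=m}^{n-1} L ν)` and
`D n = max_{m ∈ [1,n]} (A m + ∑_{ν=m}^{n} L ν)`, i.e. the system is an exact
max-plus server with service process `S(m,n) = ∑_{ν=m}^{n} L ν`. -/
theorem work_conserving_exact_maxplus_server
    (A L V D : ℕ → ℝ)
    (hA0 : A 0 = 0) (hAmono : Monotone A) (hL : ∀ n, 0 ≤ L n)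
    (hV1 : V 1 = A 1)
    (hVrec : ∀ n, 2 ≤ n → V n = max (A n) (V (n - 1) + L (n - 1)))
    (hD : ∀ n, D n = V n + L n) :
    ∀ n, ∀ hn : 1 ≤ n,
      V n = (Finset.Icc 1 n).sup' (Finset.nonempty_Icc.mpr hn)
              (fun m => A m + ∑ ν ∈ Finset.Icc m (n - 1), L ν) ∧
      D n = (Finset.Icc 1 n).sup' (Finset.nonempty_Icc.mpr hn)
              (fun m => A m + ∑ ν ∈ Finset.Icc m n, L ν) := by
  -- key claim for V, by induction
  have key : ∀ n, ∀ hn : 1 ≤ n,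
      V n = (Finset.Icc 1 n).sup' (Finset.nonempty_Icc.mpr hn)
              (fun m => A m + ∑ ν ∈ Finset.Icc m (n - 1), L ν) := by
    intro n
    induction n with
    | zero => intro h; omega
    | succ n ih =>
      intro hn
      rcases Nat.lt_or_ge n 1 with h | h
      · interval_cases n
        simp [hV1]
      · have h2 : 2 ≤ n + 1 := by omega
        have hne : (Finset.Icc 1 n).Nonempty := Finset.nonempty_Icc.mpr h
        rw [hVrec (n+1) h2]
        simp only [Nat.add_sub_cancel]
        rw [ih h]
        have hadd : (Finset.Icc 1 n).sup' hne
              (fun m => A m + ∑ ν ∈ Finset.Icc m (n - 1), L ν) + L n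
            = (Finset.Icc 1 n).sup' hne
              (fun m => A m + ∑ ν ∈ Finset.Icc m n, L ν) := by
          rw [Finset.comp_sup'_eq_sup'_comp hne (· + L n)
            (fun x y => (max_add_add_right x y (L n)).symm)]
          apply Finset.sup'_congr hne rfl
          intro m hm
          simp only [Function.comp]
          have hm' : m ≤ n := (Finset.mem_Icc.mp hm).2
          have hn1 : n - 1 + 1 = n := by omega
          have hs := Finset.sum_Icc_succ_top (show m ≤ n - 1 + 1 by omega) L
          rw [hn1] at hs
          rw [hs, add_assoc]
        rw [hadd]
        have hins : Finset.Icc 1 (n+1) = insert (n+1) (Finset.Icc 1 n) := by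
          ext x; simp [Finset.mem_Icc]; omega
        rw [Finset.sup'_congr (Finset.nonempty_Icc.mpr hn) hins (fun x _ => rfl),
          Finset.sup'_insert hne]
        have hempty : Finset.Icc (n+1) n = ∅ := by
          apply Finset.Icc_eq_empty; omega
        rw [hempty]
        simp
  intro n hn
  refine ⟨key n hn, ?_⟩
  rw [hD n, key n hn]
  have hne := Finset.nonempty_Icc.mpr hn
  rw [Finset.comp_sup'_eq_sup'_comp hne (· + L n)
    (fun x y => (max_add_add_right x y (L n)).symm)]
  apply Finset.sup'_congr hne rfl
  intro m hm
  simp only [Function.comp]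
  have hm' : m ≤ n := (Finset.mem_Icc.mp hm).2
  have hn1 : n - 1 + 1 = n := by omega
  have hs := Finset.sum_Icc_succ_top (show m ≤ n - 1 + 1 by omega) L
  rw [hn1] at hs
  rw [hs, add_assoc]
end

section
/- Let (a(ν))_{ν ≥ 1} be i.i.d. nonnegative random variables (inter-arrival times) and (L(ν))_{ν ≥ 1} be i.i.d. nonnegative random variables (service times), with the two families independent of each other. Define A(m,n) = Σ_{ν=m}^{n−1} a(ν), S(m,n) = Σ_{ν=m}^{n} L(ν), and the sojourn time T(n) = max_{m ∈ [1,n]} { S(m,n) − A(m,n) }. Fix θ > 0 such that E[exp(θ L(1))] · E[exp(−θ a(1))] ≤ 1. Then for all n ≥ 1 and all τ ≥ 0, P[T(n) > τ] ≤ E[exp(θ L(1))] · exp(−θτ). -/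
open MeasureTheory ProbabilityTheory Real

lemma gigi1_comb {Ω : Type*} [MeasurableSpace Ω] {μ : Measure Ω}
    (a L : ℕ → Ω → ℝ)
    (haiid : iIndepFun a μ)
    (hLiid : iIndepFun L μ)
    (hindep : IndepFun (fun ω (ν : ℕ) => a ν ω) (fun ω (ν : ℕ) => L ν ω) μ) :
    iIndepFun (Sum.elim a L) μ := by
  classical
  rw [iIndepFun_iff]
  intro s f' hf'
  have hsplit : ⋂ j ∈ s, f' j
      = (⋂ ν ∈ s.toLeft, f' (Sum.inl ν)) ∩ ⋂ ν ∈ s.toRight, f' (Sum.inr ν) := by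
    conv_lhs => rw [← Finset.toLeft_disjSum_toRight (u := s)]
    ext ω
    simp only [Set.mem_iInter, Set.mem_inter_iff, Finset.mem_disjSum]
    constructor
    · intro h
      exact ⟨fun ν hν => h _ (Or.inl ⟨ν, hν, rfl⟩), fun ν hν => h _ (Or.inr ⟨ν, hν, rfl⟩)⟩
    · rintro ⟨h1, h2⟩ j (⟨ν, hν, rfl⟩ | ⟨ν, hν, rfl⟩)
      exacts [h1 ν hν, h2 ν hν]
  have hcomapa : ∀ ν : ℕ, MeasurableSpace.comap (a ν) inferInstance ≤
      MeasurableSpace.comap (fun ω (ν : ℕ) => a ν ω) inferInstance := by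
    intro ν
    have h : a ν = (fun g : ℕ → ℝ => g ν) ∘ (fun ω (ν : ℕ) => a ν ω) := rfl
    rw [h, ← MeasurableSpace.comap_comp]
    exact MeasurableSpace.comap_mono (measurable_pi_apply ν).comap_le
  have hcomapL : ∀ ν : ℕ, MeasurableSpace.comap (L ν) inferInstance ≤
      MeasurableSpace.comap (fun ω (ν : ℕ) => L ν ω) inferInstance := by
    intro ν
    have h : L ν = (fun g : ℕ → ℝ => g ν) ∘ (fun ω (ν : ℕ) => L ν ω) := rfl
    rw [h, ← MeasurableSpace.comap_comp]
    exact MeasurableSpace.comap_mono (measurable_pi_apply ν).comap_le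
  have hmA : MeasurableSet[MeasurableSpace.comap (fun ω (ν : ℕ) => a ν ω) inferInstance]
      (⋂ ν ∈ s.toLeft, f' (Sum.inl ν)) := by
    refine Finset.measurableSet_biInter _ fun ν hν => ?_
    exact hcomapa ν _ (hf' (Sum.inl ν) (by simpa using hν))
  have hmL : MeasurableSet[MeasurableSpace.comap (fun ω (ν : ℕ) => L ν ω) inferInstance]
      (⋂ ν ∈ s.toRight, f' (Sum.inr ν)) := by
    refine Finset.measurableSet_biInter _ fun ν hν => ?_
    exact hcomapL ν _ (hf' (Sum.inr ν) (by simpa using hν))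
  have hprodA : μ (⋂ ν ∈ s.toLeft, f' (Sum.inl ν)) = ∏ ν ∈ s.toLeft, μ (f' (Sum.inl ν)) :=
    haiid.meas_biInter fun ν hν => hf' (Sum.inl ν) (by simpa using hν)
  have hprodL : μ (⋂ ν ∈ s.toRight, f' (Sum.inr ν)) = ∏ ν ∈ s.toRight, μ (f' (Sum.inr ν)) :=
    hLiid.meas_biInter fun ν hν => hf' (Sum.inr ν) (by simpa using hν)
  calc μ (⋂ j ∈ s, f' j)
      = μ ((⋂ ν ∈ s.toLeft, f' (Sum.inl ν)) ∩ ⋂ ν ∈ s.toRight, f' (Sum.inr ν)) := by rw [hsplit]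
    _ = μ (⋂ ν ∈ s.toLeft, f' (Sum.inl ν)) * μ (⋂ ν ∈ s.toRight, f' (Sum.inr ν)) :=
        hindep.meas_inter hmA hmL
    _ = (∏ ν ∈ s.toLeft, μ (f' (Sum.inl ν))) * ∏ ν ∈ s.toRight, μ (f' (Sum.inr ν)) := by
        rw [hprodA, hprodL]
    _ = ∏ j ∈ s, μ (f' j) := by
        conv_rhs => rw [← Finset.toLeft_disjSum_toRight (u := s)]
        rw [Finset.prod_disjSum]


/-- **Kingman-type sojourn time bound for the GI|GI|1 queue.**
For i.i.d. inter-arrival times `a` and i.i.d. service times `L`, independent of each other,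
and `θ > 0` with `E[exp (θ L 1)] · E[exp (-θ a 1)] ≤ 1`, the sojourn time
`T n = max_{m ∈ [1,n]} (∑_{ν=m}^{n} L ν - ∑_{ν=m}^{n-1} a ν)` satisfies
`P[T n > τ] ≤ E[exp (θ L 1)] · exp (-θ τ)`. -/
theorem gigi1_sojourn_bound
    {Ω : Type*} [MeasurableSpace Ω] (μ : Measure Ω) [IsProbabilityMeasure μ]
    (a L : ℕ → Ω → ℝ)
    (hameas : ∀ ν, Measurable (a ν)) (hLmeas : ∀ ν, Measurable (L ν))
    (hanonneg : ∀ ν ω, 0 ≤ a ν ω) (hLnonneg : ∀ ν ω, 0 ≤ L ν ω)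
    (haiid : iIndepFun a μ)
    (haid : ∀ ν, 1 ≤ ν → IdentDistrib (a ν) (a 1) μ μ)
    (hLiid : iIndepFun L μ)
    (hLid : ∀ ν, 1 ≤ ν → IdentDistrib (L ν) (L 1) μ μ)
    (hindep : IndepFun (fun ω (ν : ℕ) => a ν ω) (fun ω (ν : ℕ) => L ν ω) μ)
    (θ : ℝ) (hθ : 0 < θ)
    (hint : Integrable (fun ω => exp (θ * L 1 ω)) μ)
    (hstab : (∫ ω, exp (θ * L 1 ω) ∂μ) * (∫ ω, exp (-θ * a 1 ω) ∂μ) ≤ 1) :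
    ∀ n : ℕ, ∀ hn : 1 ≤ n, ∀ τ : ℝ, 0 ≤ τ →
      μ {ω | τ < (Finset.Icc 1 n).sup' (Finset.nonempty_Icc.mpr hn)
          (fun m => (∑ ν ∈ Finset.Icc m n, L ν ω) - ∑ ν ∈ Finset.Icc m (n - 1), a ν ω)}
        ≤ ENNReal.ofReal ((∫ ω, exp (θ * L 1 ω) ∂μ) * exp (-θ * τ)) := by
  intro n hn τ hτ
  classical
  set I1 := ∫ ω, exp (θ * L 1 ω) ∂μ with hI1def
  set Ia := ∫ ω, exp (-θ * a 1 ω) ∂μ with hIadef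
  set X : ℕ → Ω → ℝ :=
    fun m ω => (∑ ν ∈ Finset.Icc m n, L ν ω) - ∑ ν ∈ Finset.Icc m (n - 1), a ν ω with hXdef
  have hXmeas : ∀ m, Measurable (X m) := fun m =>
    (Finset.measurable_sum _ fun ν _ => hLmeas ν).sub
      (Finset.measurable_sum _ fun ν _ => hameas ν)
  have hexpθ : Measurable (fun x : ℝ => exp (θ * x)) :=
    measurable_exp.comp (measurable_id.const_mul θ)
  have hexpneg : Measurable (fun x : ℝ => exp (-θ * x)) :=
    measurable_exp.comp (measurable_id.const_mul (-θ))
  set G : ℕ → Set Ω := fun i => ⋂ m ∈ Finset.Icc i n, {ω | X m ω ≤ τ} with hGdef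
  set B : ℕ → Set Ω := fun i => ⋃ m ∈ Finset.Icc i n, {ω | τ < X m ω} with hBdef
  have hGmeas : ∀ i, MeasurableSet (G i) := fun i =>
    Finset.measurableSet_biInter _ fun m _ => measurableSet_le (hXmeas m) measurable_const
  have hBmeas : ∀ i, MeasurableSet (B i) := fun i =>
    Finset.measurableSet_biUnion _ fun m _ => measurableSet_lt measurable_const (hXmeas m)
  have hBGcompl : ∀ i, (G i)ᶜ = B i := by
    intro i
    ext ω
    simp [hGdef, hBdef, not_le]
  -- integrability
  have hLint : ∀ ν, 1 ≤ ν → Integrable (fun ω => exp (θ * L ν ω)) μ := fun ν hν =>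
    (((hLid ν hν).comp hexpθ).integrable_iff).mpr hint
  have hProdInt : ∀ s : Finset ℕ, (∀ ν ∈ s, 1 ≤ ν) →
      Integrable (fun ω => ∏ ν ∈ s, exp (θ * L ν ω)) μ := by
    intro s
    induction s using Finset.induction with
    | empty => intro _; simpa using integrable_const (1 : ℝ)
    | @insert j s hj ih =>
      intro h1
      have hiid2 : iIndepFun
          (fun ν => (fun x : ℝ => exp (θ * x)) ∘ L ν) μ :=
        hLiid.comp (fun _ => fun x : ℝ => exp (θ * x)) (fun _ => hexpθ)
      have hindj : IndepFun (∏ ν ∈ s, (fun x : ℝ => exp (θ * x)) ∘ L ν)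
          ((fun x : ℝ => exp (θ * x)) ∘ L j) μ :=
        hiid2.indepFun_finsetProd_of_notMem
          (fun ν => hexpθ.comp (hLmeas ν)) hj
      have hmul := hindj.symm.integrable_mul (hLint j (h1 j (Finset.mem_insert_self j s)))
        (by
          have := ih (fun ν hν => h1 ν (Finset.mem_insert_of_mem hν))
          convert this using 1
          funext ω
          simp [Finset.prod_apply])
      convert hmul using 1
      funext ω
      simp [Finset.prod_apply, Finset.prod_insert hj, Function.comp]
  have hXint : ∀ m, 1 ≤ m → Integrable (fun ω => exp (θ * X m ω)) μ := by
    intro m hm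
    refine Integrable.mono'
      (hProdInt (Finset.Icc m n) (fun ν hν => le_trans hm (Finset.mem_Icc.1 hν).1))
      ((hexpθ.comp (hXmeas m)).aestronglyMeasurable) (ae_of_all _ fun ω => ?_)
    rw [Real.norm_eq_abs, abs_of_pos (exp_pos _), ← Real.exp_sum]
    apply Real.exp_le_exp.2
    rw [← Finset.mul_sum]
    apply mul_le_mul_of_nonneg_left _ hθ.le
    have : (0:ℝ) ≤ ∑ ν ∈ Finset.Icc m (n-1), a ν ω :=
      Finset.sum_nonneg fun ν _ => hanonneg ν ω
    simp only [hXdef]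
    linarith
  have hcomb : iIndepFun (Sum.elim a L) μ :=
    gigi1_comb a L haiid hLiid hindep
  have haint : ∀ ν : ℕ, Integrable (fun ω => exp (-θ * a ν ω)) μ := by
    intro ν
    refine Integrable.mono' (integrable_const (1:ℝ))
      ((hexpneg.comp (hameas ν)).aestronglyMeasurable) (ae_of_all _ fun ω => ?_)
    rw [Real.norm_eq_abs, abs_of_pos (exp_pos _)]
    apply Real.exp_le_one_iff.2
    have := hanonneg ν ω
    nlinarith
  have hxiIa : ∀ i : ℕ, 1 ≤ i →
      ∫ ω, exp (θ * L i ω) * exp (-θ * a i ω) ∂μ = I1 * Ia := by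
    intro i hi
    have hne : (Sum.inr i : ℕ ⊕ ℕ) ≠ Sum.inl i := by simp
    have hindla : IndepFun (L i) (a i) μ := hcomb.indepFun hne
    have hind2 : IndepFun (fun ω => exp (θ * L i ω)) (fun ω => exp (-θ * a i ω)) μ :=
      hindla.comp hexpθ hexpneg
    have hmul := hind2.integral_mul_eq_mul_integral
      ((hexpθ.comp (hLmeas i)).aestronglyMeasurable) ((hexpneg.comp (hameas i)).aestronglyMeasurable)
    have h1 : ∫ ω, exp (θ * L i ω) ∂μ = I1 := ((hLid i hi).comp hexpθ).integral_eq
    have h2 : ∫ ω, exp (-θ * a i ω) ∂μ = Ia := ((haid i hi).comp hexpneg).integral_eq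
    rw [← h1, ← h2, ← hmul]
    rfl
  have key : ∀ i : ℕ, 1 ≤ i → i + 1 ≤ n →
      ∫ ω in G (i+1), exp (θ * X i ω) ∂μ
        = (I1 * Ia) * ∫ ω in G (i+1), exp (θ * X (i+1) ω) ∂μ := by
    intro i hi1 hin
    set T : Finset (ℕ ⊕ ℕ) := (Finset.Icc (i+1) n).disjSum (Finset.Icc (i+1) n) with hT
    set S : Finset (ℕ ⊕ ℕ) := {Sum.inl i, Sum.inr i} with hS
    have hST : Disjoint T S := by
      rw [Finset.disjoint_right]
      intro j hjS hjT
      rcases Finset.mem_insert.1 hjS with h | h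
      · subst h; rw [hT, Finset.inl_mem_disjSum, Finset.mem_Icc] at hjT; omega
      · rw [Finset.mem_singleton] at h; subst h
        rw [hT, Finset.inr_mem_disjSum, Finset.mem_Icc] at hjT; omega
    have hmeasG : ∀ j : ℕ ⊕ ℕ, Measurable (Sum.elim a L j) := by
      rintro (ν | ν); exacts [hameas ν, hLmeas ν]
    have hbase := hcomb.indepFun_finset T S hST hmeasG
    set Lv : (T → ℝ) → ℕ → ℝ :=
      fun v ν => if h : Sum.inr ν ∈ T then v ⟨Sum.inr ν, h⟩ else 0 with hLv
    set av : (T → ℝ) → ℕ → ℝ :=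
      fun v ν => if h : Sum.inl ν ∈ T then v ⟨Sum.inl ν, h⟩ else 0 with hav
    have hLvm : ∀ ν, Measurable fun v : T → ℝ => Lv v ν := by
      intro ν
      simp only [hLv]
      by_cases h : Sum.inr ν ∈ T
      · simp only [dif_pos h]; exact measurable_pi_apply _
      · simp only [dif_neg h]; exact measurable_const
    have havm : ∀ ν, Measurable fun v : T → ℝ => av v ν := by
      intro ν
      simp only [hav]
      by_cases h : Sum.inl ν ∈ T
      · simp only [dif_pos h]; exact measurable_pi_apply _
      · simp only [dif_neg h]; exact measurable_const
    set Y : ℕ → (T → ℝ) → ℝ := fun m v =>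
      (∑ ν ∈ Finset.Icc m n, Lv v ν) - ∑ ν ∈ Finset.Icc m (n-1), av v ν with hY
    have hYm : ∀ m, Measurable (Y m) := fun m =>
      (Finset.measurable_sum _ fun ν _ => hLvm ν).sub
        (Finset.measurable_sum _ fun ν _ => havm ν)
    set Gv : Set (T → ℝ) := ⋂ m ∈ Finset.Icc (i+1) n, {v | Y m v ≤ τ} with hGv
    have hGvm : MeasurableSet Gv :=
      Finset.measurableSet_biInter _ fun m _ => measurableSet_le (hYm m) measurable_const
    set ψ : (T → ℝ) → ℝ :=
      fun v => exp (θ * Y (i+1) v) * Gv.indicator (fun _ => (1:ℝ)) v with hψ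
    have hψm : Measurable ψ :=
      (hexpθ.comp (hYm (i+1))).mul (measurable_const.indicator hGvm)
    have hinlS : Sum.inl i ∈ S := by simp [hS]
    have hinrS : Sum.inr i ∈ S := by simp [hS]
    set φ : (S → ℝ) → ℝ :=
      fun v => exp (θ * v ⟨Sum.inr i, hinrS⟩) * exp (-θ * v ⟨Sum.inl i, hinlS⟩) with hφ
    have hφm : Measurable φ :=
      (hexpθ.comp (measurable_pi_apply _)).mul (hexpneg.comp (measurable_pi_apply _))
    have hWξ := hbase.comp hψm hφm
    have hYeq : ∀ m, i+1 ≤ m → ∀ ω, Y m (fun j : T => Sum.elim a L j ω) = X m ω := by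
      intro m hm ω
      simp only [hY, hXdef]
      congr 1
      · refine Finset.sum_congr rfl fun ν hν => ?_
        rw [Finset.mem_Icc] at hν
        have hmem : Sum.inr ν ∈ T := by
          rw [hT, Finset.inr_mem_disjSum, Finset.mem_Icc]; omega
        simp only [hLv, dif_pos hmem]; rfl
      · refine Finset.sum_congr rfl fun ν hν => ?_
        rw [Finset.mem_Icc] at hν
        have hmem : Sum.inl ν ∈ T := by
          rw [hT, Finset.inl_mem_disjSum, Finset.mem_Icc]; omega
        simp only [hav, dif_pos hmem]; rfl
    have hGveq : ∀ ω : Ω, ((fun j : T => Sum.elim a L j ω) ∈ Gv ↔ ω ∈ G (i+1)) := by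
      intro ω
      simp only [hGv, hGdef, Set.mem_iInter, Set.mem_setOf_eq]
      constructor
      · intro h m hm; have h2 := h m hm; rwa [hYeq m (Finset.mem_Icc.1 hm).1 ω] at h2
      · intro h m hm; rw [hYeq m (Finset.mem_Icc.1 hm).1 ω]; exact h m hm
    have hWcomp : (ψ ∘ fun ω (j : T) => Sum.elim a L j ω)
        = fun ω => exp (θ * X (i+1) ω) * (G (i+1)).indicator (fun _ => (1:ℝ)) ω := by
      funext ω
      simp only [Function.comp_apply, hψ]
      rw [hYeq (i+1) le_rfl ω]
      congr 1
      by_cases hω : ω ∈ G (i+1)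
      · rw [Set.indicator_of_mem ((hGveq ω).2 hω), Set.indicator_of_mem hω]
      · rw [Set.indicator_of_notMem (fun hc => hω ((hGveq ω).1 hc)),
          Set.indicator_of_notMem hω]
    have hξcomp : (φ ∘ fun ω (j : S) => Sum.elim a L j ω)
        = fun ω => exp (θ * L i ω) * exp (-θ * a i ω) := rfl
    rw [hWcomp, hξcomp] at hWξ
    have hWnn : (0:Ω → ℝ) ≤ fun ω => exp (θ * X (i+1) ω) * (G (i+1)).indicator (fun _ => (1:ℝ)) ω :=
      fun ω => mul_nonneg (exp_pos _).le (Set.indicator_nonneg (fun _ _ => zero_le_one) ω)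
    have hξnn : (0:Ω → ℝ) ≤ fun ω => exp (θ * L i ω) * exp (-θ * a i ω) :=
      fun ω => mul_nonneg (exp_pos _).le (exp_pos _).le
    have hWm : Measurable fun ω => exp (θ * X (i+1) ω) * (G (i+1)).indicator (fun _ => (1:ℝ)) ω :=
      (hexpθ.comp (hXmeas (i+1))).mul (measurable_const.indicator (hGmeas (i+1)))
    have hξm : Measurable fun ω => exp (θ * L i ω) * exp (-θ * a i ω) :=
      (hexpθ.comp (hLmeas i)).mul (hexpneg.comp (hameas i))
    have hmul' := hWξ.integral_mul_eq_mul_integral hWm.aestronglyMeasurable hξm.aestronglyMeasurable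
    have hmul : ∫ ω, (exp (θ * X (i+1) ω) * (G (i+1)).indicator (fun _ => (1:ℝ)) ω)
          * (exp (θ * L i ω) * exp (-θ * a i ω)) ∂μ
        = (∫ ω, exp (θ * X (i+1) ω) * (G (i+1)).indicator (fun _ => (1:ℝ)) ω ∂μ)
          * ∫ ω, exp (θ * L i ω) * exp (-θ * a i ω) ∂μ := by
      simpa [Pi.mul_apply] using hmul'
    have hL1 : ∫ ω in G (i+1), exp (θ * X i ω) ∂μ
        = ∫ ω, (exp (θ * X (i+1) ω) * (G (i+1)).indicator (fun _ => (1:ℝ)) ω)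
            * (exp (θ * L i ω) * exp (-θ * a i ω)) ∂μ := by
      rw [← integral_indicator (hGmeas (i+1))]
      congr 1
      funext ω
      by_cases hω : ω ∈ G (i+1)
      · rw [Set.indicator_of_mem hω, Set.indicator_of_mem hω]
        have hXsplit : X i ω = (L i ω - a i ω) + X (i+1) ω := by
          simp only [hXdef]
          have h1 : Finset.Icc i n = insert i (Finset.Icc (i+1) n) := by
            ext ν; simp only [Finset.mem_Icc, Finset.mem_insert]; omega
          have h2 : Finset.Icc i (n-1) = insert i (Finset.Icc (i+1) (n-1)) := by
            ext ν; simp only [Finset.mem_Icc, Finset.mem_insert]; omega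
          have hni1 : i ∉ Finset.Icc (i+1) n := by
            intro hc; rw [Finset.mem_Icc] at hc; omega
          have hni2 : i ∉ Finset.Icc (i+1) (n-1) := by
            intro hc; rw [Finset.mem_Icc] at hc; omega
          rw [h1, h2, Finset.sum_insert hni1, Finset.sum_insert hni2]
          ring
        rw [hXsplit, mul_one,
          show θ * ((L i ω - a i ω) + X (i+1) ω)
            = θ * X (i+1) ω + (θ * L i ω + (-θ * a i ω)) by ring,
          exp_add, exp_add]
      · rw [Set.indicator_of_notMem hω, Set.indicator_of_notMem hω, mul_zero, zero_mul]
    have hL2 : ∫ ω, exp (θ * X (i+1) ω) * (G (i+1)).indicator (fun _ => (1:ℝ)) ω ∂μ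
        = ∫ ω in G (i+1), exp (θ * X (i+1) ω) ∂μ := by
      rw [← integral_indicator (hGmeas (i+1))]
      congr 1
      funext ω
      by_cases hω : ω ∈ G (i+1)
      · rw [Set.indicator_of_mem hω, Set.indicator_of_mem hω, mul_one]
      · rw [Set.indicator_of_notMem hω, Set.indicator_of_notMem hω, mul_zero]
    rw [hL1, hmul, hxiIa i hi1, hL2]
    ring
  have hIntXnn : ∀ i, (0:ℝ) ≤ ∫ ω in G i, exp (θ * X i ω) ∂μ := fun i =>
    setIntegral_nonneg (hGmeas i) fun ω _ => (exp_pos _).le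
  have main : ∀ m (hmn : m ≤ n), 1 ≤ m →
      (∫ ω in G m, exp (θ * X m ω) ∂μ) + exp (θ * τ) * (μ (B m)).toReal ≤ I1 := by
    intro m hmn
    induction hmn using Nat.decreasingInduction with
    | self =>
      intro _
      have hXn : ∀ ω, X n ω = L n ω := by
        intro ω
        simp only [hXdef]
        rw [Finset.Icc_self, Finset.sum_singleton,
          Finset.Icc_eq_empty (by omega), Finset.sum_empty, sub_zero]
      have hIntn : Integrable (fun ω => exp (θ * X n ω)) μ := hXint n hn
      have hBn : exp (θ * τ) * (μ (B n)).toReal ≤ ∫ ω in B n, exp (θ * X n ω) ∂μ := by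
        refine setIntegral_ge_of_const_le_real (hBmeas n) (measure_ne_top μ _)
          (fun ω hω => ?_) hIntn.integrableOn
        simp only [hBdef, Set.mem_iUnion, Set.mem_setOf_eq, Finset.mem_Icc] at hω
        obtain ⟨m, hm, hτm⟩ := hω
        have hmn : m = n := by omega
        subst hmn
        exact exp_le_exp.2 (mul_le_mul_of_nonneg_left hτm.le hθ.le)
      have htot : (∫ ω in G n, exp (θ * X n ω) ∂μ) + ∫ ω in B n, exp (θ * X n ω) ∂μ
          = ∫ ω, exp (θ * X n ω) ∂μ := by
        rw [← hBGcompl n]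
        exact integral_add_compl (hGmeas n) hIntn
      have hItot : ∫ ω, exp (θ * X n ω) ∂μ = I1 := by
        have : (fun ω => exp (θ * X n ω)) = fun ω => exp (θ * L n ω) := by
          funext ω; rw [hXn ω]
        rw [this]
        exact ((hLid n hn).comp hexpθ).integral_eq
      linarith
    | of_succ k hk ih =>
      intro hk1
      have hih := ih (by omega)
      -- split G k and B k
      have hGsplit : G (k+1) = G k ∪ (G (k+1) ∩ {ω | τ < X k ω}) := by
        ext ω
        simp only [hGdef, Set.mem_union, Set.mem_inter_iff, Set.mem_iInter,
          Set.mem_setOf_eq, Finset.mem_Icc]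
        constructor
        · intro h
          rcases le_or_gt (X k ω) τ with hle | hlt
          · left
            intro m hm
            rcases eq_or_lt_of_le hm.1 with rfl | hlt2
            · exact hle
            · exact h m ⟨by omega, hm.2⟩
          · right; exact ⟨fun m hm => h m ⟨by omega, hm.2⟩, hlt⟩
        · rintro (h | ⟨h, _⟩) m hm
          · exact h m ⟨by omega, hm.2⟩
          · exact h m ⟨by omega, hm.2⟩
      have hGdisj : Disjoint (G k) (G (k+1) ∩ {ω | τ < X k ω}) := by
        rw [Set.disjoint_left]
        intro ω hω hω2
        have h1 : X k ω ≤ τ := by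
          simp only [hGdef, Set.mem_iInter, Set.mem_setOf_eq] at hω
          exact hω k (by rw [Finset.mem_Icc]; omega)
        exact absurd h1 (not_le.2 hω2.2)
      have hDm : MeasurableSet (G (k+1) ∩ {ω | τ < X k ω}) :=
        (hGmeas (k+1)).inter (measurableSet_lt measurable_const (hXmeas k))
      have hBsplit : B k = B (k+1) ∪ (G (k+1) ∩ {ω | τ < X k ω}) := by
        ext ω
        simp only [hBdef, hGdef, Set.mem_union, Set.mem_inter_iff, Set.mem_iUnion,
          Set.mem_iInter, Set.mem_setOf_eq, Finset.mem_Icc]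
        constructor
        · rintro ⟨m, hm, hτm⟩
          by_cases hB : ∃ m, (k+1 ≤ m ∧ m ≤ n) ∧ τ < X m ω
          · obtain ⟨m', hm', hτ'⟩ := hB
            exact Or.inl ⟨m', hm', hτ'⟩
          · push_neg at hB
            right
            refine ⟨fun m' hm' => ?_, ?_⟩
            · by_contra hc
              exact absurd (hB m' hm') (not_le.2 (not_le.1 hc))
            · rcases eq_or_lt_of_le hm.1 with rfl | h2
              · exact hτm
              · exact absurd hτm (not_lt.2 (hB m ⟨by omega, hm.2⟩))
        · rintro (⟨m, hm, hτm⟩ | ⟨_, hτk⟩)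
          · exact ⟨m, ⟨by omega, hm.2⟩, hτm⟩
          · exact ⟨k, ⟨le_refl k, by omega⟩, hτk⟩
      have hBdisj : Disjoint (B (k+1)) (G (k+1) ∩ {ω | τ < X k ω}) := by
        rw [Set.disjoint_left]
        intro ω hω hω2
        rw [← hBGcompl (k+1)] at hω
        exact hω hω2.1
      have hμB : (μ (B k)).toReal
          = (μ (B (k+1))).toReal + (μ (G (k+1) ∩ {ω | τ < X k ω})).toReal := by
        rw [hBsplit, measure_union hBdisj hDm,
          ENNReal.toReal_add (measure_ne_top μ _) (measure_ne_top μ _)]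
      have hIntk : Integrable (fun ω => exp (θ * X k ω)) μ := hXint k hk1
      have hD : exp (θ * τ) * (μ (G (k+1) ∩ {ω | τ < X k ω})).toReal
          ≤ ∫ ω in G (k+1) ∩ {ω | τ < X k ω}, exp (θ * X k ω) ∂μ := by
        refine setIntegral_ge_of_const_le_real hDm (measure_ne_top μ _)
          (fun ω hω => ?_) hIntk.integrableOn
        exact exp_le_exp.2 (mul_le_mul_of_nonneg_left hω.2.le hθ.le)
      have hunion : (∫ ω in G k, exp (θ * X k ω) ∂μ)
            + ∫ ω in G (k+1) ∩ {ω | τ < X k ω}, exp (θ * X k ω) ∂μ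
          = ∫ ω in G (k+1), exp (θ * X k ω) ∂μ := by
        conv_rhs => rw [hGsplit]
        exact (setIntegral_union hGdisj hDm hIntk.integrableOn hIntk.integrableOn).symm
      have hkey := key k hk1 (by omega)
      have hnn : (0:ℝ) ≤ ∫ ω in G (k+1), exp (θ * X (k+1) ω) ∂μ := hIntXnn (k+1)
      have hIanonneg : 0 ≤ Ia := by
        rw [hIadef]; exact integral_nonneg fun ω => (exp_pos _).le
      have hI1nonneg : 0 ≤ I1 := by
        rw [hI1def]; exact integral_nonneg fun ω => (exp_pos _).le
      have hle : ∫ ω in G (k+1), exp (θ * X k ω) ∂μ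
          ≤ ∫ ω in G (k+1), exp (θ * X (k+1) ω) ∂μ := by
        rw [hkey]
        nlinarith
      have hμB' : exp (θ * τ) * (μ (B k)).toReal
          = exp (θ * τ) * (μ (B (k+1))).toReal
            + exp (θ * τ) * (μ (G (k+1) ∩ {ω | τ < X k ω})).toReal := by
        rw [hμB]; ring
      linarith
  have h1 := main 1 hn le_rfl
  have hpos : (0:ℝ) ≤ ∫ ω in G 1, exp (θ * X 1 ω) ∂μ := hIntXnn 1
  have h2 : exp (θ * τ) * (μ (B 1)).toReal ≤ I1 := by linarith
  have hevent : {ω | τ < (Finset.Icc 1 n).sup' (Finset.nonempty_Icc.mpr hn)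
      (fun m => (∑ ν ∈ Finset.Icc m n, L ν ω) - ∑ ν ∈ Finset.Icc m (n - 1), a ν ω)} = B 1 := by
    ext ω
    simp only [Set.mem_setOf_eq, Finset.lt_sup'_iff, hBdef, Set.mem_iUnion, Set.mem_setOf_eq,
      hXdef, exists_prop]
  have h3 : (μ (B 1)).toReal ≤ I1 * exp (-θ * τ) := by
    have hexpτ : (0:ℝ) < exp (θ * τ) := exp_pos _
    have hrw : exp (-θ * τ) = (exp (θ * τ))⁻¹ := by
      rw [← Real.exp_neg]; ring_nf
    rw [hrw, ← div_eq_mul_inv, le_div_iff₀ hexpτ]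
    linarith [h2, mul_comm (exp (θ * τ)) ((μ (B 1)).toReal)]
  rw [hevent]
  calc μ (B 1) = ENNReal.ofReal ((μ (B 1)).toReal) :=
        (ENNReal.ofReal_toReal (measure_ne_top μ _)).symm
    _ ≤ ENNReal.ofReal (I1 * exp (-θ * τ)) := ENNReal.ofReal_le_ofReal h3
end

section
/- Let (a(ν))_{ν ≥ 1} be i.i.d. nonnegative random variables (inter-arrival times) and (L(ν))_{ν ≥ 1} be i.i.d. nonnegative random variables (service times), with the two families independent of each other. Define A(m,n) = Σ_{ν=m}^{n−1} a(ν), S(m,n) = Σ_{ν=m}^{n} L(ν), and the waiting time W(n) = [ sup_{m ∈ [1,n−1]} { S(m,n−1) − A(m,n) } ]⁺ (supremum of the empty set is 0). Fix θ > 0 such that E[exp(θ L(1))] · E[exp(−θ a(1))] ≤ 1. Then for all n ≥ 1 and all τ ≥ 0, P[W(n) > τ] ≤ exp(−θτ). -/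
open MeasureTheory ProbabilityTheory Real

/-- Merging independence: if `a` is an i.i.d.-type independent family, `L` is an independent
family, and the process `a` is independent of the process `L`, then the combined σ-algebras
`σ(a i) ⊔ σ(L i)` form an independent family. -/
lemma gigi1_aux_merge {Ω : Type*} [mΩ : MeasurableSpace Ω] {μ : Measure Ω}
    (a L : ℕ → Ω → ℝ)
    (hameas : ∀ ν, Measurable (a ν)) (hLmeas : ∀ ν, Measurable (L ν))
    (haiid : iIndepFun a μ)
    (hLiid : iIndepFun L μ)
    (hindep : IndepFun (fun ω (ν : ℕ) => a ν ω) (fun ω (ν : ℕ) => L ν ω) μ) :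
    iIndep (fun i => (MeasurableSpace.comap (a i) inferInstance) ⊔ (MeasurableSpace.comap (L i) inferInstance)) μ := by
  classical
  set mA : ℕ → MeasurableSpace Ω := fun i => MeasurableSpace.comap (a i) inferInstance with hmA
  set mL : ℕ → MeasurableSpace Ω := fun i => MeasurableSpace.comap (L i) inferInstance with hmL
  set pisys : ℕ → Set (Set Ω) :=
    fun i => {s | ∃ A B : Set Ω, MeasurableSet[mA i] A ∧ MeasurableSet[mL i] B ∧ s = A ∩ B}
    with hpisys
  have h_pi : ∀ i, IsPiSystem (pisys i) := by
    rintro i s ⟨A, B, hA, hB, rfl⟩ t ⟨A', B', hA', hB', rfl⟩ -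
    exact ⟨A ∩ A', B ∩ B', hA.inter hA', hB.inter hB', by ext ω; simp; tauto⟩
  have h_gen : ∀ i, (mA i ⊔ mL i) = MeasurableSpace.generateFrom (pisys i) := by
    intro i
    apply le_antisymm
    · refine sup_le ?_ ?_
      · intro s hs
        exact MeasurableSpace.measurableSet_generateFrom
          ⟨s, Set.univ, hs, MeasurableSet.univ, (Set.inter_univ s).symm⟩
      · intro s hs
        exact MeasurableSpace.measurableSet_generateFrom
          ⟨Set.univ, s, MeasurableSet.univ, hs, (Set.univ_inter s).symm⟩
    · refine MeasurableSpace.generateFrom_le ?_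
      rintro s ⟨A, B, hA, hB, rfl⟩
      exact MeasurableSet.inter ((le_sup_left : mA i ≤ mA i ⊔ mL i) _ hA)
        ((le_sup_right : mL i ≤ mA i ⊔ mL i) _ hB)
  -- σ(a i) is included in the σ-algebra of the whole process a, same for L
  have hasub : ∀ i, mA i ≤ MeasurableSpace.comap (fun ω (ν : ℕ) => a ν ω) inferInstance := by
    intro i
    have h1 : a i = (fun h : ℕ → ℝ => h i) ∘ (fun ω ν => a ν ω) := rfl
    calc mA i = MeasurableSpace.comap ((fun h : ℕ → ℝ => h i) ∘ (fun ω (ν : ℕ) => a ν ω)) inferInstance := by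
          rw [hmA]; rw [← h1]
      _ = MeasurableSpace.comap (fun ω (ν : ℕ) => a ν ω) (MeasurableSpace.comap (fun h : ℕ → ℝ => h i) inferInstance) :=
          MeasurableSpace.comap_comp.symm
      _ ≤ MeasurableSpace.comap (fun ω (ν : ℕ) => a ν ω) inferInstance :=
          MeasurableSpace.comap_mono (measurable_iff_comap_le.1 (measurable_pi_apply i))
  have hLsub : ∀ i, mL i ≤ MeasurableSpace.comap (fun ω (ν : ℕ) => L ν ω) inferInstance := by
    intro i
    have h1 : L i = (fun h : ℕ → ℝ => h i) ∘ (fun ω ν => L ν ω) := rfl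
    calc mL i = MeasurableSpace.comap ((fun h : ℕ → ℝ => h i) ∘ (fun ω (ν : ℕ) => L ν ω)) inferInstance := by
          rw [hmL]; rw [← h1]
      _ = MeasurableSpace.comap (fun ω (ν : ℕ) => L ν ω) (MeasurableSpace.comap (fun h : ℕ → ℝ => h i) inferInstance) :=
          MeasurableSpace.comap_comp.symm
      _ ≤ MeasurableSpace.comap (fun ω (ν : ℕ) => L ν ω) inferInstance :=
          MeasurableSpace.comap_mono (measurable_iff_comap_le.1 (measurable_pi_apply i))
  have hAL : ∀ (SA SL : Set Ω),
      MeasurableSet[MeasurableSpace.comap (fun ω (ν : ℕ) => a ν ω) inferInstance] SA →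
      MeasurableSet[MeasurableSpace.comap (fun ω (ν : ℕ) => L ν ω) inferInstance] SL →
      μ (SA ∩ SL) = μ SA * μ SL := by
    intro SA SL hSA hSL
    exact (Indep_iff _ _ _).1 ((IndepFun_iff_Indep _ _ _).1 hindep) _ _ hSA hSL
  have h_ind : iIndepSets pisys μ := by
    rw [iIndepSets_iff]
    intro s f hf
    have hchoice : ∀ i, ∃ AB : Set Ω × Set Ω, i ∈ s →
        (MeasurableSet[mA i] AB.1 ∧ MeasurableSet[mL i] AB.2 ∧ f i = AB.1 ∩ AB.2) := by
      intro i
      by_cases hi : i ∈ s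
      · obtain ⟨A, B, hA, hB, hfi⟩ := hf i hi
        exact ⟨(A, B), fun _ => ⟨hA, hB, hfi⟩⟩
      · exact ⟨(Set.univ, Set.univ), fun h => absurd h hi⟩
    choose AB hAB using hchoice
    set A : ℕ → Set Ω := fun i => (AB i).1 with hA
    set B : ℕ → Set Ω := fun i => (AB i).2 with hB
    have hAm : ∀ i ∈ s, MeasurableSet[mA i] (A i) := fun i hi => (hAB i hi).1
    have hBm : ∀ i ∈ s, MeasurableSet[mL i] (B i) := fun i hi => (hAB i hi).2.1
    have hfeq : ∀ i ∈ s, f i = A i ∩ B i := fun i hi => (hAB i hi).2.2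
    have hbiA : MeasurableSet[MeasurableSpace.comap (fun ω (ν : ℕ) => a ν ω) inferInstance] (⋂ i ∈ s, A i) :=
      MeasurableSet.biInter (Set.to_countable _) fun i hi => hasub i _ (hAm i hi)
    have hbiB : MeasurableSet[MeasurableSpace.comap (fun ω (ν : ℕ) => L ν ω) inferInstance] (⋂ i ∈ s, B i) :=
      MeasurableSet.biInter (Set.to_countable _) fun i hi => hLsub i _ (hBm i hi)
    calc μ (⋂ i ∈ s, f i) = μ ((⋂ i ∈ s, A i) ∩ (⋂ i ∈ s, B i)) := by
          congr 1
          ext ω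
          simp only [Set.mem_iInter, Set.mem_inter_iff]
          constructor
          · intro h
            exact ⟨fun i hi => ((hfeq i hi ▸ h i hi) : ω ∈ A i ∩ B i).1,
              fun i hi => ((hfeq i hi ▸ h i hi) : ω ∈ A i ∩ B i).2⟩
          · intro h i hi
            rw [hfeq i hi]
            exact ⟨h.1 i hi, h.2 i hi⟩
      _ = μ (⋂ i ∈ s, A i) * μ (⋂ i ∈ s, B i) := hAL _ _ hbiA hbiB
      _ = (∏ i ∈ s, μ (A i)) * ∏ i ∈ s, μ (B i) := by
          rw [haiid.iIndep.meas_biInter hAm, hLiid.iIndep.meas_biInter hBm]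
      _ = ∏ i ∈ s, (μ (A i) * μ (B i)) := Finset.prod_mul_distrib.symm
      _ = ∏ i ∈ s, μ (f i) := by
          refine Finset.prod_congr rfl fun i hi => ?_
          rw [hfeq i hi, hAL _ _ (hasub i _ (hAm i hi)) (hLsub i _ (hBm i hi))]
  have h_le : ∀ i, mA i ⊔ mL i ≤ mΩ := fun i =>
    sup_le (measurable_iff_comap_le.1 (hameas i)) (measurable_iff_comap_le.1 (hLmeas i))
  exact iIndepSets.iIndep h_le pisys h_pi h_gen h_ind

/-- **Kingman's waiting time bound for the GI|GI|1 queue.**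
For i.i.d. inter-arrival times `a` and i.i.d. service times `L`, independent of each other,
and `θ > 0` with `E[exp (θ L 1)] · E[exp (-θ a 1)] ≤ 1`, the waiting time
`W n = [sup_{m ∈ [1,n-1]} (∑_{ν=m}^{n-1} L ν - ∑_{ν=m}^{n-1} a ν)]⁺` satisfies
`P[W n > τ] ≤ exp (-θ τ)`.  The `ℝ`-valued `⨆ m ∈ Finset.Icc 1 (n-1), …` is exactly the
positive part `[·]⁺` of the finite supremum, since the empty supremum over `ℝ` is `0`. -/
theorem gigi1_waiting_bound
    {Ω : Type*} [MeasurableSpace Ω] (μ : Measure Ω) [IsProbabilityMeasure μ]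
    (a L : ℕ → Ω → ℝ)
    (hameas : ∀ ν, Measurable (a ν)) (hLmeas : ∀ ν, Measurable (L ν))
    (hanonneg : ∀ ν ω, 0 ≤ a ν ω) (hLnonneg : ∀ ν ω, 0 ≤ L ν ω)
    (haiid : iIndepFun a μ)
    (haid : ∀ ν, 1 ≤ ν → IdentDistrib (a ν) (a 1) μ μ)
    (hLiid : iIndepFun L μ)
    (hLid : ∀ ν, 1 ≤ ν → IdentDistrib (L ν) (L 1) μ μ)
    (hindep : IndepFun (fun ω (ν : ℕ) => a ν ω) (fun ω (ν : ℕ) => L ν ω) μ)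
    (θ : ℝ) (hθ : 0 < θ)
    (hint : Integrable (fun ω => exp (θ * L 1 ω)) μ)
    (hstab : (∫ ω, exp (θ * L 1 ω) ∂μ) * (∫ ω, exp (-θ * a 1 ω) ∂μ) ≤ 1) :
    ∀ n : ℕ, 1 ≤ n → ∀ τ : ℝ, 0 ≤ τ →
      μ {ω | τ < ⨆ m ∈ Finset.Icc 1 (n - 1),
          ((∑ ν ∈ Finset.Icc m (n - 1), L ν ω) - ∑ ν ∈ Finset.Icc m (n - 1), a ν ω)}
        ≤ ENNReal.ofReal (exp (-θ * τ)) := by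

  classical
  intro n hn τ hτ
  set N : ℕ := n - 1 with hN
  -- the increments and the backward partial sums
  set T : ℕ → Ω → ℝ := fun m ω => ∑ ν ∈ Finset.Icc m N, (L ν ω - a ν ω) with hT
  set G : ℕ → Set Ω := fun k => ⋂ j, ⋂ (_ : j ∈ Finset.Icc k N), {ω | T j ω ≤ τ} with hG
  set E : ℕ → Set Ω := fun m => {ω | τ < T m ω} ∩ G (m + 1) with hE
  set I : ℕ → ℝ := fun m => ∫ ω, (E m).indicator (fun ω => exp (θ * T m ω)) ω ∂μ with hI
  set J : ℕ → ℝ := fun k => ∫ ω, (G k).indicator (fun ω => exp (θ * T k ω)) ω ∂μ with hJ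
  have hTmeas : ∀ m, Measurable (T m) :=
    fun m => Finset.measurable_sum _ fun ν _ => (hLmeas ν).sub (hameas ν)
  have hGmeas : ∀ k, MeasurableSet (G k) := fun k =>
    MeasurableSet.iInter fun j => MeasurableSet.iInter fun _ =>
      measurableSet_le (hTmeas j) measurable_const
  have hEmeas : ∀ m, MeasurableSet (E m) := fun m =>
    (measurableSet_lt measurable_const (hTmeas m)).inter (hGmeas (m + 1))
  have hGmem : ∀ k ω, ω ∈ G k ↔ ∀ j ∈ Finset.Icc k N, T j ω ≤ τ := by
    intro k ω; simp [hG, Set.mem_iInter]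
  -- splitting off the bottom term of the sum
  have hIccsplit : ∀ k, k ≤ N → Finset.Icc k N = insert k (Finset.Icc (k + 1) N) := by
    intro k hk; ext x; simp [Finset.mem_Icc, Finset.mem_insert]; omega
  have hTsplit : ∀ k, k ≤ N → ∀ ω, T k ω = (L k ω - a k ω) + T (k + 1) ω := by
    intro k hk ω
    rw [hT]
    simp only
    rw [hIccsplit k hk, Finset.sum_insert (by simp)]
  have hTtop : ∀ ω, T (N + 1) ω = 0 := by
    intro ω; rw [hT]; simp [Finset.Icc_eq_empty_of_lt (Nat.lt_succ_self N)]
  have hGtop : G (N + 1) = Set.univ := by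
    ext ω
    simp [hGmem, Finset.Icc_eq_empty_of_lt (Nat.lt_succ_self N)]
  -- on G k the exponential is bounded
  have hGle : ∀ k, k ≤ N + 1 → ∀ ω, ω ∈ G k → T k ω ≤ τ := by
    intro k hk ω hω
    rcases Nat.lt_or_ge k (N + 1) with h | h
    · exact (hGmem k ω).1 hω k (Finset.mem_Icc.2 ⟨le_rfl, by omega⟩)
    · have : k = N + 1 := by omega
      rw [this, hTtop]; exact hτ
  -- integrability of exp (θ * L k) and exp (-θ * a k)
  have hmulmeas : Measurable (fun x : ℝ => exp (θ * x)) :=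
    measurable_exp.comp (measurable_id.const_mul θ)
  have hmulmeas' : Measurable (fun x : ℝ => exp (-θ * x)) :=
    measurable_exp.comp (measurable_id.const_mul (-θ))
  have hexpLk_int : ∀ k, 1 ≤ k → Integrable (fun ω => exp (θ * L k ω)) μ := by
    intro k hk
    exact ((hLid k hk).comp hmulmeas).integrable_iff.2 hint
  have hexpLk_eq : ∀ k, 1 ≤ k → ∫ ω, exp (θ * L k ω) ∂μ = ∫ ω, exp (θ * L 1 ω) ∂μ :=
    fun k hk => ((hLid k hk).comp hmulmeas).integral_eq
  have hexpak_le : ∀ k ω, exp (-θ * a k ω) ≤ 1 := by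
    intro k ω
    rw [show (1 : ℝ) = exp 0 by simp]
    exact exp_le_exp.2 (mul_nonpos_of_nonpos_of_nonneg (neg_nonpos.2 hθ.le) (hanonneg k ω))
  have hexpak_int : ∀ k, Integrable (fun ω => exp (-θ * a k ω)) μ := by
    intro k
    refine Integrable.mono' (integrable_const 1)
      (hmulmeas'.comp (hameas k)).aestronglyMeasurable ?_
    filter_upwards with ω
    rw [Real.norm_eq_abs, abs_of_nonneg (exp_nonneg _)]
    exact hexpak_le k ω
  have hexpak_eq : ∀ k, 1 ≤ k → ∫ ω, exp (-θ * a k ω) ∂μ = ∫ ω, exp (-θ * a 1 ω) ∂μ :=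
    fun k hk => ((haid k hk).comp hmulmeas').integral_eq
  -- integrability of the indicator integrands
  have hJint : ∀ k, k ≤ N + 1 →
      Integrable ((G k).indicator (fun ω => exp (θ * T k ω))) μ := by
    intro k hk
    refine Integrable.mono' (integrable_const (exp (θ * τ)))
      ((hmulmeas.comp (hTmeas k)).indicator (hGmeas k)).aestronglyMeasurable ?_
    filter_upwards with ω
    rw [Real.norm_eq_abs, abs_of_nonneg (Set.indicator_nonneg (fun _ _ => (exp_nonneg _)) ω)]
    by_cases hω : ω ∈ G k
    · rw [Set.indicator_of_mem hω]
      exact exp_le_exp.2 (mul_le_mul_of_nonneg_left (hGle k hk ω hω) hθ.le)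
    · rw [Set.indicator_of_notMem hω]; positivity
  have hGTbound : ∀ k, k ≤ N → ∀ ω,
      (G (k + 1)).indicator (fun ω => exp (θ * T k ω)) ω
        ≤ exp (θ * τ) * exp (θ * L k ω) := by
    intro k hk ω
    by_cases hω : ω ∈ G (k + 1)
    · rw [Set.indicator_of_mem hω]
      have h1 : T k ω ≤ L k ω + τ := by
        have h2 := hGle (k + 1) (by omega) ω hω
        have h3 := hanonneg k ω
        rw [hTsplit k hk ω]; linarith
      calc exp (θ * T k ω) ≤ exp (θ * (L k ω + τ)) :=
            exp_le_exp.2 (mul_le_mul_of_nonneg_left h1 hθ.le)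
        _ = exp (θ * τ) * exp (θ * L k ω) := by rw [← exp_add]; ring_nf
    · rw [Set.indicator_of_notMem hω]; positivity
  have hGTint : ∀ k, 1 ≤ k → k ≤ N →
      Integrable ((G (k + 1)).indicator (fun ω => exp (θ * T k ω))) μ := by
    intro k hk1 hk
    refine Integrable.mono' ((hexpLk_int k hk1).const_mul (exp (θ * τ)))
      ((hmulmeas.comp (hTmeas k)).indicator (hGmeas (k + 1))).aestronglyMeasurable ?_
    filter_upwards with ω
    rw [Real.norm_eq_abs, abs_of_nonneg (Set.indicator_nonneg (fun _ _ => (exp_nonneg _)) ω)]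
    exact hGTbound k hk ω
  have hEsubG : ∀ m, E m ⊆ G (m + 1) := fun m => Set.inter_subset_right
  have hEint : ∀ k, 1 ≤ k → k ≤ N →
      Integrable ((E k).indicator (fun ω => exp (θ * T k ω))) μ := by
    intro k hk1 hk
    refine Integrable.mono' ((hexpLk_int k hk1).const_mul (exp (θ * τ)))
      ((hmulmeas.comp (hTmeas k)).indicator (hEmeas k)).aestronglyMeasurable ?_
    filter_upwards with ω
    rw [Real.norm_eq_abs, abs_of_nonneg (Set.indicator_nonneg (fun _ _ => (exp_nonneg _)) ω)]
    refine le_trans (Set.indicator_le_indicator_of_subset (hEsubG k)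
      (fun _ => (exp_nonneg _)) ω) (hGTbound k hk ω)
  -- independence of σ(a_j, L_j : j ≥ k+1) and σ(a_k, L_k)
  set mA : ℕ → MeasurableSpace Ω := fun i => MeasurableSpace.comap (a i) inferInstance with hmA
  set mL : ℕ → MeasurableSpace Ω := fun i => MeasurableSpace.comap (L i) inferInstance with hmL
  have hmerge := gigi1_aux_merge a L hameas hLmeas haiid hLiid hindep
  have hM : ∀ k : ℕ, Indep (⨆ j ∈ Set.Ici (k + 1), (mA j ⊔ mL j)) (mA k ⊔ mL k) μ := by
    intro k
    have h_le : ∀ i, (mA i ⊔ mL i) ≤ (inferInstance : MeasurableSpace Ω) := fun i =>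
      sup_le (measurable_iff_comap_le.1 (hameas i)) (measurable_iff_comap_le.1 (hLmeas i))
    have h := indep_iSup_of_disjoint h_le hmerge (S := Set.Ici (k + 1)) (T := {k})
      (Set.disjoint_singleton_right.2 (by simp))
    simpa [iSup_singleton] using h
  have hIndepFG : ∀ (k : ℕ) (f g : Ω → ℝ),
      Measurable[⨆ j ∈ Set.Ici (k + 1), (mA j ⊔ mL j)] f → Measurable[mA k ⊔ mL k] g →
      IndepFun f g μ := by
    intro k f g hf hg
    rw [IndepFun_iff_Indep]
    exact indep_of_indep_of_le_left (indep_of_indep_of_le_right (hM k)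
      (measurable_iff_comap_le.1 hg)) (measurable_iff_comap_le.1 hf)
  have haMk : ∀ k j : ℕ, k + 1 ≤ j →
      Measurable[⨆ j ∈ Set.Ici (k + 1), (mA j ⊔ mL j)] (a j) := by
    intro k j hj
    refine measurable_iff_comap_le.2 (le_trans ?_ (le_biSup _ (Set.mem_Ici.2 hj)))
    exact le_sup_left
  have hLMk : ∀ k j : ℕ, k + 1 ≤ j →
      Measurable[⨆ j ∈ Set.Ici (k + 1), (mA j ⊔ mL j)] (L j) := by
    intro k j hj
    refine measurable_iff_comap_le.2 (le_trans ?_ (le_biSup _ (Set.mem_Ici.2 hj)))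
    exact le_sup_right
  have hTMk : ∀ k j : ℕ, k + 1 ≤ j →
      Measurable[⨆ j ∈ Set.Ici (k + 1), (mA j ⊔ mL j)] (T j) := by
    intro k j hj
    exact Finset.measurable_sum _ fun ν hν =>
      (hLMk k ν (le_trans hj (Finset.mem_Icc.1 hν).1)).sub
        (haMk k ν (le_trans hj (Finset.mem_Icc.1 hν).1))
  have hGMk : ∀ k : ℕ,
      MeasurableSet[⨆ j ∈ Set.Ici (k + 1), (mA j ⊔ mL j)] (G (k + 1)) := by
    intro k
    exact MeasurableSet.iInter fun j => MeasurableSet.iInter fun hj =>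
      measurableSet_le (hTMk k j (Finset.mem_Icc.1 hj).1) measurable_const
  have hfMk : ∀ k : ℕ, Measurable[⨆ j ∈ Set.Ici (k + 1), (mA j ⊔ mL j)]
      ((G (k + 1)).indicator (fun ω => exp (θ * T (k + 1) ω))) := fun k =>
    (hmulmeas.comp (hTMk k (k + 1) le_rfl)).indicator (hGMk k)
  have hgMk : ∀ k : ℕ, Measurable[mA k ⊔ mL k]
      (fun ω => exp (θ * L k ω) * exp (-θ * a k ω)) := by
    intro k
    have h1 : Measurable[mA k ⊔ mL k] (a k) := measurable_iff_comap_le.2 le_sup_left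
    have h2 : Measurable[mA k ⊔ mL k] (L k) := measurable_iff_comap_le.2 le_sup_right
    exact (hmulmeas.comp h2).mul (hmulmeas'.comp h1)
  -- the key step inequality
  have hstep : ∀ k, 1 ≤ k → k ≤ N → I k + J k ≤ J (k + 1) := by
    intro k hk1 hk
    have hpart : ∀ ω, (E k).indicator (fun ω => exp (θ * T k ω)) ω
        + (G k).indicator (fun ω => exp (θ * T k ω)) ω
        = (G (k + 1)).indicator (fun ω => exp (θ * T k ω)) ω := by
      intro ω
      by_cases hω : ω ∈ G (k + 1)
      · by_cases h2 : τ < T k ω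
        · have hEω : ω ∈ E k := ⟨h2, hω⟩
          have hGω : ω ∉ G k := fun hGω =>
            absurd ((hGmem k ω).1 hGω k (Finset.mem_Icc.2 ⟨le_rfl, hk⟩)) (not_le.2 h2)
          rw [Set.indicator_of_mem hEω, Set.indicator_of_notMem hGω,
            Set.indicator_of_mem hω]
          ring
        · have hEω : ω ∉ E k := fun h => absurd h.1 h2
          have hGω : ω ∈ G k := by
            refine (hGmem k ω).2 fun j hj => ?_
            rcases eq_or_lt_of_le (Finset.mem_Icc.1 hj).1 with h | h
            · rw [← h]; exact not_lt.1 h2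
            · exact (hGmem (k + 1) ω).1 hω j (Finset.mem_Icc.2 ⟨h, (Finset.mem_Icc.1 hj).2⟩)
          rw [Set.indicator_of_notMem hEω, Set.indicator_of_mem hGω,
            Set.indicator_of_mem hω]
          ring
      · have hEω : ω ∉ E k := fun h => hω h.2
        have hGω : ω ∉ G k := fun h => hω ((hGmem (k + 1) ω).2 fun j hj =>
          (hGmem k ω).1 h j (Finset.mem_Icc.2
            ⟨le_trans (Nat.le_succ k) (Finset.mem_Icc.1 hj).1, (Finset.mem_Icc.1 hj).2⟩))
        rw [Set.indicator_of_notMem hEω, Set.indicator_of_notMem hGω,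
          Set.indicator_of_notMem hω]
        ring
    have h1 : I k + J k = ∫ ω, (G (k + 1)).indicator (fun ω => exp (θ * T k ω)) ω ∂μ := by
      rw [hI, hJ]
      simp only
      rw [← integral_add (hEint k hk1 hk) (hJint k (by omega))]
      exact integral_congr_ae (Filter.Eventually.of_forall hpart)
    have hfactor : ∀ ω, (G (k + 1)).indicator (fun ω => exp (θ * T k ω)) ω
        = (G (k + 1)).indicator (fun ω => exp (θ * T (k + 1) ω)) ω
          * (exp (θ * L k ω) * exp (-θ * a k ω)) := by
      intro ω
      by_cases hω : ω ∈ G (k + 1)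
      · rw [Set.indicator_of_mem hω, Set.indicator_of_mem hω, hTsplit k hk ω,
          ← exp_add, ← exp_add]
        ring_nf
      · rw [Set.indicator_of_notMem hω, Set.indicator_of_notMem hω]; ring
    have hindepk : IndepFun ((G (k + 1)).indicator (fun ω => exp (θ * T (k + 1) ω)))
        (fun ω => exp (θ * L k ω) * exp (-θ * a k ω)) μ :=
      hIndepFG k _ _ (hfMk k) (hgMk k)
    have hindepLa : IndepFun (fun ω => exp (θ * L k ω)) (fun ω => exp (-θ * a k ω)) μ :=
      hindep.symm.comp (hmulmeas.comp (measurable_pi_apply k))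
        (hmulmeas'.comp (measurable_pi_apply k))
    have h2 : ∫ ω, (G (k + 1)).indicator (fun ω => exp (θ * T k ω)) ω ∂μ
        = J (k + 1) * ((∫ ω, exp (θ * L k ω) ∂μ) * ∫ ω, exp (-θ * a k ω) ∂μ) := by
      rw [integral_congr_ae (Filter.Eventually.of_forall hfactor)]
      have e1 : (∫ ω, (G (k + 1)).indicator (fun ω => exp (θ * T (k + 1) ω)) ω
            * (exp (θ * L k ω) * exp (-θ * a k ω)) ∂μ)
          = (∫ ω, (G (k + 1)).indicator (fun ω => exp (θ * T (k + 1) ω)) ω ∂μ)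
            * ∫ ω, exp (θ * L k ω) * exp (-θ * a k ω) ∂μ :=
        hindepk.integral_fun_mul_eq_mul_integral
          ((hmulmeas.comp (hTmeas (k + 1))).indicator (hGmeas (k + 1))).aestronglyMeasurable
          ((hmulmeas.comp (hLmeas k)).mul (hmulmeas'.comp (hameas k))).aestronglyMeasurable
      have e2 : (∫ ω, exp (θ * L k ω) * exp (-θ * a k ω) ∂μ)
          = (∫ ω, exp (θ * L k ω) ∂μ) * ∫ ω, exp (-θ * a k ω) ∂μ :=
        hindepLa.integral_fun_mul_eq_mul_integral (hmulmeas.comp (hLmeas k)).aestronglyMeasurable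
          (hmulmeas'.comp (hameas k)).aestronglyMeasurable
      rw [e1, e2]
    have hJ1nonneg : 0 ≤ J (k + 1) :=
      integral_nonneg fun ω => Set.indicator_nonneg (fun _ _ => exp_nonneg _) ω
    rw [h1, h2, hexpLk_eq k hk1, hexpak_eq k hk1]
    exact mul_le_of_le_one_right hJ1nonneg hstab
  -- downward induction
  have hJtopval : J (N + 1) = 1 := by
    have hone : ∀ ω, (G (N + 1)).indicator (fun ω => exp (θ * T (N + 1) ω)) ω = 1 := by
      intro ω
      rw [hGtop, Set.indicator_of_mem (Set.mem_univ ω), hTtop]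
      simp
    rw [hJ]
    simp only
    rw [integral_congr_ae (Filter.Eventually.of_forall hone)]
    simp
  have hmain : ∀ d k : ℕ, k + d = N + 1 → 1 ≤ k →
      (∑ m ∈ Finset.Icc k N, I m) + J k ≤ 1 := by
    intro d
    induction d with
    | zero =>
      intro k hk hk1
      have hkeq : k = N + 1 := by omega
      subst hkeq
      rw [Finset.Icc_eq_empty_of_lt (Nat.lt_succ_self N), Finset.sum_empty, hJtopval]
      norm_num
    | succ d ih =>
      intro k hk hk1
      have hkN : k ≤ N := by omega
      rw [hIccsplit k hkN, Finset.sum_insert (by simp)]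
      have h := hstep k hk1 hkN
      have h2 := ih (k + 1) (by omega) (by omega)
      linarith
  have hInonneg : ∀ m, 0 ≤ I m := fun m =>
    integral_nonneg fun ω => Set.indicator_nonneg (fun _ _ => exp_nonneg _) ω
  have hsum_le : ∑ m ∈ Finset.Icc 1 N, I m ≤ 1 := by
    have h := hmain N 1 (by omega) le_rfl
    have hJ1nonneg : 0 ≤ J 1 :=
      integral_nonneg fun ω => Set.indicator_nonneg (fun _ _ => exp_nonneg _) ω
    linarith
  -- the event is covered by the first-passage events E m
  have hsub : {ω | τ < ⨆ m ∈ Finset.Icc 1 N,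
      ((∑ ν ∈ Finset.Icc m N, L ν ω) - ∑ ν ∈ Finset.Icc m N, a ν ω)}
      ⊆ ⋃ m ∈ Finset.Icc 1 N, E m := by
    intro ω hω
    simp only [Set.mem_setOf_eq] at hω
    have hTeq : ∀ m, ((∑ ν ∈ Finset.Icc m N, L ν ω) - ∑ ν ∈ Finset.Icc m N, a ν ω)
        = T m ω := by
      intro m
      rw [hT]
      simp only
      rw [Finset.sum_sub_distrib]
    have hex : ∃ m ∈ Finset.Icc 1 N, τ < T m ω := by
      by_contra hcon
      push_neg at hcon
      have hle : (⨆ m ∈ Finset.Icc 1 N,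
          ((∑ ν ∈ Finset.Icc m N, L ν ω) - ∑ ν ∈ Finset.Icc m N, a ν ω)) ≤ τ := by
        refine Real.iSup_le (fun m => ?_) hτ
        by_cases hm : m ∈ Finset.Icc 1 N
        · rw [ciSup_pos hm, hTeq]
          exact hcon m hm
        · haveI : IsEmpty (m ∈ Finset.Icc 1 N) := ⟨hm⟩
          rw [Real.iSup_of_isEmpty]
          exact hτ
      exact absurd hω (not_lt.2 hle)
    obtain ⟨m1, hm1, hm1t⟩ := hex
    have hne : ((Finset.Icc 1 N).filter (fun m => τ < T m ω)).Nonempty :=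
      ⟨m1, Finset.mem_filter.2 ⟨hm1, hm1t⟩⟩
    obtain ⟨hm₀Icc', hm₀t⟩ := Finset.mem_filter.1
      (((Finset.Icc 1 N).filter (fun m => τ < T m ω)).max'_mem hne)
    have hm₀Icc := Finset.mem_Icc.1 hm₀Icc'
    have hEm : ω ∈ E (((Finset.Icc 1 N).filter (fun m => τ < T m ω)).max' hne) := by
      refine ⟨hm₀t, (hGmem _ ω).2 fun j hj => ?_⟩
      by_contra hcon
      push_neg at hcon
      have hjIcc := Finset.mem_Icc.1 hj
      have hjs : j ∈ (Finset.Icc 1 N).filter (fun m => τ < T m ω) := Finset.mem_filter.2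
        ⟨Finset.mem_Icc.2 ⟨by omega, hjIcc.2⟩, hcon⟩
      have hle := Finset.le_max' _ j hjs
      omega
    exact Set.mem_iUnion.2 ⟨_, Set.mem_iUnion.2 ⟨hm₀Icc', hEm⟩⟩
  -- Chernoff bound on each piece
  have hEbound : ∀ m ∈ Finset.Icc 1 N, μ (E m) ≤ ENNReal.ofReal (exp (-θ * τ) * I m) := by
    intro m hm
    have hm1 : 1 ≤ m := (Finset.mem_Icc.1 hm).1
    have hmN : m ≤ N := (Finset.mem_Icc.1 hm).2
    have hint1 : Integrable ((E m).indicator (fun _ => (1 : ℝ))) μ :=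
      (integrable_const 1).indicator (hEmeas m)
    have hint2 : Integrable
        (fun ω => exp (-θ * τ) * (E m).indicator (fun ω => exp (θ * T m ω)) ω) μ :=
      (hEint m hm1 hmN).const_mul _
    have hptw : ∀ ω, (E m).indicator (fun _ => (1 : ℝ)) ω
        ≤ exp (-θ * τ) * (E m).indicator (fun ω => exp (θ * T m ω)) ω := by
      intro ω
      by_cases hω : ω ∈ E m
      · rw [Set.indicator_of_mem hω, Set.indicator_of_mem hω, ← exp_add]
        refine Real.one_le_exp ?_
        have h5 : τ < T m ω := hω.1
        nlinarith [mul_pos hθ (sub_pos.2 h5)]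
      · rw [Set.indicator_of_notMem hω, Set.indicator_of_notMem hω]
        simp
    calc μ (E m) = ENNReal.ofReal (∫ ω, (E m).indicator (fun _ => (1 : ℝ)) ω ∂μ) := by
          have hone : (∫ ω, (E m).indicator (fun _ => (1 : ℝ)) ω ∂μ) = (μ (E m)).toReal :=
            MeasureTheory.integral_indicator_one (hEmeas m)
          rw [hone, ENNReal.ofReal_toReal (measure_ne_top μ _)]
      _ ≤ ENNReal.ofReal (∫ ω, exp (-θ * τ)
            * (E m).indicator (fun ω => exp (θ * T m ω)) ω ∂μ) :=
          ENNReal.ofReal_le_ofReal (integral_mono hint1 hint2 hptw)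
      _ = ENNReal.ofReal (exp (-θ * τ) * I m) := by rw [integral_const_mul]
  -- put everything together
  calc μ {ω | τ < ⨆ m ∈ Finset.Icc 1 N,
        ((∑ ν ∈ Finset.Icc m N, L ν ω) - ∑ ν ∈ Finset.Icc m N, a ν ω)}
      ≤ μ (⋃ m ∈ Finset.Icc 1 N, E m) := measure_mono hsub
    _ ≤ ∑ m ∈ Finset.Icc 1 N, μ (E m) := measure_biUnion_finset_le _ _
    _ ≤ ∑ m ∈ Finset.Icc 1 N, ENNReal.ofReal (exp (-θ * τ) * I m) :=
        Finset.sum_le_sum hEbound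
    _ = ENNReal.ofReal (∑ m ∈ Finset.Icc 1 N, exp (-θ * τ) * I m) :=
        (ENNReal.ofReal_sum_of_nonneg fun m _ =>
          mul_nonneg (exp_nonneg _) (hInonneg m)).symm
    _ ≤ ENNReal.ofReal (exp (-θ * τ)) := by
        rw [← Finset.mul_sum]
        exact ENNReal.ofReal_le_ofReal
          (mul_le_of_le_one_right (exp_nonneg _) hsum_le)
end

section
/- Consider a fork-join system with k parallel servers fed by a renewal arrival process: i.i.d. nonnegative inter-arrival times (a(ν))_{ν ≥ 1} with A(m,n) = Σ_{ν=m}^{n−1} a(ν), and task service times Q_i(ν) ≥ 0 such that for each i ∈ [1,k] the sequence (Q_i(ν))_{ν ≥ 1} is i.i.d. with the same (homogeneous) marginal distribution as Q_1(1), the task service times being independent of the arrivals (no independence across the index i is assumed). Define the sojourn time T(n) = max_{i ∈ [1,k]} max_{m ∈ [1,n]} { Σ_{ν=m}^{n} Q_i(ν) − A(m,n) }. Fix θ > 0 such that E[exp(θ Q_1(1))] · E[exp(−θ a(1))] ≤ 1. Then for all n ≥ 1 and τ ≥ 0, P[T(n) > τ] ≤ k · E[exp(θ Q_1(1))] ·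 exp(−θτ). -/
open MeasureTheory ProbabilityTheory Real

/-- Monotonicity of independence of σ-algebras. -/
lemma indep_mono' {Ω : Type*} {mΩ : MeasurableSpace Ω} {μ : Measure Ω}
    {m₁ m₂ m₃ m₄ : MeasurableSpace Ω} (h : Indep m₁ m₂ μ) (h13 : m₃ ≤ m₁) (h24 : m₄ ≤ m₂) :
    Indep m₃ m₄ μ := by
  rw [Indep_iff] at h ⊢
  exact fun t1 t2 ht1 ht2 => h t1 t2 (h13 _ ht1) (h24 _ ht2)

/-- Two mutually independent i.i.d.-type families that are independent of each other form a
jointly independent family indexed by the sum type. -/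
lemma iIndepFun_sumElim {Ω : Type*} [MeasurableSpace Ω] {μ : Measure Ω}
    {f g : ℕ → Ω → ℝ} (hf : ∀ ν, Measurable (f ν)) (hg : ∀ ν, Measurable (g ν))
    (hfI : iIndepFun f μ)
    (hgI : iIndepFun g μ)
    (hfg : IndepFun (fun ω (ν : ℕ) => f ν ω) (fun ω (ν : ℕ) => g ν ω) μ) :
    iIndepFun (Sum.elim f g) μ := by
  rw [iIndepFun_iff_measure_inter_preimage_eq_mul]
  intro S sets hsets
  classical
  have hSrw : S.toLeft.disjSum S.toRight = S := Finset.toLeft_disjSum_toRight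
  have hmemL : ∀ ν ∈ S.toLeft, MeasurableSet (sets (Sum.inl ν)) := by
    intro ν hν
    exact hsets _ (Finset.mem_toLeft.mp hν)
  have hmemR : ∀ ν ∈ S.toRight, MeasurableSet (sets (Sum.inr ν)) := by
    intro ν hν
    exact hsets _ (Finset.mem_toRight.mp hν)
  -- the two "cylinder" sets in path space
  set L : Set (ℕ → ℝ) := {h | ∀ ν ∈ S.toLeft, h ν ∈ sets (Sum.inl ν)} with hL
  set R : Set (ℕ → ℝ) := {h | ∀ ν ∈ S.toRight, h ν ∈ sets (Sum.inr ν)} with hR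
  have hLmeas : MeasurableSet L := by
    have : L = ⋂ ν ∈ S.toLeft, (fun h : ℕ → ℝ => h ν) ⁻¹' sets (Sum.inl ν) := by
      ext h; simp [hL]
    rw [this]
    exact MeasurableSet.biInter (Finset.countable_toSet _)
      (fun ν hν => (measurable_pi_apply ν) (hmemL ν hν))
  have hRmeas : MeasurableSet R := by
    have : R = ⋂ ν ∈ S.toRight, (fun h : ℕ → ℝ => h ν) ⁻¹' sets (Sum.inr ν) := by
      ext h; simp [hR]
    rw [this]
    exact MeasurableSet.biInter (Finset.countable_toSet _)
      (fun ν hν => (measurable_pi_apply ν) (hmemR ν hν))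
  have hIL : (⋂ x ∈ S, Sum.elim f g x ⁻¹' sets x)
      = ((fun ω (ν : ℕ) => f ν ω) ⁻¹' L) ∩ ((fun ω (ν : ℕ) => g ν ω) ⁻¹' R) := by
    ext ω
    simp only [Set.mem_iInter, Set.mem_inter_iff, Set.mem_preimage, Set.mem_setOf_eq, hL, hR]
    constructor
    · intro h
      refine ⟨fun ν hν => h (Sum.inl ν) (Finset.mem_toLeft.mp hν),
        fun ν hν => h (Sum.inr ν) (Finset.mem_toRight.mp hν)⟩
    · rintro ⟨h1, h2⟩ x hx
      rcases x with ν | ν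
      · exact h1 ν (Finset.mem_toLeft.mpr hx)
      · exact h2 ν (Finset.mem_toRight.mpr hx)
  have hLpre : ((fun ω (ν : ℕ) => f ν ω) ⁻¹' L) = ⋂ ν ∈ S.toLeft, f ν ⁻¹' sets (Sum.inl ν) := by
    ext ω; simp [hL]
  have hRpre : ((fun ω (ν : ℕ) => g ν ω) ⁻¹' R) = ⋂ ν ∈ S.toRight, g ν ⁻¹' sets (Sum.inr ν) := by
    ext ω; simp [hR]
  rw [hIL, hfg.measure_inter_preimage_eq_mul _ _ hLmeas hRmeas, hLpre, hRpre,
    hfI.measure_inter_preimage_eq_mul _ hmemL, hgI.measure_inter_preimage_eq_mul _ hmemR]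
  conv_rhs => rw [← hSrw]
  rw [Finset.prod_disjSum]
  rfl

/-- The σ-algebra generated by a group of random variables. -/
def supComap {Ω ι : Type*} [MeasurableSpace Ω] (h : ι → Ω → ℝ) (S : Set ι) :
    MeasurableSpace Ω :=
  ⨆ x ∈ S, MeasurableSpace.comap (h x) (inferInstance : MeasurableSpace ℝ)

/-- Each variable of a group is measurable w.r.t. the σ-algebra generated by the group. -/
lemma measurable_supComap {Ω ι : Type*} [MeasurableSpace Ω] (h : ι → Ω → ℝ) (S : Set ι)
    {x : ι} (hx : x ∈ S) : Measurable[supComap h S] (h x) :=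
  (measurable_iff_comap_le.mpr le_rfl).mono
    (le_iSup₂ (f := fun y (_ : y ∈ S) =>
      MeasurableSpace.comap (h y) (inferInstance : MeasurableSpace ℝ)) x hx) le_rfl

/-- Independence of two real functionals measurable w.r.t. the σ-algebras generated by
disjoint groups of the variables of an independent family. -/
lemma indepFun_of_measurable_sup {Ω ι : Type*} [MeasurableSpace Ω] {μ : Measure Ω}
    {h : ι → Ω → ℝ} (hmeas : ∀ x, Measurable (h x))
    (hiid : iIndepFun h μ)
    (S T : Set ι) (hST : Disjoint S T)
    {F G : Ω → ℝ}
    (hF : Measurable[supComap h S] F)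
    (hG : Measurable[supComap h T] G) :
    IndepFun F G μ := by
  rw [IndepFun_iff_Indep]
  have hsup := indep_iSup_of_disjoint
    (fun x => (hmeas x).comap_le) hiid.iIndep hST
  exact indep_mono' hsup hF.comap_le hG.comap_le

/-- The GI|GI|1 single-server sojourn time bound (Kingman-type bound via a first-passage
decomposition and Chernoff's bound). -/
lemma single_server_bound
    {Ω : Type*} [MeasurableSpace Ω] (μ : Measure Ω) [IsProbabilityMeasure μ]
    (Qi a : ℕ → Ω → ℝ)
    (hQm : ∀ ν, Measurable (Qi ν)) (ham : ∀ ν, Measurable (a ν))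
    (hanonneg : ∀ ν ω, 0 ≤ a ν ω)
    (hiid : iIndepFun (Sum.elim Qi a) μ)
    (θ : ℝ) (hθ : 0 < θ) (CQ Ca : ℝ)
    (hstab : CQ * Ca ≤ 1)
    (n : ℕ) (hn : 1 ≤ n)
    (hQint : ∀ ν, 1 ≤ ν → ν ≤ n → Integrable (fun ω => exp (θ * Qi ν ω)) μ)
    (hQval : ∀ ν, 1 ≤ ν → ν ≤ n → ∫ ω, exp (θ * Qi ν ω) ∂μ = CQ)
    (haval : ∀ ν, 1 ≤ ν → ν ≤ n - 1 → ∫ ω, exp (-θ * a ν ω) ∂μ = Ca)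
    (τ : ℝ) :
    μ {ω | τ < (Finset.Icc 1 n).sup' (Finset.nonempty_Icc.mpr hn)
        (fun m => (∑ ν ∈ Finset.Icc m n, Qi ν ω) - ∑ ν ∈ Finset.Icc m (n - 1), a ν ω)}
      ≤ ENNReal.ofReal (CQ * exp (-θ * τ)) := by
  classical
  set Ev : Set Ω := {ω | τ < (Finset.Icc 1 n).sup' (Finset.nonempty_Icc.mpr hn)
      (fun m => (∑ ν ∈ Finset.Icc m n, Qi ν ω) - ∑ ν ∈ Finset.Icc m (n - 1), a ν ω)}
    with hEvdef
  set Z : ℕ → Ω → ℝ :=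
    fun m ω => (∑ ν ∈ Finset.Icc m n, Qi ν ω) - ∑ ν ∈ Finset.Icc m (n - 1), a ν ω with hZdef
  have hZmeas : ∀ m, Measurable (Z m) := fun m =>
    (Finset.measurable_sum _ fun ν _ => hQm ν).sub (Finset.measurable_sum _ fun ν _ => ham ν)
  set B : ℕ → Set Ω := fun m => {ω | ∀ l ∈ Finset.Icc m n, Z l ω ≤ τ} with hBdef
  set A : ℕ → Set Ω := fun m => B (m + 1) ∩ {ω | τ < Z m ω} with hAdef
  have hBmeas : ∀ m, MeasurableSet (B m) := by
    intro m
    have : B m = ⋂ l ∈ Finset.Icc m n, {ω | Z l ω ≤ τ} := by ext ω; simp [hBdef]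
    rw [this]
    exact MeasurableSet.biInter (Finset.countable_toSet _)
      (fun l _ => measurableSet_le (hZmeas l) measurable_const)
  have hAmeas : ∀ m, MeasurableSet (A m) :=
    fun m => (hBmeas (m + 1)).inter (measurableSet_lt measurable_const (hZmeas m))
  -- basic facts about Z
  have hZn : ∀ ω, Z n ω = Qi n ω := by
    intro ω
    have h1 : Finset.Icc n (n - 1) = ∅ := Finset.Icc_eq_empty (by omega)
    simp [hZdef, h1, Finset.Icc_self]
  have hZrec : ∀ m, 1 ≤ m → m ≤ n - 1 → ∀ ω, Z m ω = Z (m + 1) ω + (Qi m ω - a m ω) := by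
    intro m h1 h2 ω
    have e1 : Finset.Icc m n = insert m (Finset.Icc (m + 1) n) := by
      ext x; simp only [Finset.mem_Icc, Finset.mem_insert]; omega
    have e2 : Finset.Icc m (n - 1) = insert m (Finset.Icc (m + 1) (n - 1)) := by
      ext x; simp only [Finset.mem_Icc, Finset.mem_insert]; omega
    have hm1 : m ∉ Finset.Icc (m + 1) n := by
      simp only [Finset.mem_Icc, not_and]; omega
    have hm2 : m ∉ Finset.Icc (m + 1) (n - 1) := by
      simp only [Finset.mem_Icc, not_and]; omega
    simp only [hZdef]
    rw [e1, Finset.sum_insert hm1, e2, Finset.sum_insert hm2]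
    ring
  -- integrability of the exponential of a
  have haint : ∀ ν, Integrable (fun ω => exp (-θ * a ν ω)) μ := by
    intro ν
    refine Integrable.mono' (integrable_const 1)
      ((Real.measurable_exp.comp ((ham ν).const_mul (-θ))).aestronglyMeasurable)
      (Filter.Eventually.of_forall fun ω => ?_)
    rw [Real.norm_eq_abs, abs_of_pos (exp_pos _)]
    have : -θ * a ν ω ≤ 0 := mul_nonpos_of_nonpos_of_nonneg (by linarith) (hanonneg ν ω)
    calc exp (-θ * a ν ω) ≤ exp 0 := exp_le_exp.mpr this
      _ = 1 := Real.exp_zero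
  have hexpZmeas : ∀ m, Measurable (fun ω => exp (θ * Z m ω)) :=
    fun m => Real.measurable_exp.comp ((hZmeas m).const_mul θ)
  -- nonnegativity of CQ, used in several places (obtained from the value hypotheses)
  have hCQ0 : 0 ≤ CQ := by
    rw [← hQval n hn le_rfl]
    exact integral_nonneg fun ω => (exp_pos _).le
  -- integrability on B (m+1)
  have hIntOn : ∀ m, 1 ≤ m → m ≤ n → IntegrableOn (fun ω => exp (θ * Z m ω)) (B (m + 1)) μ := by
    intro m h1 h2
    rcases eq_or_lt_of_le h2 with heq | hlt
    · have he : (fun ω => exp (θ * Z m ω)) = fun ω => exp (θ * Qi m ω) := by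
        funext ω; rw [heq, hZn ω]
      rw [he]
      exact (hQint m h1 h2).integrableOn
    · have hm' : m ≤ n - 1 := by omega
      rw [← integrable_indicator_iff (hBmeas (m + 1))]
      refine Integrable.mono' (((hQint m h1 h2).const_mul (exp (θ * τ))))
        (((hexpZmeas m).indicator (hBmeas (m + 1))).aestronglyMeasurable)
        (Filter.Eventually.of_forall fun ω => ?_)
      rw [Real.norm_eq_abs]
      by_cases hω : ω ∈ B (m + 1)
      · rw [Set.indicator_of_mem hω, abs_of_pos (exp_pos _)]
        have hZle : Z (m + 1) ω ≤ τ := hω (m + 1) (Finset.mem_Icc.mpr ⟨le_rfl, by omega⟩)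
        have : θ * Z m ω ≤ θ * τ + θ * Qi m ω := by
          rw [hZrec m h1 hm' ω]
          have h0 : Z (m + 1) ω + (Qi m ω - a m ω) ≤ τ + Qi m ω := by
            have := hanonneg m ω; linarith
          calc θ * (Z (m + 1) ω + (Qi m ω - a m ω)) ≤ θ * (τ + Qi m ω) :=
                mul_le_mul_of_nonneg_left h0 hθ.le
            _ = θ * τ + θ * Qi m ω := by ring
        calc exp (θ * Z m ω) ≤ exp (θ * τ + θ * Qi m ω) := exp_le_exp.mpr this
          _ = exp (θ * τ) * exp (θ * Qi m ω) := Real.exp_add _ _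
      · rw [Set.indicator_of_notMem hω, abs_zero]
        positivity
  -- the splitting B (m+1) = A m ∪ B m
  have hsplit : ∀ m, 1 ≤ m → m ≤ n → B (m + 1) = A m ∪ B m := by
    intro m h1 h2
    ext ω
    simp only [hAdef, hBdef, Set.mem_union, Set.mem_inter_iff, Set.mem_setOf_eq]
    constructor
    · intro hω
      by_cases hc : τ < Z m ω
      · exact Or.inl ⟨hω, hc⟩
      · refine Or.inr fun l hl => ?_
        rcases Finset.mem_Icc.mp hl with ⟨hl1, hl2⟩
        rcases eq_or_lt_of_le hl1 with rfl | hlt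
        · exact not_lt.mp hc
        · exact hω l (Finset.mem_Icc.mpr ⟨hlt, hl2⟩)
    · rintro (⟨hω, _⟩ | hω)
      · exact hω
      · intro l hl
        obtain ⟨hl1, hl2⟩ := Finset.mem_Icc.mp hl
        exact hω l (Finset.mem_Icc.mpr ⟨by omega, hl2⟩)
  have hdisjAB : ∀ m, 1 ≤ m → m ≤ n → Disjoint (A m) (B m) := by
    intro m h1 h2
    rw [Set.disjoint_left]
    rintro ω ⟨_, hA⟩ hB
    exact absurd (hB m (Finset.mem_Icc.mpr ⟨le_rfl, h2⟩)) (not_le.mpr hA)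
  -- step 1 : Chernoff / overshoot estimate on A m
  have step1 : ∀ m, 1 ≤ m → m ≤ n →
      exp (θ * τ) * (μ (A m)).toReal + ∫ ω in B m, exp (θ * Z m ω) ∂μ
        ≤ ∫ ω in B (m + 1), exp (θ * Z m ω) ∂μ := by
    intro m h1 h2
    have hIB := hIntOn m h1 h2
    have hsub : A m ⊆ B (m + 1) := by rw [hsplit m h1 h2]; exact Set.subset_union_left
    have hsub' : B m ⊆ B (m + 1) := by rw [hsplit m h1 h2]; exact Set.subset_union_right
    have hIA : IntegrableOn (fun ω => exp (θ * Z m ω)) (A m) μ := hIB.mono_set hsub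
    have hIBm : IntegrableOn (fun ω => exp (θ * Z m ω)) (B m) μ := hIB.mono_set hsub'
    have hunion : ∫ ω in B (m + 1), exp (θ * Z m ω) ∂μ
        = (∫ ω in A m, exp (θ * Z m ω) ∂μ) + ∫ ω in B m, exp (θ * Z m ω) ∂μ := by
      rw [hsplit m h1 h2]
      exact setIntegral_union (hdisjAB m h1 h2) (hBmeas m) hIA hIBm
    have hlow : exp (θ * τ) * (μ (A m)).toReal ≤ ∫ ω in A m, exp (θ * Z m ω) ∂μ := by
      have hconst : ∫ _ω in A m, exp (θ * τ) ∂μ = (μ (A m)).toReal * exp (θ * τ) := by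
        rw [setIntegral_const, smul_eq_mul]; rfl
      have := setIntegral_mono_on
        (integrableOn_const (measure_ne_top μ _)) hIA (hAmeas m)
        (fun ω hω => exp_le_exp.mpr (mul_le_mul_of_nonneg_left hω.2.le hθ.le))
      rw [hconst] at this
      linarith
    linarith [hunion, hlow]
  -- step 2 : supermartingale step via independence
  have step2 : ∀ m, 1 ≤ m → m ≤ n - 1 →
      ∫ ω in B (m + 1), exp (θ * Z m ω) ∂μ
        ≤ ∫ ω in B (m + 1), exp (θ * Z (m + 1) ω) ∂μ := by
    intro m h1 h2
    have hmn : m + 1 ≤ n := by omega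
    -- the index groups
    set Sset : Set (ℕ ⊕ ℕ) := {x | m + 1 ≤ Sum.elim id id x} with hSdef
    set Tset : Set (ℕ ⊕ ℕ) := {Sum.inl m, Sum.inr m} with hTdef
    have hST : Disjoint Sset Tset := by
      rw [Set.disjoint_left]
      rintro x hx hxT
      rcases hxT with rfl | rfl <;> simp [hSdef] at hx <;> omega
    have hhm : ∀ x : ℕ ⊕ ℕ, Measurable (Sum.elim Qi a x) := by
      rintro (ν | ν)
      exacts [hQm ν, ham ν]
    have hQMS : ∀ ν, m + 1 ≤ ν → Measurable[supComap (Sum.elim Qi a) Sset] (Qi ν) :=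
      fun ν hν => measurable_supComap (Sum.elim Qi a) Sset
        (x := Sum.inl ν) (by simp [hSdef]; omega)
    have haMS : ∀ ν, m + 1 ≤ ν → Measurable[supComap (Sum.elim Qi a) Sset] (a ν) :=
      fun ν hν => measurable_supComap (Sum.elim Qi a) Sset
        (x := Sum.inr ν) (by simp [hSdef]; omega)
    have hZMS : ∀ l, m + 1 ≤ l → Measurable[supComap (Sum.elim Qi a) Sset] (Z l) := by
      intro l hl
      simp only [hZdef]
      refine Measurable.sub (Finset.measurable_sum _ fun ν hν => ?_)
        (Finset.measurable_sum _ fun ν hν => ?_)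
      · exact hQMS ν (le_trans hl (Finset.mem_Icc.mp hν).1)
      · exact haMS ν (le_trans hl (Finset.mem_Icc.mp hν).1)
    have hBMS : MeasurableSet[supComap (Sum.elim Qi a) Sset] (B (m + 1)) := by
      have hBeq : B (m + 1) = ⋂ l ∈ Finset.Icc (m + 1) n, {ω | Z l ω ≤ τ} := by
        ext ω; simp [hBdef]
      rw [hBeq]
      exact MeasurableSet.biInter (Finset.countable_toSet _)
        (fun l hl => measurableSet_le (hZMS l (Finset.mem_Icc.mp hl).1) measurable_const)
    have hF : Measurable[supComap (Sum.elim Qi a) Sset]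
        ((B (m + 1)).indicator (fun ω => exp (θ * Z (m + 1) ω))) :=
      Measurable.indicator
        (Real.measurable_exp.comp ((hZMS (m + 1) le_rfl).const_mul θ)) hBMS
    have hQMT : Measurable[supComap (Sum.elim Qi a) Tset] (Qi m) :=
      measurable_supComap (Sum.elim Qi a) Tset (x := Sum.inl m) (by simp [hTdef])
    have haMT : Measurable[supComap (Sum.elim Qi a) Tset] (a m) :=
      measurable_supComap (Sum.elim Qi a) Tset (x := Sum.inr m) (by simp [hTdef])
    have hG : Measurable[supComap (Sum.elim Qi a) Tset]
        (fun ω => exp (θ * (Qi m ω - a m ω))) :=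
      Real.measurable_exp.comp ((hQMT.sub haMT).const_mul θ)
    have hIF : IndepFun ((B (m + 1)).indicator (fun ω => exp (θ * Z (m + 1) ω)))
        (fun ω => exp (θ * (Qi m ω - a m ω))) μ :=
      indepFun_of_measurable_sup hhm hiid Sset Tset hST hF hG
    -- integrability of the two factors
    have hFbd : Integrable ((B (m + 1)).indicator (fun ω => exp (θ * Z (m + 1) ω))) μ := by
      refine Integrable.mono' (integrable_const (exp (θ * τ)))
        (((hexpZmeas (m + 1)).indicator (hBmeas (m + 1))).aestronglyMeasurable)
        (Filter.Eventually.of_forall fun ω => ?_)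
      rw [Real.norm_eq_abs]
      by_cases hω : ω ∈ B (m + 1)
      · rw [Set.indicator_of_mem hω, abs_of_pos (exp_pos _)]
        exact exp_le_exp.mpr (mul_le_mul_of_nonneg_left
          (hω (m + 1) (Finset.mem_Icc.mpr ⟨le_rfl, hmn⟩)) hθ.le)
      · rw [Set.indicator_of_notMem hω, abs_zero]
        positivity
    have hGint : Integrable (fun ω => exp (θ * (Qi m ω - a m ω))) μ := by
      refine Integrable.mono' (hQint m h1 (by omega))
        ((Real.measurable_exp.comp (((hQm m).sub (ham m)).const_mul θ)).aestronglyMeasurable)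
        (Filter.Eventually.of_forall fun ω => ?_)
      rw [Real.norm_eq_abs, abs_of_pos (exp_pos _)]
      refine exp_le_exp.mpr (mul_le_mul_of_nonneg_left ?_ hθ.le)
      have := hanonneg m ω; linarith
    -- expected value of the increment factor
    have hGval : ∫ ω, exp (θ * (Qi m ω - a m ω)) ∂μ = CQ * Ca := by
      have hsplitG : (fun ω => exp (θ * (Qi m ω - a m ω)))
          = fun ω => exp (θ * Qi m ω) * exp (-θ * a m ω) := by
        funext ω
        rw [← Real.exp_add]
        congr 1
        ring
      have hqa : IndepFun (Qi m) (a m) μ :=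
        hiid.indepFun (show (Sum.inl m : ℕ ⊕ ℕ) ≠ Sum.inr m by simp)
      have hqa' : IndepFun (fun ω => exp (θ * Qi m ω)) (fun ω => exp (-θ * a m ω)) μ :=
        hqa.comp (Real.measurable_exp.comp (measurable_id.const_mul θ))
          (Real.measurable_exp.comp (measurable_id.const_mul (-θ)))
      rw [hsplitG]
      have := hqa'.integral_mul_eq_mul_integral (hQint m h1 (by omega)).aestronglyMeasurable (haint m).aestronglyMeasurable
      rw [show (fun ω => exp (θ * Qi m ω) * exp (-θ * a m ω))
          = (fun ω => exp (θ * Qi m ω)) * fun ω => exp (-θ * a m ω) from rfl, this,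
        hQval m h1 (by omega), haval m h1 h2]
    have hCa0 : 0 ≤ Ca := by
      rw [← haval m h1 h2]
      exact integral_nonneg fun ω => (exp_pos _).le
    -- the main computation
    have hkey : ∫ ω in B (m + 1), exp (θ * Z m ω) ∂μ
        = (∫ ω in B (m + 1), exp (θ * Z (m + 1) ω) ∂μ) * (CQ * Ca) := by
      rw [← integral_indicator (hBmeas (m + 1)), ← integral_indicator (hBmeas (m + 1))]
      have hfun : (B (m + 1)).indicator (fun ω => exp (θ * Z m ω))
          = ((B (m + 1)).indicator (fun ω => exp (θ * Z (m + 1) ω)))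
            * fun ω => exp (θ * (Qi m ω - a m ω)) := by
        funext ω
        by_cases hω : ω ∈ B (m + 1)
        · simp only [Set.indicator_of_mem hω, Pi.mul_apply]
          rw [← Real.exp_add, hZrec m h1 h2 ω]
          congr 1
          ring
        · simp only [Set.indicator_of_notMem hω, Pi.mul_apply, zero_mul]
      rw [hfun, hIF.integral_mul_eq_mul_integral hFbd.aestronglyMeasurable hGint.aestronglyMeasurable, hGval]
    rw [hkey, ← integral_indicator (hBmeas (m + 1))]
    have hnonneg : 0 ≤ ∫ ω, (B (m + 1)).indicator (fun ω => exp (θ * Z (m + 1) ω)) ω ∂μ :=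
      integral_nonneg (Set.indicator_nonneg (fun ω _ => (exp_pos _).le))
    nlinarith [mul_nonneg hCQ0 hCa0]
  -- base value
  have hbase : ∫ ω in B (n + 1), exp (θ * Z n ω) ∂μ = CQ := by
    have hBn : B (n + 1) = Set.univ := by
      ext ω
      simp only [hBdef, Set.mem_setOf_eq, Set.mem_univ, iff_true]
      intro l hl
      exact absurd hl (by simp [Finset.Icc_eq_empty (by omega : ¬ n + 1 ≤ n)])
    rw [hBn, setIntegral_univ]
    have : (fun ω => exp (θ * Z n ω)) = fun ω => exp (θ * Qi n ω) := by
      funext ω; rw [hZn ω]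
    rw [this, hQval n hn le_rfl]
  -- the downward induction
  have KEY : ∀ d m, m = n - d → 1 ≤ m →
      exp (θ * τ) * (∑ l ∈ Finset.Icc m n, (μ (A l)).toReal)
        + ∫ ω in B m, exp (θ * Z m ω) ∂μ ≤ CQ := by
    intro d
    induction d with
    | zero =>
      intro m hm h1
      have hm' : m = n := by omega
      rw [hm', Finset.Icc_self, Finset.sum_singleton]
      calc exp (θ * τ) * (μ (A n)).toReal + ∫ ω in B n, exp (θ * Z n ω) ∂μ
          ≤ ∫ ω in B (n + 1), exp (θ * Z n ω) ∂μ := step1 n hn le_rfl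
        _ = CQ := hbase
    | succ d ih =>
      intro m hm h1
      by_cases hd : n - d = n - (d + 1)
      · exact ih m (by omega) h1
      · have hm' : m + 1 = n - d := by omega
        have h1m : 1 ≤ m := h1
        have hmn1 : m ≤ n - 1 := by omega
        have hmn : m ≤ n := by omega
        have hIH := ih (m + 1) hm' (by omega)
        have hsum : ∑ l ∈ Finset.Icc m n, (μ (A l)).toReal
            = (μ (A m)).toReal + ∑ l ∈ Finset.Icc (m + 1) n, (μ (A l)).toReal := by
          have e1 : Finset.Icc m n = insert m (Finset.Icc (m + 1) n) := by
            ext x; simp only [Finset.mem_Icc, Finset.mem_insert]; omega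
          rw [e1, Finset.sum_insert (by simp)]
        have h1s := step1 m h1m hmn
        have h2s := step2 m h1m hmn1
        rw [hsum]
        nlinarith [h1s, h2s, hIH]
  have hKEY1 := KEY (n - 1) 1 (by omega) le_rfl
  -- the event is contained in the union of the first-passage events
  have hEsub : Ev ⊆ ⋃ m ∈ Finset.Icc 1 n, A m := by
    intro ω hω
    rw [hEvdef, Set.mem_setOf_eq, Finset.lt_sup'_iff] at hω
    obtain ⟨m0, hm0, hτm0⟩ := hω
    have hτm0' : τ < Z m0 ω := hτm0
    obtain ⟨M, hMmem, hMmax⟩ := Finset.exists_max_image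
      ((Finset.Icc 1 n).filter (fun m => τ < Z m ω)) id
      ⟨m0, Finset.mem_filter.mpr ⟨hm0, hτm0'⟩⟩
    have hM1 : M ∈ Finset.Icc 1 n := (Finset.mem_filter.mp hMmem).1
    have hM2 : τ < Z M ω := (Finset.mem_filter.mp hMmem).2
    refine Set.mem_biUnion hM1 ?_
    simp only [hAdef, Set.mem_inter_iff, Set.mem_setOf_eq, hBdef]
    refine ⟨?_, hM2⟩
    intro l hl
    by_contra hcon
    push_neg at hcon
    obtain ⟨hl1, hl2⟩ := Finset.mem_Icc.mp hl
    have hM1' := Finset.mem_Icc.mp hM1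
    have hlF : l ∈ (Finset.Icc 1 n).filter (fun m => τ < Z m ω) := Finset.mem_filter.mpr
      ⟨Finset.mem_Icc.mpr ⟨by omega, hl2⟩, hcon⟩
    have := hMmax l hlF
    simp only [id] at this
    omega
  -- wrap up
  have hμsum : μ Ev ≤ ∑ m ∈ Finset.Icc 1 n, μ (A m) :=
    le_trans (measure_mono hEsub) (measure_biUnion_finset_le _ _)
  have hGnonneg : 0 ≤ ∫ ω in B 1, exp (θ * Z 1 ω) ∂μ :=
    setIntegral_nonneg (hBmeas 1) (fun ω _ => (exp_pos _).le)
  have hsumle : ∑ l ∈ Finset.Icc 1 n, (μ (A l)).toReal ≤ CQ * exp (-θ * τ) := by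
    have h2 : exp (θ * τ) * (∑ l ∈ Finset.Icc 1 n, (μ (A l)).toReal) ≤ CQ := by
      linarith [hKEY1, hGnonneg]
    have hx : exp (-(θ * τ)) * exp (θ * τ) = 1 := by
      rw [← Real.exp_add]; simp
    have hτeq : -θ * τ = -(θ * τ) := by ring
    rw [hτeq]
    calc ∑ l ∈ Finset.Icc 1 n, (μ (A l)).toReal
        = (exp (-(θ * τ)) * exp (θ * τ)) * ∑ l ∈ Finset.Icc 1 n, (μ (A l)).toReal := by
          rw [hx, one_mul]
      _ = exp (-(θ * τ)) * (exp (θ * τ) * ∑ l ∈ Finset.Icc 1 n, (μ (A l)).toReal) := by ring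
      _ ≤ exp (-(θ * τ)) * CQ := mul_le_mul_of_nonneg_left h2 (exp_pos _).le
      _ = CQ * exp (-(θ * τ)) := mul_comm _ _
  calc μ Ev
      ≤ ∑ m ∈ Finset.Icc 1 n, μ (A m) := hμsum
    _ = ENNReal.ofReal (∑ m ∈ Finset.Icc 1 n, (μ (A m)).toReal) := by
        rw [ENNReal.ofReal_sum_of_nonneg (fun m _ => ENNReal.toReal_nonneg)]
        exact Finset.sum_congr rfl fun m _ => (ENNReal.ofReal_toReal (measure_ne_top μ _)).symm
    _ ≤ ENNReal.ofReal (CQ * exp (-θ * τ)) := ENNReal.ofReal_le_ofReal hsumle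

/-- **Sojourn time bound for a GI|GI fork-join system with `k` parallel servers.**
The inter-arrival times `a` are i.i.d.; for each server `i ∈ [1,k]` the task service times
`(Q i ν)_ν` are i.i.d. with the same marginal distribution as `Q 1 1` (no independence across
servers is assumed), and all task service times are independent of the arrivals.  For `θ > 0`
with `E[exp (θ Q 1 1)] · E[exp (-θ a 1)] ≤ 1`, the fork-join sojourn time
`T n = max_{i ∈ [1,k]} max_{m ∈ [1,n]} (∑_{ν=m}^{n} Q i ν - ∑_{ν=m}^{n-1} a ν)` satisfies
`P[T n > τ] ≤ k · E[exp (θ Q 1 1)] · exp (-θ τ)`. -/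
theorem forkjoin_gigi_sojourn_bound
    {Ω : Type*} [MeasurableSpace Ω] (μ : Measure Ω) [IsProbabilityMeasure μ]
    (k : ℕ) (hk : 1 ≤ k)
    (a : ℕ → Ω → ℝ) (Q : ℕ → ℕ → Ω → ℝ)
    (hameas : ∀ ν, Measurable (a ν)) (hQmeas : ∀ i ν, Measurable (Q i ν))
    (hanonneg : ∀ ν ω, 0 ≤ a ν ω) (hQnonneg : ∀ i ν ω, 0 ≤ Q i ν ω)
    (haiid : iIndepFun a μ)
    (haid : ∀ ν, 1 ≤ ν → IdentDistrib (a ν) (a 1) μ μ)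
    (hQiid : ∀ i, 1 ≤ i → i ≤ k → iIndepFun (Q i) μ)
    (hQid : ∀ i, 1 ≤ i → i ≤ k → ∀ ν, 1 ≤ ν → IdentDistrib (Q i ν) (Q 1 1) μ μ)
    (hindep : IndepFun (fun ω (ν : ℕ) => a ν ω) (fun ω (p : ℕ × ℕ) => Q p.1 p.2 ω) μ)
    (θ : ℝ) (hθ : 0 < θ)
    (hint : Integrable (fun ω => exp (θ * Q 1 1 ω)) μ)
    (hstab : (∫ ω, exp (θ * Q 1 1 ω) ∂μ) * (∫ ω, exp (-θ * a 1 ω) ∂μ) ≤ 1) :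
    ∀ n : ℕ, ∀ hn : 1 ≤ n, ∀ τ : ℝ, 0 ≤ τ →
      μ {ω | τ < (Finset.Icc 1 k).sup' (Finset.nonempty_Icc.mpr hk)
          (fun i => (Finset.Icc 1 n).sup' (Finset.nonempty_Icc.mpr hn)
            (fun m => (∑ ν ∈ Finset.Icc m n, Q i ν ω) - ∑ ν ∈ Finset.Icc m (n - 1), a ν ω))}
        ≤ ENNReal.ofReal ((k : ℝ) * (∫ ω, exp (θ * Q 1 1 ω) ∂μ) * exp (-θ * τ)) := by
  intro n hn τ hτ
  set CQ := ∫ ω, exp (θ * Q 1 1 ω) ∂μ with hCQdef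
  set Ca := ∫ ω, exp (-θ * a 1 ω) ∂μ with hCadef
  have hCQ0 : 0 ≤ CQ := integral_nonneg fun ω => (exp_pos _).le
  set W : ℕ → Set Ω := fun i => {ω | τ < (Finset.Icc 1 n).sup' (Finset.nonempty_Icc.mpr hn)
      (fun m => (∑ ν ∈ Finset.Icc m n, Q i ν ω) - ∑ ν ∈ Finset.Icc m (n - 1), a ν ω)}
    with hWdef
  have hexpmeas : Measurable (fun x : ℝ => exp (θ * x)) :=
    Real.measurable_exp.comp (measurable_id.const_mul θ)
  have hexpmeas' : Measurable (fun x : ℝ => exp (-θ * x)) :=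
    Real.measurable_exp.comp (measurable_id.const_mul (-θ))
  -- per-server bound
  have hserver : ∀ i, 1 ≤ i → i ≤ k →
      μ (W i) ≤ ENNReal.ofReal (CQ * exp (-θ * τ)) := by
    intro i hi1 hik
    simp only [hWdef]
    have hQa : IndepFun (fun ω (ν : ℕ) => Q i ν ω) (fun ω (ν : ℕ) => a ν ω) μ := by
      have hproj : Measurable (fun g : (ℕ × ℕ) → ℝ => fun ν : ℕ => g (i, ν)) :=
        measurable_pi_lambda _ (fun ν => measurable_pi_apply (i, ν))
      exact hindep.symm.comp hproj measurable_id
    have hiid_i : iIndepFun (Sum.elim (Q i) a) μ :=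
      iIndepFun_sumElim (hQmeas i) hameas (hQiid i hi1 hik) haiid hQa
    have hQint_i : ∀ ν, 1 ≤ ν → ν ≤ n → Integrable (fun ω => exp (θ * Q i ν ω)) μ := by
      intro ν h1 _
      exact ((hQid i hi1 hik ν h1).comp hexpmeas).integrable_iff.mpr hint
    have hQval_i : ∀ ν, 1 ≤ ν → ν ≤ n → ∫ ω, exp (θ * Q i ν ω) ∂μ = CQ := by
      intro ν h1 _
      exact ((hQid i hi1 hik ν h1).comp hexpmeas).integral_eq
    have haval_i : ∀ ν, 1 ≤ ν → ν ≤ n - 1 → ∫ ω, exp (-θ * a ν ω) ∂μ = Ca := by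
      intro ν h1 _
      exact ((haid ν h1).comp hexpmeas').integral_eq
    exact single_server_bound μ (Q i) a (hQmeas i) hameas hanonneg hiid_i θ hθ CQ Ca hstab
      n hn hQint_i hQval_i haval_i τ
  -- union bound over servers
  have hEq : {ω | τ < (Finset.Icc 1 k).sup' (Finset.nonempty_Icc.mpr hk)
      (fun i => (Finset.Icc 1 n).sup' (Finset.nonempty_Icc.mpr hn)
        (fun m => (∑ ν ∈ Finset.Icc m n, Q i ν ω) - ∑ ν ∈ Finset.Icc m (n - 1), a ν ω))}
      = ⋃ i ∈ Finset.Icc 1 k, W i := by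
    ext ω
    rw [Set.mem_setOf_eq, Finset.lt_sup'_iff]
    simp only [hWdef, Set.mem_iUnion, Set.mem_setOf_eq, exists_prop]
  rw [hEq]
  calc μ (⋃ i ∈ Finset.Icc 1 k, W i)
      ≤ ∑ i ∈ Finset.Icc 1 k, μ (W i) :=
        measure_biUnion_finset_le _ _
    _ ≤ ∑ _i ∈ Finset.Icc 1 k, ENNReal.ofReal (CQ * exp (-θ * τ)) :=
        Finset.sum_le_sum fun i hi => hserver i (Finset.mem_Icc.mp hi).1 (Finset.mem_Icc.mp hi).2
    _ = (k : ENNReal) * ENNReal.ofReal (CQ * exp (-θ * τ)) := by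
        rw [Finset.sum_const, Nat.card_Icc]
        simp [nsmul_eq_mul]
    _ = ENNReal.ofReal ((k : ℝ) * CQ * exp (-θ * τ)) := by
        rw [mul_assoc, ← ENNReal.ofReal_natCast k,
          ← ENNReal.ofReal_mul (by positivity : (0 : ℝ) ≤ (k : ℝ))]
end

section
/- Let T be a nonnegative random variable, θ > 0, and C ≥ 1 constants such that P[T > τ] ≤ C · exp(−θτ) for all τ ≥ 0. Then E[T] ≤ (ln C + 1)/θ. In particular, for the fork-join sojourn time satisfying P[T(n) > τ] ≤ k α exp(θ ρ_Q(θ)) exp(−θτ) with k α exp(θ ρ_Q(θ)) ≥ 1, the expected sojourn time satisfies E[T(n)] ≤ ρ_Q(θ) + (ln k + ln α + 1)/θ, i.e. the expected sojourn time grows at most logarithmically in the number of servers k. -/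
open MeasureTheory Real Set Filter Topology

lemma my_integral_exp_neg_mul_Ioi {b : ℝ} (hb : 0 < b) (a : ℝ) :
    ∫ x in Ioi a, Real.exp (-b * x) = Real.exp (-b * a) / b := by
  have hderiv : ∀ x ∈ Ici a, HasDerivAt (fun y => -Real.exp (-b * y) / b)
      (Real.exp (-b * x)) x := by
    intro x _
    have h1 : HasDerivAt (fun y : ℝ => -b * y) (-b) x := by
      simpa using (hasDerivAt_id x).const_mul (-b)
    have h2 : HasDerivAt (fun y => Real.exp (-b * y)) (Real.exp (-b * x) * (-b)) x :=
      (Real.hasDerivAt_exp _).comp x h1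
    have h3 : HasDerivAt (fun y => -Real.exp (-b * y) / b)
        (-(Real.exp (-b * x) * (-b)) / b) x := (h2.neg).div_const b
    convert h3 using 1
    field_simp
  have htend : Tendsto (fun y => -Real.exp (-b * y) / b) atTop (𝓝 0) := by
    have : Tendsto (fun y : ℝ => Real.exp (-b * y)) atTop (𝓝 0) := by
      have h : Tendsto (fun y : ℝ => b * y) atTop atTop := tendsto_id.const_mul_atTop hb
      have := Real.tendsto_exp_neg_atTop_nhds_zero.comp h
      convert this using 2 with y
      simp [Function.comp, neg_mul]
    simpa using (this.neg).div_const b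
  have := integral_Ioi_of_hasDerivAt_of_tendsto' hderiv
    (exp_neg_integrableOn_Ioi a hb) htend
  rw [this]
  ring

/-- **Expectation bound from an exponential tail bound.**
If a nonnegative random variable `T` satisfies `P[T > τ] ≤ C · exp (-θ τ)` for all `τ ≥ 0`,
with `C ≥ 1` and `θ > 0`, then `E[T] ≤ (ln C + 1)/θ`.  In particular, for the fork-join
sojourn time with `C = k · α · exp (θ ρQ) ≥ 1` one gets
`E[T] ≤ ρQ + (ln k + ln α + 1)/θ`, i.e. the expected sojourn time grows at most
logarithmically in the number of servers `k`. -/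
theorem expectation_bound_from_exponential_tail
    {Ω : Type*} [MeasurableSpace Ω] (μ : Measure Ω) [IsProbabilityMeasure μ]
    (T : Ω → ℝ) (hTmeas : Measurable T) (hTnonneg : ∀ ω, 0 ≤ T ω)
    (θ C : ℝ) (hθ : 0 < θ) (hC : 1 ≤ C)
    (htail : ∀ τ : ℝ, 0 ≤ τ → μ {ω | τ < T ω} ≤ ENNReal.ofReal (C * exp (-θ * τ))) :
    (∫ ω, T ω ∂μ) ≤ (Real.log C + 1) / θ ∧
      (∀ (k : ℕ) (α ρQ : ℝ), 1 ≤ k → 0 < α → C = (k : ℝ) * α * exp (θ * ρQ) →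
        (∫ ω, T ω ∂μ) ≤ ρQ + (Real.log k + Real.log α + 1) / θ) := by
  have hC0 : (0:ℝ) < C := lt_of_lt_of_le one_pos hC
  have hlogC : 0 ≤ Real.log C := Real.log_nonneg hC
  set τs : ℝ := Real.log C / θ with hτs_def
  have hτs : 0 ≤ τs := div_nonneg hlogC hθ.le
  have key : (∫ ω, T ω ∂μ) ≤ (Real.log C + 1) / θ := by
    rw [integral_eq_lintegral_of_nonneg_ae (Eventually.of_forall hTnonneg)
      hTmeas.aestronglyMeasurable]
    rw [lintegral_eq_lintegral_meas_lt μ (Eventually.of_forall hTnonneg)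
      hTmeas.aemeasurable]
    have hRHS : 0 ≤ (Real.log C + 1) / θ := by positivity
    refine ENNReal.toReal_le_of_le_ofReal hRHS ?_
    have split : ∫⁻ t in Ioi (0:ℝ), μ {ω | t < T ω}
        = (∫⁻ t in Ioc (0:ℝ) τs, μ {ω | t < T ω})
          + ∫⁻ t in Ioi τs, μ {ω | t < T ω} := by
      rw [← lintegral_union measurableSet_Ioi (Set.Ioc_disjoint_Ioi le_rfl),
        Set.Ioc_union_Ioi_eq_Ioi hτs]
    rw [split]
    have h1 : (∫⁻ t in Ioc (0:ℝ) τs, μ {ω | t < T ω}) ≤ ENNReal.ofReal τs := by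
      calc (∫⁻ t in Ioc (0:ℝ) τs, μ {ω | t < T ω})
          ≤ ∫⁻ _ in Ioc (0:ℝ) τs, 1 := lintegral_mono fun t => prob_le_one
        _ = ENNReal.ofReal τs := by
            rw [setLIntegral_one, Real.volume_Ioc, sub_zero]
    have h2 : (∫⁻ t in Ioi τs, μ {ω | t < T ω}) ≤ ENNReal.ofReal (1 / θ) := by
      have hmono : (∫⁻ t in Ioi τs, μ {ω | t < T ω})
          ≤ ∫⁻ t in Ioi τs, ENNReal.ofReal (C * exp (-θ * t)) := by
        refine setLIntegral_mono ?_ ?_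
        · exact (ENNReal.measurable_ofReal.comp
            ((measurable_const.mul ((measurable_id.const_mul (-θ)).exp))))
        · intro t ht
          exact htail t (le_trans hτs (le_of_lt ht))
      have hcalc : (∫⁻ t in Ioi τs, ENNReal.ofReal (C * exp (-θ * t)))
          = ENNReal.ofReal (1 / θ) := by
        rw [← ofReal_integral_eq_lintegral_ofReal]
        · rw [MeasureTheory.integral_const_mul, my_integral_exp_neg_mul_Ioi hθ]
          congr 1
          have : -θ * τs = -Real.log C := by
            rw [hτs_def]; field_simp
          rw [this, Real.exp_neg, Real.exp_log hC0]
          field_simp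
        · exact (exp_neg_integrableOn_Ioi τs hθ).const_mul C
        · refine Eventually.of_forall fun t => ?_
          positivity
      exact hmono.trans (le_of_eq hcalc)
    calc (∫⁻ t in Ioc (0:ℝ) τs, μ {ω | t < T ω}) + ∫⁻ t in Ioi τs, μ {ω | t < T ω}
        ≤ ENNReal.ofReal τs + ENNReal.ofReal (1 / θ) := add_le_add h1 h2
      _ = ENNReal.ofReal (τs + 1 / θ) := by
          rw [ENNReal.ofReal_add hτs (by positivity)]
      _ = ENNReal.ofReal ((Real.log C + 1) / θ) := by
          congr 1
          rw [hτs_def]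
          field_simp
  refine ⟨key, ?_⟩
  intro k α ρQ hk hα hCeq
  have hk0 : (0:ℝ) < (k:ℝ) := by exact_mod_cast Nat.lt_of_lt_of_le Nat.zero_lt_one hk
  have hlog : Real.log C = Real.log k + Real.log α + θ * ρQ := by
    rw [hCeq, Real.log_mul (by positivity) (Real.exp_ne_zero _),
      Real.log_mul (ne_of_gt hk0) (ne_of_gt hα), Real.log_exp]
  refine key.trans (le_of_eq ?_)
  rw [hlog]
  field_simp
  ring
end

section
/- Let A : ℕ → ℝ be a nondecreasing sequence of arrival times with A(0) = 0, and Q_i(n) ≥ 0 for i ∈ [1,k], n ≥ 1, task service times. Define the split-merge dynamics: V(1) = A(1), V(n) = max{ A(n), V(n−1) + max_{i ∈ [1,k]} Q_i(n−1) } for n ≥ 2, and D(n) = V(n) + max_{i ∈ [1,k]} Q_i(n). Then for all n ≥ 1, D(n) = max_{m ∈ [1,n]} { A(m) + S(m,n) } with S(m,n) = Σ_{ν=m}^{n} max_{i ∈ [1,k]} Q_i(ν); that is, the split-merge system is an exact S(m,n) server. -/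
lemma aux_splitmerge (A M V D : ℕ → ℝ)
    (hV1 : V 1 = A 1)
    (hVrec : ∀ n, 2 ≤ n → V n = max (A n) (V (n - 1) + M (n - 1)))
    (hD : ∀ n, D n = V n + M n) :
    ∀ n, ∀ hn : 1 ≤ n,
      D n = (Finset.Icc 1 n).sup' (Finset.nonempty_Icc.mpr hn)
        (fun m => A m + ∑ ν ∈ Finset.Icc m n, M ν) := by
  intro n
  induction n with
  | zero => intro h; omega
  | succ n ih =>
    intro hn
    rcases Nat.lt_or_ge n 1 with h1 | h1
    · have hn0 : n = 0 := by omega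
      subst hn0
      simp [hD 1, hV1]
    · have ihn := ih h1
      have hrec := hVrec (n+1) (by omega)
      simp only [Nat.add_sub_cancel] at hrec
      have hDn1 : D (n+1) = max (A (n+1) + M (n+1)) (D n + M (n+1)) := by
        rw [hD (n+1), hrec, hD n, ← max_add_add_right, add_assoc]
      have hins : Finset.Icc 1 (n+1) = insert (n+1) (Finset.Icc 1 n) :=
        (Finset.insert_Icc_right_eq_Icc_add_one (by omega)).symm
      have hnot : (n+1) ∉ Finset.Icc 1 n := by simp
      rw [hDn1, ihn]
      simp only [hins]
      have hsingle : ∑ ν ∈ Finset.Icc (n+1) (n+1), M ν = M (n+1) := by simp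
      have hsum : ∀ m ∈ Finset.Icc 1 n,
          A m + ∑ ν ∈ Finset.Icc m (n+1), M ν
            = (A m + ∑ ν ∈ Finset.Icc m n, M ν) + M (n+1) := by
        intro m hm
        simp only [Finset.mem_Icc] at hm
        rw [(Finset.insert_Icc_right_eq_Icc_add_one (by omega)).symm, Finset.sum_insert (by simp), add_assoc,
          add_comm (M (n+1))]
      rw [Finset.sup'_insert (H := Finset.nonempty_Icc.mpr h1),
        Finset.sup'_congr (Finset.nonempty_Icc.mpr h1) rfl hsum,
        ← Finset.sup'_add, hsingle]



/-- **A split-merge system is an exact max-plus server.**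
All `k` tasks of a job start simultaneously at `V n`, where `V 1 = A 1` and
`V n = max (A n) (V (n-1) + max_{i ∈ [1,k]} Q i (n-1))` for `n ≥ 2`, and the job departs at
`D n = V n + max_{i ∈ [1,k]} Q i n`.  Then `D n = max_{m ∈ [1,n]} (A m + S m n)` with
`S(m,n) = ∑_{ν=m}^{n} max_{i ∈ [1,k]} Q i ν`. -/
theorem splitmerge_exact_maxplus_server
    (k : ℕ) (hk : 1 ≤ k)
    (A : ℕ → ℝ) (Q : ℕ → ℕ → ℝ) (V D : ℕ → ℝ)
    (hA0 : A 0 = 0) (hAmono : Monotone A) (hQ : ∀ i n, 0 ≤ Q i n)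
    (hV1 : V 1 = A 1)
    (hVrec : ∀ n, 2 ≤ n → V n = max (A n)
      (V (n - 1) + (Finset.Icc 1 k).sup' (Finset.nonempty_Icc.mpr hk) (fun i => Q i (n - 1))))
    (hD : ∀ n, D n = V n + (Finset.Icc 1 k).sup' (Finset.nonempty_Icc.mpr hk) (fun i => Q i n)) :
    ∀ n, ∀ hn : 1 ≤ n,
      D n = (Finset.Icc 1 n).sup' (Finset.nonempty_Icc.mpr hn)
        (fun m => A m + ∑ ν ∈ Finset.Icc m n,
          (Finset.Icc 1 k).sup' (Finset.nonempty_Icc.mpr hk) (fun i => Q i ν)) := by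
  exact aux_splitmerge A (fun ν => (Finset.Icc 1 k).sup' (Finset.nonempty_Icc.mpr hk) (fun i => Q i ν)) V D hV1 hVrec hD
end

section
/- Let A : ℕ → ℝ be a nondecreasing sequence of arrival times with A(0) = 0, and L_i(n) ≥ 0 for i ∈ [1,k], n ≥ 1, replica service times. Define the purging-replication dynamics: V(1) = A(1), V(n) = max{ A(n), V(n−1) + min_{i ∈ [1,k]} L_i(n−1) } for n ≥ 2, and D(n) = V(n) + min_{i ∈ [1,k]} L_i(n). Then for all n ≥ 1, D(n) = max_{m ∈ [1,n]} { A(m) + S(m,n) } with S(m,n) = Σ_{ν=m}^{n} min_{i ∈ [1,k]} L_i(ν); that is, the purging replication system is an exact S(m,n) server. -/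
/-- **A replication system with purging is an exact max-plus server.**
All `k` replicas of a job start simultaneously at `V n`, where `V 1 = A 1` and
`V n = max (A n) (V (n-1) + min_{i ∈ [1,k]} L i (n-1))` for `n ≥ 2`, and the job departs at
`D n = V n + min_{i ∈ [1,k]} L i n`.  Then `D n = max_{m ∈ [1,n]} (A m + S m n)` with
`S(m,n) = ∑_{ν=m}^{n} min_{i ∈ [1,k]} L i ν`. -/
theorem replication_exact_maxplus_server
    (k : ℕ) (hk : 1 ≤ k)
    (A : ℕ → ℝ) (L : ℕ → ℕ → ℝ) (V D : ℕ → ℝ)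
    (hA0 : A 0 = 0) (hAmono : Monotone A) (hL : ∀ i n, 0 ≤ L i n)
    (hV1 : V 1 = A 1)
    (hVrec : ∀ n, 2 ≤ n → V n = max (A n)
      (V (n - 1) + (Finset.Icc 1 k).inf' (Finset.nonempty_Icc.mpr hk) (fun i => L i (n - 1))))
    (hD : ∀ n, D n = V n + (Finset.Icc 1 k).inf' (Finset.nonempty_Icc.mpr hk) (fun i => L i n)) :
    ∀ n, ∀ hn : 1 ≤ n,
      D n = (Finset.Icc 1 n).sup' (Finset.nonempty_Icc.mpr hn)
        (fun m => A m + ∑ ν ∈ Finset.Icc m n,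
          (Finset.Icc 1 k).inf' (Finset.nonempty_Icc.mpr hk) (fun i => L i ν)) := by
  set μ : ℕ → ℝ := fun ν => (Finset.Icc 1 k).inf' (Finset.nonempty_Icc.mpr hk) (fun i => L i ν) with hμ
  intro n hn
  induction n, hn using Nat.le_induction with
  | base =>
      simp [hD 1, hV1, hμ]
  | succ n hn ih =>
      have h2 : 2 ≤ n + 1 := by omega
      have hne : (Finset.Icc 1 n).Nonempty := Finset.nonempty_Icc.mpr hn
      have hsplit : Finset.Icc 1 (n + 1) = insert (n + 1) (Finset.Icc 1 n) := by
        ext x; simp [Finset.mem_Icc]; omega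
      have hDrec : D (n + 1) = max (A (n + 1) + μ (n + 1)) (D n + μ (n + 1)) := by
        rw [hD (n + 1), hVrec (n + 1) h2, hD n]
        simp only [Nat.add_sub_cancel]
        rw [max_add_add_right]
      have hsup : (Finset.Icc 1 (n + 1)).sup' (Finset.nonempty_Icc.mpr (by omega : 1 ≤ n + 1))
          (fun m => A m + ∑ ν ∈ Finset.Icc m (n + 1), μ ν)
          = max (A (n + 1) + ∑ ν ∈ Finset.Icc (n + 1) (n + 1), μ ν)
            ((Finset.Icc 1 n).sup' hne (fun m => A m + ∑ ν ∈ Finset.Icc m (n + 1), μ ν)) := by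
        rw [Finset.sup'_congr _ hsplit (fun _ _ => rfl), Finset.sup'_insert]
      rw [hDrec, ih, hsup]
      have hadd : ((Finset.Icc 1 n).sup' hne fun m => A m + ∑ ν ∈ Finset.Icc m n, μ ν) + μ (n + 1)
          = (Finset.Icc 1 n).sup' hne (fun m => A m + ∑ ν ∈ Finset.Icc m (n + 1), μ ν) := by
        rw [Finset.sup'_add _ _ _ hne]
        apply Finset.sup'_congr _ rfl
        intro m hm
        have hm' : m ≤ n + 1 := le_trans (Finset.mem_Icc.mp hm).2 (by omega)
        rw [Finset.sum_Icc_succ_top hm']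
        ring
      rw [hadd]
      simp
end

section
/- Consider h exact max-plus servers in tandem: let A : ℕ → ℝ be nondecreasing arrival times with A(0) = 0, let S^j(m,n) ≥ 0 for j ∈ [1,h] and n ≥ m ≥ 1 be the stage service processes, and define recursively D^0(n) = A(n) and D^j(n) = max_{m ∈ [1,n]} { D^{j−1}(m) + S^j(m,n) } for j ∈ [1,h]. Then for all n ≥ 1, D^h(n) = max_{m ∈ [1,n]} { A(m) + S^net(m,n) }, where S^net(m,n) = max over all index sequences m ≤ ν^1 ≤ ν^2 ≤ … ≤ ν^{h−1} ≤ n of { S^1(m,ν^1) + S^2(ν^1,ν^2) + … + S^h(ν^{h−1},n) }; that is, the tandem network is an exact S^net(m,n) server. -/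
theorem tandem_aux
    (h : ℕ) (A : ℕ → ℝ) (S : ℕ → ℕ → ℕ → ℝ) (D : ℕ → ℕ → ℝ)
    (hD0 : ∀ n, D 0 n = A n)
    (hDrec : ∀ j, 1 ≤ j → j ≤ h → ∀ n, ∀ hn : 1 ≤ n,
      D j n = (Finset.Icc 1 n).sup' (Finset.nonempty_Icc.mpr hn)
        (fun m => D (j - 1) m + S j m n)) :
    ∀ j, j ≤ h → ∀ n, 1 ≤ n →
      IsGreatest
        {x : ℝ | ∃ ν : Fin (j + 1) → ℕ, Monotone ν ∧ 1 ≤ ν 0 ∧ ν (Fin.last j) = n ∧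
          x = A (ν 0) + ∑ k : Fin j, S ((k : ℕ) + 1) (ν k.castSucc) (ν k.succ)}
        (D j n) := by
  intro j
  induction j with
  | zero =>
    intro _ n hn
    constructor
    · exact ⟨fun _ => n, monotone_const, hn, rfl, by simp [hD0]⟩
    · rintro x ⟨ν, hmono, h1, hlast, hx⟩
      have : ν 0 = n := by simpa [Fin.last] using hlast
      simp [hx, this, hD0]
  | succ j ih =>
    intro hjh n hn
    have hjh' : j ≤ h := by omega
    have hrec := hDrec (j + 1) (by omega) hjh n hn
    simp only [Nat.add_sub_cancel] at hrec
    constructor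
    · -- membership
      obtain ⟨m, hm, hsup⟩ := Finset.exists_mem_eq_sup' (Finset.nonempty_Icc.mpr hn)
        (fun m => D j m + S (j + 1) m n)
      rw [Finset.mem_Icc] at hm
      obtain ⟨hm1, hmn⟩ := hm
      obtain ⟨ν, hmono, h1, hlast, hval⟩ := (ih hjh' m hm1).1
      refine ⟨Fin.snoc ν n, ?_, ?_, ?_, ?_⟩
      · rw [Fin.monotone_iff_le_succ]
        intro k
        refine Fin.lastCases ?_ ?_ k
        · rw [Fin.succ_last, Fin.snoc_last, Fin.snoc_castSucc, hlast]
          exact hmn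
        · intro i
          rw [Fin.succ_castSucc, Fin.snoc_castSucc, Fin.snoc_castSucc]
          exact hmono (Fin.castSucc_le_succ i)
      · rw [show (0 : Fin (j + 2)) = Fin.castSucc 0 from rfl, Fin.snoc_castSucc]
        exact h1
      · exact Fin.snoc_last _ _
      · rw [hrec, hsup, hval]
        rw [show (0 : Fin (j + 2)) = Fin.castSucc 0 from rfl, Fin.snoc_castSucc]
        rw [Fin.sum_univ_castSucc]
        simp only [Fin.succ_castSucc, Fin.snoc_castSucc, Fin.succ_last, Fin.snoc_last,
          Fin.coe_castSucc, Fin.val_last, hlast]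
        ring
    · -- upper bound
      rintro x ⟨ν, hmono, h1, hlast, hx⟩
      set m := ν ((Fin.last j).castSucc) with hmdef
      have hm1 : 1 ≤ m := le_trans h1 (hmono (Fin.zero_le _))
      have hmn : m ≤ n := hlast ▸ hmono (Fin.le_last _)
      have hμ : A (ν 0) + ∑ k : Fin j, S ((k:ℕ)+1) (ν k.castSucc.castSucc) (ν k.succ.castSucc)
          ≤ D j m := by
        refine (ih hjh' m hm1).2 ⟨fun i => ν i.castSucc, ?_, h1, rfl, rfl⟩
        exact hmono.comp Fin.strictMono_castSucc.monotone
      have hsplit : x = (A (ν 0) + ∑ k : Fin j,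
          S ((k:ℕ)+1) (ν k.castSucc.castSucc) (ν k.succ.castSucc)) + S (j + 1) m n := by
        rw [hx, Fin.sum_univ_castSucc
          (f := fun k : Fin (j+1) => S ((k:ℕ)+1) (ν k.castSucc) (ν k.succ))]
        simp only [Fin.succ_castSucc, Fin.succ_last, hlast, Fin.coe_castSucc, Fin.val_last]
        ring
      rw [hsplit, hrec]
      calc (A (ν 0) + ∑ k : Fin j,
          S ((k:ℕ)+1) (ν k.castSucc.castSucc) (ν k.succ.castSucc)) + S (j + 1) m n
          ≤ D j m + S (j + 1) m n := by linarith
        _ ≤ _ := Finset.le_sup' (fun m => D j m + S (j + 1) m n)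
            (Finset.mem_Icc.mpr ⟨hm1, hmn⟩)

/-- **A tandem of exact max-plus servers is an exact max-plus server** with the max-plus
convolution of the stage service processes:  with `D 0 n = A n` and
`D j n = max_{m ∈ [1,n]} (D (j-1) m + S j m n)` for `j ∈ [1,h]`, the end-to-end departure
`D h n` is the greatest value of
`A (ν 0) + ∑_{j=1}^{h} S j (ν (j-1)) (ν j)` over all monotone index sequences
`ν : Fin (h+1) → ℕ` with `1 ≤ ν 0` and `ν h = n`;  that is, the tandem network is an exact
`S^net(m,n) = max_{m ≤ ν¹ ≤ ⋯ ≤ ν^{h-1} ≤ n} (S¹(m,ν¹) + ⋯ + S^h(ν^{h-1},n))` server. -/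
theorem tandem_exact_maxplus_server
    (h : ℕ) (A : ℕ → ℝ) (S : ℕ → ℕ → ℕ → ℝ) (D : ℕ → ℕ → ℝ)
    (hA0 : A 0 = 0) (hAmono : Monotone A)
    (hS : ∀ j m n, 1 ≤ j → j ≤ h → 1 ≤ m → m ≤ n → 0 ≤ S j m n)
    (hD0 : ∀ n, D 0 n = A n)
    (hDrec : ∀ j, 1 ≤ j → j ≤ h → ∀ n, ∀ hn : 1 ≤ n,
      D j n = (Finset.Icc 1 n).sup' (Finset.nonempty_Icc.mpr hn)
        (fun m => D (j - 1) m + S j m n)) :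
    ∀ n, 1 ≤ n →
      IsGreatest
        {x : ℝ | ∃ ν : Fin (h + 1) → ℕ, Monotone ν ∧ 1 ≤ ν 0 ∧ ν (Fin.last h) = n ∧
          x = A (ν 0) + ∑ j : Fin h, S ((j : ℕ) + 1) (ν j.castSucc) (ν j.succ)}
        (D h n) := by
  exact tandem_aux h A S D hD0 hDrec h le_rfl
end

section
/- Consider a multi-server system with k parallel work-conserving FIFO servers, deterministic (round-robin) thinning, and resequencing. The external arrivals have i.i.d. nonnegative inter-arrival times (a(ν))_{ν ≥ 1}, A(n) = Σ_{ν=1}^{n−1} a(ν); server i ∈ [1,k] receives the jobs X_i(m) = k(m−1)+i with arrivals A_i(m) = A(X_i(m)) and i.i.d. nonnegative job service times (L_i(m))_{m ≥ 1}, all service times independent of the arrivals and identically distributed as L(1) across servers; server i is an exact max-plus server with departures D_i(m) = max_{μ ∈ [1,m]} { A_i(μ) + Σ_{ν=μ}^{m} L_i(ν) }. The resequenced departure of job n is D(n) = max_{i ∈ [1,k]} D_i(Y_i(n)) with Y_i(n) = ⌈(n−i+1)/k⌉ and D_i(0) = 0, and the sojourn time is T(n) = D(n) − A(n). Fix θ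 > 0 such that E[exp(θ L(1))] · (E[exp(−θ a(1))])^k ≤ 1. Then for all n ≥ 1 and τ ≥ 0, P[T(n) > τ] ≤ k · E[exp(θ L(1))] · exp(−θτ). -/
open MeasureTheory ProbabilityTheory Real

/-- Cumulative arrival process: `A n = ∑_{ν=1}^{n-1} a ν`. -/
noncomputable def cumArr {Ω : Type*} (a : ℕ → Ω → ℝ) (n : ℕ) (ω : Ω) : ℝ :=
  ∑ ν ∈ Finset.Icc 1 (n - 1), a ν ω

/-- Departure time of the `m`-th job of server `i` under round-robin thinning
(`X_i(m) = k(m-1)+i`, `A_i(m) = A (X_i(m))`), the server being an exact max-plus server: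
`D_i m = max_{μ' ∈ [1,m]} (A_i μ' + ∑_{ν=μ'}^{m} L i ν)`; since all terms are nonnegative,
the real-valued `⨆` (whose empty supremum is `0`) realizes this together with the
convention `D_i 0 = 0`. -/
noncomputable def thinServerDep {Ω : Type*} (k i : ℕ) (a : ℕ → Ω → ℝ)
    (L : ℕ → ℕ → Ω → ℝ) (m : ℕ) (ω : Ω) : ℝ :=
  ⨆ μ' ∈ Finset.Icc 1 m, (cumArr a (k * (μ' - 1) + i) ω + ∑ ν ∈ Finset.Icc μ' m, L i ν ω)

/-- Resequenced departure time: `D n = max_{i ∈ [1,k]} D_i (Y_i n)` with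
`Y_i n = ⌈(n-i+1)/k⌉ = (n+k-i)/k` (ℕ-division) and `D_i 0 = 0`. -/
noncomputable def reseqDep {Ω : Type*} (k : ℕ) (a : ℕ → Ω → ℝ)
    (L : ℕ → ℕ → Ω → ℝ) (n : ℕ) (ω : Ω) : ℝ :=
  ⨆ i ∈ Finset.Icc 1 k, thinServerDep k i a L ((n + k - i) / k) ω

section Helpers

variable {Ω : Type*} [MeasurableSpace Ω] {μ : Measure Ω}

lemma aux_integrable_of_le_one [IsProbabilityMeasure μ] {f : Ω → ℝ}
    (hm : Measurable f) (h0 : ∀ ω, 0 ≤ f ω) (h1 : ∀ ω, f ω ≤ 1) : Integrable f μ :=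
  (integrable_const (1:ℝ)).mono' hm.aestronglyMeasurable
    (Filter.Eventually.of_forall fun ω => by
      rw [Real.norm_eq_abs, abs_of_nonneg (h0 ω)]; exact h1 ω)

lemma tail_add_indep [IsProbabilityMeasure μ] {X Y : Ω → ℝ}
    (hX : Measurable X) (hY : Measurable Y) (hInd : IndepFun X Y μ) (θ : ℝ)
    (htail : ∀ t : ℝ, μ {ω | t < Y ω} ≤ ENNReal.ofReal (Real.exp (-θ * t))) (s : ℝ) :
    μ {ω | s < X ω + Y ω}
      ≤ ENNReal.ofReal (Real.exp (-θ * s)) * ∫⁻ ω, ENNReal.ofReal (Real.exp (θ * X ω)) ∂μ := by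
  have hmap : μ.map (fun ω => (X ω, Y ω)) = (μ.map X).prod (μ.map Y) :=
    (indepFun_iff_map_prod_eq_prod_map_map hX.aemeasurable hY.aemeasurable).1 hInd
  have hsm : MeasurableSet {p : ℝ × ℝ | s < p.1 + p.2} :=
    measurableSet_lt measurable_const (measurable_fst.add measurable_snd)
  have hmeasexp : Measurable (fun x : ℝ => ENNReal.ofReal (Real.exp (θ * x))) :=
    ENNReal.measurable_ofReal.comp (Real.measurable_exp.comp (measurable_id.const_mul θ))
  have h1 : μ {ω | s < X ω + Y ω} = ((μ.map X).prod (μ.map Y)) {p : ℝ × ℝ | s < p.1 + p.2} := by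
    rw [← hmap, Measure.map_apply (hX.prodMk hY) hsm]
    rfl
  rw [h1, Measure.prod_apply hsm]
  have h2 : ∀ x : ℝ, (μ.map Y) (Prod.mk x ⁻¹' {p : ℝ × ℝ | s < p.1 + p.2})
      ≤ ENNReal.ofReal (Real.exp (-θ * s)) * ENNReal.ofReal (Real.exp (θ * x)) := by
    intro x
    have hpre : Prod.mk x ⁻¹' {p : ℝ × ℝ | s < p.1 + p.2} = Set.Ioi (s - x) := by
      ext y
      simp only [Set.mem_preimage, Set.mem_setOf_eq, Set.mem_Ioi]
      constructor <;> intro h <;> linarith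
    rw [hpre, Measure.map_apply hY measurableSet_Ioi]
    have hYset : Y ⁻¹' Set.Ioi (s - x) = {ω | s - x < Y ω} := rfl
    rw [hYset]
    calc μ {ω | s - x < Y ω} ≤ ENNReal.ofReal (Real.exp (-θ * (s - x))) := htail _
      _ = ENNReal.ofReal (Real.exp (-θ * s) * Real.exp (θ * x)) := by
          rw [← Real.exp_add]; congr 1; ring
      _ = _ := ENNReal.ofReal_mul (le_of_lt (Real.exp_pos _))
  calc ∫⁻ x, (μ.map Y) (Prod.mk x ⁻¹' {p : ℝ × ℝ | s < p.1 + p.2}) ∂(μ.map X)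
      ≤ ∫⁻ x, ENNReal.ofReal (Real.exp (-θ * s)) * ENNReal.ofReal (Real.exp (θ * x)) ∂(μ.map X) :=
        lintegral_mono h2
    _ = ENNReal.ofReal (Real.exp (-θ * s)) * ∫⁻ x, ENNReal.ofReal (Real.exp (θ * x)) ∂(μ.map X) :=
        lintegral_const_mul _ hmeasexp
    _ = _ := by rw [lintegral_map hmeasexp hX]

lemma iIndepFun_sum_elim {α β : Type*} {f : α → Ω → ℝ} {g : β → Ω → ℝ}
    (hfm : ∀ x, Measurable (f x)) (hgm : ∀ y, Measurable (g y))
    (hf : iIndepFun f μ) (hg : iIndepFun g μ)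
    (hfg : IndepFun (fun ω (x : α) => f x ω) (fun ω (y : β) => g y ω) μ) :
    iIndepFun (Sum.elim f g) μ := by
  classical
  rw [iIndepFun_iff_measure_inter_preimage_eq_mul]
  intro S sets hsets
  have hA : (⋂ j ∈ S, Sum.elim f g j ⁻¹' sets j) =
      ((fun ω (x : α) => f x ω) ⁻¹' {h | ∀ x ∈ S.toLeft, h x ∈ sets (Sum.inl x)}) ∩
      ((fun ω (y : β) => g y ω) ⁻¹' {h | ∀ y ∈ S.toRight, h y ∈ sets (Sum.inr y)}) := by
    ext ω
    simp only [Set.mem_iInter, Set.mem_inter_iff, Set.mem_preimage, Set.mem_setOf_eq,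
      Finset.mem_toLeft, Finset.mem_toRight]
    constructor
    · intro h
      exact ⟨fun x hx => h (Sum.inl x) hx, fun y hy => h (Sum.inr y) hy⟩
    · rintro ⟨h1, h2⟩ (x | y) hj
      · exact h1 x hj
      · exact h2 y hj
  have hCa : MeasurableSet {h : α → ℝ | ∀ x ∈ S.toLeft, h x ∈ sets (Sum.inl x)} := by
    have : {h : α → ℝ | ∀ x ∈ S.toLeft, h x ∈ sets (Sum.inl x)} =
        ⋂ x ∈ S.toLeft, (fun h : α → ℝ => h x) ⁻¹' sets (Sum.inl x) := by
      ext h; simp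
    rw [this]
    exact MeasurableSet.biInter (S.toLeft : Set α).to_countable
      (fun x hx => (measurable_pi_apply x) (hsets _ (Finset.mem_toLeft.1 hx)))
  have hCb : MeasurableSet {h : β → ℝ | ∀ y ∈ S.toRight, h y ∈ sets (Sum.inr y)} := by
    have : {h : β → ℝ | ∀ y ∈ S.toRight, h y ∈ sets (Sum.inr y)} =
        ⋂ y ∈ S.toRight, (fun h : β → ℝ => h y) ⁻¹' sets (Sum.inr y) := by
      ext h; simp
    rw [this]
    exact MeasurableSet.biInter (S.toRight : Set β).to_countable
      (fun y hy => (measurable_pi_apply y) (hsets _ (Finset.mem_toRight.1 hy)))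
  have hfpre : (fun ω (x : α) => f x ω) ⁻¹' {h | ∀ x ∈ S.toLeft, h x ∈ sets (Sum.inl x)} =
      ⋂ x ∈ S.toLeft, f x ⁻¹' sets (Sum.inl x) := by
    ext ω; simp
  have hgpre : (fun ω (y : β) => g y ω) ⁻¹' {h | ∀ y ∈ S.toRight, h y ∈ sets (Sum.inr y)} =
      ⋂ y ∈ S.toRight, g y ⁻¹' sets (Sum.inr y) := by
    ext ω; simp
  rw [hA, hfg.measure_inter_preimage_eq_mul _ _ hCa hCb, hfpre, hgpre,
    hf.measure_inter_preimage_eq_mul S.toLeft (fun x hx => hsets _ (Finset.mem_toLeft.1 hx)),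
    hg.measure_inter_preimage_eq_mul S.toRight (fun y hy => hsets _ (Finset.mem_toRight.1 hy))]
  conv_rhs => rw [← Finset.toLeft_disjSum_toRight (u := S)]
  rw [Finset.prod_disjSum]
  simp

lemma integral_prod_of_iIndep [IsProbabilityMeasure μ] {f : ℕ → Ω → ℝ}
    (hm : ∀ ν, Measurable (f ν)) (h0 : ∀ ν ω, 0 ≤ f ν ω) (h1 : ∀ ν ω, f ν ω ≤ 1)
    (hind : iIndepFun f μ) (s : Finset ℕ) :
    ∫ ω, ∏ ν ∈ s, f ν ω ∂μ = ∏ ν ∈ s, ∫ ω, f ν ω ∂μ := by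
  classical
  induction s using Finset.cons_induction with
  | empty => simp
  | cons j s hj ih =>
    have hprodm : Measurable (fun ω => ∏ ν ∈ s, f ν ω) :=
      Finset.measurable_prod _ fun ν _ => hm ν
    have hprodint : Integrable (fun ω => ∏ ν ∈ s, f ν ω) μ :=
      aux_integrable_of_le_one hprodm (fun ω => Finset.prod_nonneg fun ν _ => h0 ν ω)
        (fun ω => Finset.prod_le_one (fun ν _ => h0 ν ω) (fun ν _ => h1 ν ω))
    have hIndep : IndepFun (∏ ν ∈ s, f ν) (f j) μ :=
      hind.indepFun_finset_prod_of_notMem hm hj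
    have hprodfun : (∏ ν ∈ s, f ν) = fun ω => ∏ ν ∈ s, f ν ω := by
      funext ω; simp [Finset.prod_apply]
    have key : ∫ ω, (∏ ν ∈ s, f ν ω) * f j ω ∂μ
        = (∫ ω, ∏ ν ∈ s, f ν ω ∂μ) * ∫ ω, f j ω ∂μ := by
      have := hIndep.integral_mul_eq_mul_integral
        (by rw [hprodfun]; exact hprodint.aestronglyMeasurable) (aux_integrable_of_le_one (hm j) (h0 j) (h1 j)).aestronglyMeasurable
      simpa [hprodfun, Pi.mul_apply] using this
    have hfc : ∀ ω, ∏ ν ∈ Finset.cons j s hj, f ν ω = (∏ ν ∈ s, f ν ω) * f j ω := by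
      intro ω; rw [Finset.prod_cons]; ring
    calc ∫ ω, ∏ ν ∈ Finset.cons j s hj, f ν ω ∂μ
        = ∫ ω, (∏ ν ∈ s, f ν ω) * f j ω ∂μ := by simp_rw [hfc]
      _ = (∫ ω, ∏ ν ∈ s, f ν ω ∂μ) * ∫ ω, f j ω ∂μ := key
      _ = ∏ ν ∈ Finset.cons j s hj, ∫ ω, f ν ω ∂μ := by rw [ih, Finset.prod_cons]; ring

end Helpers

/-- Deterministic recursion on a path `x : ℕ ⊕ ℕ → ℝ` (left = inter-arrivals, right = services)
realizing the running backwards maximum of the thinned server `i`. -/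
noncomputable def gPath (k i : ℕ) : ℕ → ((ℕ ⊕ ℕ) → ℝ) → ℝ
  | 0, _ => 0
  | 1, _ => 0
  | (m+2), x => max 0 ((x (Sum.inr (m+1)) - ∑ ν ∈ Finset.Ico (k*m+i) (k*(m+1)+i), x (Sum.inl ν))
      + gPath k i (m+1) x)

lemma gPath_measurable (k i : ℕ) : ∀ m, Measurable (gPath k i m)
  | 0 => measurable_const
  | 1 => measurable_const
  | (m+2) => by
    have ih := gPath_measurable k i (m+1)
    exact measurable_const.max ((((measurable_pi_apply (Sum.inr (m+1))).sub
      (Finset.measurable_sum _ fun ν _ => measurable_pi_apply (Sum.inl ν))).add ih))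

lemma gPath_congr (k i : ℕ) (hi : 1 ≤ i) : ∀ m (x y : (ℕ ⊕ ℕ) → ℝ),
    (∀ ν, 1 ≤ ν → ν < k*(m-1)+i → x (Sum.inl ν) = y (Sum.inl ν)) →
    (∀ ν, 1 ≤ ν → ν < m → x (Sum.inr ν) = y (Sum.inr ν)) →
    gPath k i m x = gPath k i m y
  | 0, x, y, _, _ => rfl
  | 1, x, y, _, _ => rfl
  | (m+2), x, y, hl, hr => by
    have hmono : k * m ≤ k * (m+1) := Nat.mul_le_mul (le_refl k) (by omega)
    have ih := gPath_congr k i hi (m+1) x y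
      (fun ν h1 h2 => hl ν h1 (by simp only [Nat.succ_sub_one] at h2 ⊢; omega))
      (fun ν h1 h2 => hr ν h1 (by omega))
    have hsum : ∑ ν ∈ Finset.Ico (k*m+i) (k*(m+1)+i), x (Sum.inl ν)
        = ∑ ν ∈ Finset.Ico (k*m+i) (k*(m+1)+i), y (Sum.inl ν) := by
      refine Finset.sum_congr rfl fun ν hν => ?_
      rw [Finset.mem_Ico] at hν
      exact hl ν (by omega) (by simp only [Nat.succ_sub_one]; omega)
    show max 0 _ = max 0 _
    rw [ih, hsum, hr (m+1) (by omega) (by omega)]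

/-- The running backwards maximum process of server `i`. -/
noncomputable def gProc {Ω : Type*} (k i : ℕ) (a : ℕ → Ω → ℝ) (L : ℕ → ℕ → Ω → ℝ)
    (m : ℕ) (ω : Ω) : ℝ :=
  gPath k i m (fun j => Sum.elim a (L i) j ω)

lemma gProc_zero {Ω : Type*} (k i : ℕ) (a : ℕ → Ω → ℝ) (L : ℕ → ℕ → Ω → ℝ) (ω : Ω) :
    gProc k i a L 0 ω = 0 := rfl

lemma gProc_one {Ω : Type*} (k i : ℕ) (a : ℕ → Ω → ℝ) (L : ℕ → ℕ → Ω → ℝ) (ω : Ω) :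
    gProc k i a L 1 ω = 0 := rfl

lemma gProc_succ {Ω : Type*} (k i : ℕ) (a : ℕ → Ω → ℝ) (L : ℕ → ℕ → Ω → ℝ) (m : ℕ) (ω : Ω) :
    gProc k i a L (m+2) ω = max 0 ((L i (m+1) ω - ∑ ν ∈ Finset.Ico (k*m+i) (k*(m+1)+i), a ν ω)
      + gProc k i a L (m+1) ω) := rfl

lemma gProc_measurable {Ω : Type*} [MeasurableSpace Ω] (k i : ℕ) (a : ℕ → Ω → ℝ)
    (L : ℕ → ℕ → Ω → ℝ) (hameas : ∀ ν, Measurable (a ν)) (hLmeas : ∀ j m, Measurable (L j m))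
    (m : ℕ) : Measurable (gProc k i a L m) := by
  refine (gPath_measurable k i m).comp (measurable_pi_lambda _ ?_)
  rintro (ν | ν)
  · exact hameas ν
  · exact hLmeas i ν

lemma le_gProc {Ω : Type*} (k i : ℕ) (a : ℕ → Ω → ℝ) (L : ℕ → ℕ → Ω → ℝ) :
    ∀ m, 1 ≤ m → ∀ μ', 1 ≤ μ' → μ' ≤ m → ∀ ω,
    (∑ ν ∈ Finset.Icc μ' (m-1), L i ν ω)
      - (∑ ν ∈ Finset.Ico (k*(μ'-1)+i) (k*(m-1)+i), a ν ω) ≤ gProc k i a L m ω := by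
  intro m hm
  induction m with
  | zero => omega
  | succ m ih =>
    rcases Nat.eq_or_lt_of_le hm with h1 | h2
    · -- m + 1 = 1
      intro μ' hμ1 hμ2 ω
      have : μ' = 1 := by omega
      subst this
      have hm0 : m = 0 := by omega
      subst hm0
      simp [gProc_one]
    · -- m ≥ 1
      have hm1 : 1 ≤ m := by omega
      obtain ⟨m', rfl⟩ : ∃ m', m = m' + 1 := ⟨m - 1, by omega⟩
      intro μ' hμ1 hμ2 ω
      rcases Nat.eq_or_lt_of_le hμ2 with heq | hlt
      · subst heq
        simp only [Nat.succ_sub_one]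
        rw [Finset.Icc_eq_empty (by omega), Finset.Ico_eq_empty (by omega)]
        simp only [Finset.sum_empty, sub_zero, gProc_succ]
        exact le_max_left _ _
      · have hμ2' : μ' ≤ m' + 1 := by omega
        have key := ih hm1 μ' hμ1 hμ2' ω
        have h1 : k*(μ'-1)+i ≤ k*m'+i := by
          have := Nat.mul_le_mul (le_refl k) (show μ' - 1 ≤ m' by omega); omega
        have h2 : k*m'+i ≤ k*(m'+1)+i := by
          have := Nat.mul_le_mul (le_refl k) (show m' ≤ m' + 1 by omega); omega
        have hsplit := Finset.sum_Ico_consecutive (fun ν => a ν ω) h1 h2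
        simp only [Nat.succ_sub_one] at key ⊢
        rw [Finset.sum_Icc_succ_top (by omega : μ' ≤ m' + 1), gProc_succ, ← hsplit]
        have hU : (L i (m'+1) ω - ∑ ν ∈ Finset.Ico (k*m'+i) (k*(m'+1)+i), a ν ω)
            + gProc k i a L (m'+1) ω ≤ max 0 ((L i (m'+1) ω
              - ∑ ν ∈ Finset.Ico (k*m'+i) (k*(m'+1)+i), a ν ω) + gProc k i a L (m'+1) ω) :=
          le_max_right _ _
        linarith


lemma U_indep_gProc {Ω : Type*} [MeasurableSpace Ω] (μ : Measure Ω)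
    (k i : ℕ) (hi : 1 ≤ i) (a : ℕ → Ω → ℝ) (L : ℕ → ℕ → Ω → ℝ)
    (hameas : ∀ ν, Measurable (a ν)) (hLmeas : ∀ j m, Measurable (L j m))
    (haiid : iIndepFun a μ)
    (hLiid : iIndepFun (L i) μ)
    (hindep : IndepFun (fun ω (p : ℕ × ℕ) => L p.1 p.2 ω) (fun ω (ν : ℕ) => a ν ω) μ)
    (m c : ℕ) :
    IndepFun (fun ω => L i (m+1) ω - ∑ ν ∈ Finset.Ico (k*m+i) c, a ν ω)
      (gProc k i a L (m+1)) μ := by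
  set blk : Finset ℕ := Finset.Ico (k*m+i) c with hblk
  have hF : iIndepFun (Sum.elim a (L i)) μ := by
    refine iIndepFun_sum_elim hameas (hLmeas i) haiid hLiid ?_
    have hproj : Measurable (fun (x : ℕ × ℕ → ℝ) (ν : ℕ) => x (i, ν)) :=
      measurable_pi_lambda _ fun ν => measurable_pi_apply _
    exact (hindep.comp hproj measurable_id).symm
  have hFmeas : ∀ j, Measurable (Sum.elim a (L i) j) := by
    rintro (ν | ν)
    exacts [hameas ν, hLmeas i ν]
  set S : Finset (ℕ ⊕ ℕ) := blk.disjSum {m+1} with hS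
  set T : Finset (ℕ ⊕ ℕ) := (Finset.Ico 1 (k*m+i)).disjSum (Finset.Ico 1 (m+1)) with hT
  have hST : Disjoint S T := by
    rw [Finset.disjoint_left]
    rintro (ν | ν) h1 h2 <;>
      simp only [hS, hT, hblk, Finset.inl_mem_disjSum, Finset.inr_mem_disjSum,
        Finset.mem_Ico, Finset.mem_singleton] at h1 h2 <;> omega
  have hIF := hF.indepFun_finset S T hST hFmeas
  have hmem1 : Sum.inr (m+1) ∈ S := by simp [hS]
  have hmem2 : ∀ ν ∈ blk, Sum.inl ν ∈ S := fun ν hν => by simp [hS, hν]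
  set φS : (S → ℝ) → ℝ := fun v => v ⟨Sum.inr (m+1), hmem1⟩ -
    ∑ ν ∈ blk.attach, v ⟨Sum.inl ν.1, hmem2 ν.1 ν.2⟩ with hφS
  have hφSmeas : Measurable φS := (measurable_pi_apply _).sub
    (Finset.measurable_sum _ fun ν _ => measurable_pi_apply _)
  have hUeq : (fun ω => L i (m+1) ω - ∑ ν ∈ blk, a ν ω)
      = φS ∘ (fun ω (j : S) => Sum.elim a (L i) j.1 ω) := by
    funext ω
    simp only [hφS, Function.comp_apply, Sum.elim_inr, Sum.elim_inl]
    congr 1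
    exact (Finset.sum_attach blk (fun ν => a ν ω)).symm
  set ψT : (T → ℝ) → ℝ := fun v =>
    gPath k i (m+1) (fun j => if h : j ∈ T then v ⟨j, h⟩ else 0) with hψT
  have hψTmeas : Measurable ψT := by
    refine (gPath_measurable k i (m+1)).comp (measurable_pi_lambda _ fun j => ?_)
    by_cases h : j ∈ T
    · simpa only [dif_pos h] using measurable_pi_apply (⟨j, h⟩ : T)
    · simpa only [dif_neg h] using measurable_const
  have hgeq : gProc k i a L (m+1) = ψT ∘ (fun ω (j : T) => Sum.elim a (L i) j.1 ω) := by
    funext ω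
    simp only [hψT, Function.comp_apply, gProc]
    refine gPath_congr k i hi (m+1) _ _ ?_ ?_
    · intro ν h1 h2
      simp only [Nat.succ_sub_one] at h2
      rw [dif_pos (show Sum.inl ν ∈ T by
        simp only [hT, Finset.inl_mem_disjSum, Finset.mem_Ico]; omega)]
    · intro ν h1 h2
      rw [dif_pos (show Sum.inr ν ∈ T by
        simp only [hT, Finset.inr_mem_disjSum, Finset.mem_Ico]; omega)]
  rw [hUeq, hgeq]
  exact hIF.comp hφSmeas hψTmeas

lemma tail_zero_fun {Ω : Type*} [MeasurableSpace Ω] (μ : Measure Ω) [IsProbabilityMeasure μ]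
    {θ : ℝ} (s : ℝ) (hθ : 0 < θ) : μ {ω : Ω | s < (0:ℝ)} ≤ ENNReal.ofReal (Real.exp (-θ * s)) := by
  by_cases hs : s < 0
  · calc μ _ ≤ 1 := prob_le_one
      _ ≤ ENNReal.ofReal (Real.exp (-θ * s)) := by
          rw [← ENNReal.ofReal_one]
          exact ENNReal.ofReal_le_ofReal (Real.one_le_exp (by nlinarith))
  · have hempty : {ω : Ω | s < (0:ℝ)} = ∅ := by
      ext ω; simp only [Set.mem_setOf_eq, Set.mem_empty_iff_false, iff_false]; linarith
    rw [hempty]; simp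

lemma gProc_tail {Ω : Type*} [MeasurableSpace Ω] (μ : Measure Ω) [IsProbabilityMeasure μ]
    (k i : ℕ) (hi : 1 ≤ i) (hik : i ≤ k)
    (a : ℕ → Ω → ℝ) (L : ℕ → ℕ → Ω → ℝ)
    (hameas : ∀ ν, Measurable (a ν)) (hLmeas : ∀ j m, Measurable (L j m))
    (hanonneg : ∀ ν ω, 0 ≤ a ν ω)
    (haiid : iIndepFun a μ)
    (haid : ∀ ν, 1 ≤ ν → IdentDistrib (a ν) (a 1) μ μ)
    (hLiid : iIndepFun (L i) μ)
    (hLid : ∀ m, 1 ≤ m → IdentDistrib (L i m) (L 1 1) μ μ)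
    (hindep : IndepFun (fun ω (p : ℕ × ℕ) => L p.1 p.2 ω) (fun ω (ν : ℕ) => a ν ω) μ)
    (θ : ℝ) (hθ : 0 < θ)
    (hint : Integrable (fun ω => exp (θ * L 1 1 ω)) μ)
    (hstab : (∫ ω, exp (θ * L 1 1 ω) ∂μ) * (∫ ω, exp (-θ * a 1 ω) ∂μ) ^ k ≤ 1) :
    ∀ m (s : ℝ), μ {ω | s < gProc k i a L m ω} ≤ ENNReal.ofReal (Real.exp (-θ * s))
  | 0, s => by simp only [gProc_zero]; exact tail_zero_fun μ s hθ
  | 1, s => by simp only [gProc_one]; exact tail_zero_fun μ s hθ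
  | (m+2), s => by
    have IH := gProc_tail μ k i hi hik a L hameas hLmeas hanonneg haiid haid hLiid hLid
      hindep θ hθ hint hstab (m+1)
    by_cases hs : 0 ≤ s
    · set blk : Finset ℕ := Finset.Ico (k*m+i) (k*(m+1)+i) with hblk
      set U : Ω → ℝ := fun ω => L i (m+1) ω - ∑ ν ∈ blk, a ν ω with hU
      have hUmeas : Measurable U :=
        (hLmeas i (m+1)).sub (Finset.measurable_sum _ fun ν _ => hameas ν)
      have hgmeas : Measurable (gProc k i a L (m+1)) :=
        gProc_measurable k i a L hameas hLmeas (m+1)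
      have hset : {ω | s < gProc k i a L (m+2) ω}
          = {ω | s < U ω + gProc k i a L (m+1) ω} := by
        ext ω
        simp only [Set.mem_setOf_eq, gProc_succ, lt_max_iff, hU]
        constructor
        · rintro (h | h)
          · linarith
          · exact h
        · exact fun h => Or.inr h
      have hInd : IndepFun U (gProc k i a L (m+1)) μ :=
        U_indep_gProc μ k i hi a L hameas hLmeas haiid hLiid hindep m (k*(m+1)+i)
      rw [hset]
      have hLm1 : IdentDistrib (fun ω => exp (θ * L i (m+1) ω))
          (fun ω => exp (θ * L 1 1 ω)) μ μ :=
        (hLid (m+1) (by omega)).comp (Real.measurable_exp.comp (measurable_id.const_mul θ))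
      have hintL : Integrable (fun ω => exp (θ * L i (m+1) ω)) μ := hLm1.integrable_iff.2 hint
      have hintU : Integrable (fun ω => exp (θ * U ω)) μ := by
        refine hintL.mono' (Real.measurable_exp.comp (hUmeas.const_mul θ)).aestronglyMeasurable
          (Filter.Eventually.of_forall fun ω => ?_)
        rw [Real.norm_eq_abs, abs_of_nonneg (le_of_lt (Real.exp_pos _))]
        apply Real.exp_le_exp.2
        have hnn : 0 ≤ ∑ ν ∈ blk, a ν ω := Finset.sum_nonneg fun ν _ => hanonneg ν ω
        simp only [hU]
        nlinarith
      have ha01 : ∀ ν (ω : Ω), 0 ≤ exp (-θ * a ν ω) ∧ exp (-θ * a ν ω) ≤ 1 := fun ν ω =>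
        ⟨le_of_lt (Real.exp_pos _), Real.exp_le_one_iff.2 (by nlinarith [hanonneg ν ω])⟩
      have hprodmeas : Measurable (fun ω => ∏ ν ∈ blk, exp (-θ * a ν ω)) :=
        Finset.measurable_prod _ fun ν _ => Real.measurable_exp.comp ((hameas ν).const_mul (-θ))
      have hprodint : Integrable (fun ω => ∏ ν ∈ blk, exp (-θ * a ν ω)) μ :=
        aux_integrable_of_le_one hprodmeas
          (fun ω => Finset.prod_nonneg fun ν _ => (ha01 ν ω).1)
          (fun ω => Finset.prod_le_one (fun ν _ => (ha01 ν ω).1) (fun ν _ => (ha01 ν ω).2))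
      have hexpand : ∀ ω, exp (θ * U ω)
          = exp (θ * L i (m+1) ω) * ∏ ν ∈ blk, exp (-θ * a ν ω) := by
        intro ω
        rw [← Real.exp_sum, ← Real.exp_add]
        congr 1
        simp only [hU]
        rw [show ∑ ν ∈ blk, -θ * a ν ω = -θ * ∑ ν ∈ blk, a ν ω from (Finset.mul_sum _ _ _).symm]
        ring
      have hindLa : IndepFun (fun ω => exp (θ * L i (m+1) ω))
          (fun ω => ∏ ν ∈ blk, exp (-θ * a ν ω)) μ := by
        have hφ : Measurable (fun x : ℕ × ℕ → ℝ => exp (θ * x (i, m+1))) :=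
          by fun_prop
        have hψ : Measurable (fun x : ℕ → ℝ => ∏ ν ∈ blk, exp (-θ * x ν)) :=
          Finset.measurable_prod _ fun ν _ =>
            by fun_prop
        exact hindep.comp hφ hψ
      have hmgf : ∫ ω, exp (θ * U ω) ∂μ
          = (∫ ω, exp (θ * L 1 1 ω) ∂μ) * (∫ ω, exp (-θ * a 1 ω) ∂μ) ^ k := by
        calc ∫ ω, exp (θ * U ω) ∂μ
            = ∫ ω, exp (θ * L i (m+1) ω) * ∏ ν ∈ blk, exp (-θ * a ν ω) ∂μ := by
              simp_rw [hexpand]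
          _ = (∫ ω, exp (θ * L i (m+1) ω) ∂μ) * ∫ ω, ∏ ν ∈ blk, exp (-θ * a ν ω) ∂μ := by
              have h := hindLa.integral_mul_eq_mul_integral hintL.aestronglyMeasurable hprodint.aestronglyMeasurable
              simpa [Pi.mul_apply] using h
          _ = _ := by
              rw [hLm1.integral_eq]
              congr 1
              rw [integral_prod_of_iIndep (f := fun ν ω => exp (-θ * a ν ω))
                (fun ν => Real.measurable_exp.comp ((hameas ν).const_mul (-θ)))
                (fun ν ω => (ha01 ν ω).1) (fun ν ω => (ha01 ν ω).2)
                (show iIndepFun (fun ν ω => exp (-θ * a ν ω)) μ from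
                  haiid.comp (fun ν x => exp (-θ * x))
                    (fun ν => Real.measurable_exp.comp (measurable_id.const_mul (-θ)))) blk]
              have hone : ∀ ν ∈ blk, (∫ ω, exp (-θ * a ν ω) ∂μ) = ∫ ω, exp (-θ * a 1 ω) ∂μ := by
                intro ν hν
                have hid : IdentDistrib (fun ω => exp (-θ * a ν ω))
                    (fun ω => exp (-θ * a 1 ω)) μ μ :=
                  (haid ν (by rw [hblk, Finset.mem_Ico] at hν; omega)).comp
                    (Real.measurable_exp.comp (measurable_id.const_mul (-θ)))
                exact hid.integral_eq
              rw [Finset.prod_congr rfl hone, Finset.prod_const]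
              congr 1
              rw [hblk, Nat.card_Ico, Nat.mul_succ]
              omega
      calc μ {ω | s < U ω + gProc k i a L (m+1) ω}
          ≤ ENNReal.ofReal (exp (-θ * s)) * ∫⁻ ω, ENNReal.ofReal (exp (θ * U ω)) ∂μ :=
            tail_add_indep hUmeas hgmeas hInd θ IH s
        _ ≤ ENNReal.ofReal (exp (-θ * s)) * 1 := by
            refine mul_le_mul_right ?_ _
            rw [← ofReal_integral_eq_lintegral_ofReal hintU
              (Filter.Eventually.of_forall fun ω => le_of_lt (Real.exp_pos _))]
            rw [hmgf]
            exact ENNReal.ofReal_le_one.2 hstab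
        _ = ENNReal.ofReal (exp (-θ * s)) := mul_one _
    · calc μ {ω | s < gProc k i a L (m+2) ω} ≤ 1 := prob_le_one
        _ ≤ ENNReal.ofReal (exp (-θ * s)) := by
            rw [← ENNReal.ofReal_one]
            exact ENNReal.ofReal_le_ofReal (Real.one_le_exp (by nlinarith))

lemma cumArr_eq_Ico {Ω : Type*} (a : ℕ → Ω → ℝ) (n : ℕ) (ω : Ω) :
    cumArr a n ω = ∑ ν ∈ Finset.Ico 1 n, a ν ω := by
  cases n with
  | zero => simp [cumArr]
  | succ n => rw [cumArr, Nat.succ_sub_one, Finset.Ico_add_one_right_eq_Icc]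

/-- **Sojourn time bound for a multi-server system with deterministic (round-robin)
thinning and resequencing.**  With i.i.d. inter-arrival times `a`, i.i.d. job service times
at each of the `k` servers distributed as `L 1 1` and independent of the arrivals, and
`θ > 0` satisfying `E[exp (θ L 1 1)] · (E[exp (-θ a 1)])^k ≤ 1`, the resequenced sojourn
time `T n = D n - A n` satisfies `P[T n > τ] ≤ k · E[exp (θ L 1 1)] · exp (-θ τ)`. -/
theorem thinning_resequencing_sojourn_bound
    {Ω : Type*} [MeasurableSpace Ω] (μ : Measure Ω) [IsProbabilityMeasure μ]
    (k : ℕ) (hk : 1 ≤ k)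
    (a : ℕ → Ω → ℝ) (L : ℕ → ℕ → Ω → ℝ)
    (hameas : ∀ ν, Measurable (a ν)) (hLmeas : ∀ i m, Measurable (L i m))
    (hanonneg : ∀ ν ω, 0 ≤ a ν ω) (hLnonneg : ∀ i m ω, 0 ≤ L i m ω)
    (haiid : iIndepFun a μ)
    (haid : ∀ ν, 1 ≤ ν → IdentDistrib (a ν) (a 1) μ μ)
    (hLiid : ∀ i, 1 ≤ i → i ≤ k → iIndepFun (L i) μ)
    (hLid : ∀ i, 1 ≤ i → i ≤ k → ∀ m, 1 ≤ m → IdentDistrib (L i m) (L 1 1) μ μ)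
    (hindep : IndepFun (fun ω (p : ℕ × ℕ) => L p.1 p.2 ω) (fun ω (ν : ℕ) => a ν ω) μ)
    (θ : ℝ) (hθ : 0 < θ)
    (hint : Integrable (fun ω => exp (θ * L 1 1 ω)) μ)
    (hstab : (∫ ω, exp (θ * L 1 1 ω) ∂μ) * (∫ ω, exp (-θ * a 1 ω) ∂μ) ^ k ≤ 1) :
    ∀ n : ℕ, 1 ≤ n → ∀ τ : ℝ, 0 ≤ τ →
      μ {ω | τ < reseqDep k a L n ω - cumArr a n ω}
        ≤ ENNReal.ofReal ((k : ℝ) * (∫ ω, exp (θ * L 1 1 ω) ∂μ) * exp (-θ * τ)) := by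
  intro n hn τ hτ
  have hmL0 : 0 ≤ ∫ ω, exp (θ * L 1 1 ω) ∂μ :=
    integral_nonneg fun ω => le_of_lt (Real.exp_pos _)
  have hA0 : ∀ m ω, 0 ≤ cumArr a m ω := fun m ω =>
    Finset.sum_nonneg fun ν _ => hanonneg ν ω
  -- per-server bound
  have hserver : ∀ i ∈ Finset.Icc 1 k,
      μ {ω | τ < thinServerDep k i a L ((n + k - i) / k) ω - cumArr a n ω}
        ≤ ENNReal.ofReal ((∫ ω, exp (θ * L 1 1 ω) ∂μ) * exp (-θ * τ)) := by
    intro i hik'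
    rw [Finset.mem_Icc] at hik'
    obtain ⟨hi, hik⟩ := hik'
    rcases Nat.eq_zero_or_pos ((n + k - i) / k) with hY0 | hY1
    · -- empty server: no jobs yet
      have hempty : {ω | τ < thinServerDep k i a L ((n + k - i) / k) ω - cumArr a n ω} = ∅ := by
        ext ω
        simp only [Set.mem_setOf_eq, Set.mem_empty_iff_false, iff_false, not_lt]
        have hD : thinServerDep k i a L ((n + k - i) / k) ω ≤ 0 := by
          rw [hY0]
          refine Real.iSup_le (fun μ' => Real.iSup_le (fun h => ?_) le_rfl) le_rfl
          exact absurd (Finset.mem_Icc.1 h) (by omega)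
        have := hA0 n ω
        linarith
      rw [hempty]
      simp
    · -- at least one job
      obtain ⟨Y', hYe⟩ : ∃ Y', (n + k - i) / k = Y' + 1 :=
        ⟨(n + k - i) / k - 1, by omega⟩
      have hXY : k * Y' + i ≤ n := by
        have h1 : (n + k - i) / k * k ≤ n + k - i := Nat.div_mul_le_self _ _
        rw [hYe] at h1
        have h2 : (Y' + 1) * k = Y' * k + k := by ring
        have h3 : Y' * k = k * Y' := Nat.mul_comm _ _
        omega
      set Z : Ω → ℝ := fun ω => L i (Y'+1) ω - ∑ ν ∈ Finset.Ico (k*Y'+i) n, a ν ω with hZ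
      have hZmeas : Measurable Z :=
        (hLmeas i (Y'+1)).sub (Finset.measurable_sum _ fun ν _ => hameas ν)
      have hgmeas : Measurable (gProc k i a L (Y'+1)) :=
        gProc_measurable k i a L hameas hLmeas (Y'+1)
      -- event inclusion
      have hincl : {ω | τ < thinServerDep k i a L ((n + k - i) / k) ω - cumArr a n ω}
          ⊆ {ω | τ < Z ω + gProc k i a L (Y'+1) ω} := by
        intro ω hω
        simp only [Set.mem_setOf_eq] at hω ⊢
        by_contra hcon
        rw [not_lt] at hcon
        have hB0 : (0:ℝ) ≤ τ + cumArr a n ω := by have := hA0 n ω; linarith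
        have hsup : thinServerDep k i a L ((n + k - i) / k) ω ≤ τ + cumArr a n ω := by
          rw [hYe]
          refine Real.iSup_le (fun μ' => Real.iSup_le (fun hμ' => ?_) hB0) hB0
          rw [Finset.mem_Icc] at hμ'
          obtain ⟨hμ1, hμ2⟩ := hμ'
          -- arithmetic facts
          have hXμ : k * (μ' - 1) + i ≤ k * Y' + i := by
            have := Nat.mul_le_mul (le_refl k) (show μ' - 1 ≤ Y' by omega); omega
          have hXμn : k * (μ' - 1) + i ≤ n := le_trans hXμ hXY
          have h1X : 1 ≤ k * (μ' - 1) + i := by omega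
          -- split the arrival sum
          have hAsplit : (∑ ν ∈ Finset.Ico 1 (k*(μ'-1)+i), a ν ω)
              + ∑ ν ∈ Finset.Ico (k*(μ'-1)+i) n, a ν ω = ∑ ν ∈ Finset.Ico 1 n, a ν ω :=
            Finset.sum_Ico_consecutive _ h1X hXμn
          have hasplit2 : (∑ ν ∈ Finset.Ico (k*(μ'-1)+i) (k*Y'+i), a ν ω)
              + ∑ ν ∈ Finset.Ico (k*Y'+i) n, a ν ω = ∑ ν ∈ Finset.Ico (k*(μ'-1)+i) n, a ν ω :=
            Finset.sum_Ico_consecutive _ hXμ hXY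
          have hLsplit : ∑ ν ∈ Finset.Icc μ' (Y'+1), L i ν ω
              = (∑ ν ∈ Finset.Icc μ' Y', L i ν ω) + L i (Y'+1) ω :=
            Finset.sum_Icc_succ_top (by omega) _
          have hdom := le_gProc k i a L (Y'+1) (by omega) μ' hμ1 hμ2 ω
          simp only [Nat.succ_sub_one] at hdom
          rw [cumArr_eq_Ico, cumArr_eq_Ico, hLsplit]
          simp only [hZ] at hcon
          linarith
        linarith
      calc μ {ω | τ < thinServerDep k i a L ((n + k - i) / k) ω - cumArr a n ω}
          ≤ μ {ω | τ < Z ω + gProc k i a L (Y'+1) ω} := measure_mono hincl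
        _ ≤ ENNReal.ofReal (exp (-θ * τ)) * ∫⁻ ω, ENNReal.ofReal (exp (θ * Z ω)) ∂μ := by
            refine tail_add_indep hZmeas hgmeas ?_ θ ?_ τ
            · exact U_indep_gProc μ k i hi a L hameas hLmeas haiid (hLiid i hi hik) hindep Y' n
            · exact fun t => gProc_tail μ k i hi hik a L hameas hLmeas hanonneg haiid haid
                (hLiid i hi hik) (fun m hm => hLid i hi hik m hm) hindep θ hθ hint hstab (Y'+1) t
        _ ≤ ENNReal.ofReal (exp (-θ * τ)) * ENNReal.ofReal (∫ ω, exp (θ * L 1 1 ω) ∂μ) := by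
            refine mul_le_mul_right ?_ _
            have hidY : IdentDistrib (fun ω => exp (θ * L i (Y'+1) ω))
                (fun ω => exp (θ * L 1 1 ω)) μ μ :=
              (hLid i hi hik (Y'+1) (by omega)).comp
                (Real.measurable_exp.comp (measurable_id.const_mul θ))
            have hintLY : Integrable (fun ω => exp (θ * L i (Y'+1) ω)) μ :=
              hidY.integrable_iff.2 hint
            calc ∫⁻ ω, ENNReal.ofReal (exp (θ * Z ω)) ∂μ
                ≤ ∫⁻ ω, ENNReal.ofReal (exp (θ * L i (Y'+1) ω)) ∂μ := by
                  refine lintegral_mono fun ω => ENNReal.ofReal_le_ofReal (Real.exp_le_exp.2 ?_)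
                  have hnn : 0 ≤ ∑ ν ∈ Finset.Ico (k*Y'+i) n, a ν ω :=
                    Finset.sum_nonneg fun ν _ => hanonneg ν ω
                  simp only [hZ]
                  nlinarith
              _ = ENNReal.ofReal (∫ ω, exp (θ * L i (Y'+1) ω) ∂μ) :=
                  (ofReal_integral_eq_lintegral_ofReal hintLY
                    (Filter.Eventually.of_forall fun ω => le_of_lt (Real.exp_pos _))).symm
              _ = ENNReal.ofReal (∫ ω, exp (θ * L 1 1 ω) ∂μ) := by rw [hidY.integral_eq]
        _ = ENNReal.ofReal ((∫ ω, exp (θ * L 1 1 ω) ∂μ) * exp (-θ * τ)) := by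
            rw [← ENNReal.ofReal_mul (le_of_lt (Real.exp_pos _)), mul_comm]
  -- union bound
  have hsub : {ω | τ < reseqDep k a L n ω - cumArr a n ω}
      ⊆ ⋃ i ∈ Finset.Icc 1 k,
          {ω | τ < thinServerDep k i a L ((n + k - i) / k) ω - cumArr a n ω} := by
    intro ω hω
    simp only [Set.mem_setOf_eq] at hω
    by_contra hcon
    simp only [Set.mem_iUnion, Set.mem_setOf_eq, not_exists, not_lt] at hcon
    have hB0 : (0:ℝ) ≤ τ + cumArr a n ω := by have := hA0 n ω; linarith
    have hsup : reseqDep k a L n ω ≤ τ + cumArr a n ω := by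
      refine Real.iSup_le (fun i => Real.iSup_le (fun hi => ?_) hB0) hB0
      have := hcon i hi
      linarith
    linarith
  calc μ {ω | τ < reseqDep k a L n ω - cumArr a n ω}
      ≤ μ (⋃ i ∈ Finset.Icc 1 k,
          {ω | τ < thinServerDep k i a L ((n + k - i) / k) ω - cumArr a n ω}) :=
        measure_mono hsub
    _ ≤ ∑ i ∈ Finset.Icc 1 k,
          μ {ω | τ < thinServerDep k i a L ((n + k - i) / k) ω - cumArr a n ω} :=
        measure_biUnion_finset_le _ _
    _ ≤ ∑ _i ∈ Finset.Icc 1 k,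
          ENNReal.ofReal ((∫ ω, exp (θ * L 1 1 ω) ∂μ) * exp (-θ * τ)) :=
        Finset.sum_le_sum hserver
    _ = k * ENNReal.ofReal ((∫ ω, exp (θ * L 1 1 ω) ∂μ) * exp (-θ * τ)) := by
        rw [Finset.sum_const, Nat.card_Icc]
        simp [nsmul_eq_mul]
    _ = ENNReal.ofReal ((k : ℝ) * (∫ ω, exp (θ * L 1 1 ω) ∂μ) * exp (-θ * τ)) := by
        rw [ENNReal.ofReal_mul (mul_nonneg (Nat.cast_nonneg k) hmL0),
          ENNReal.ofReal_mul (Nat.cast_nonneg k), ENNReal.ofReal_natCast,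
          ENNReal.ofReal_mul hmL0]
        ring
end

section
/- Let A : ℕ → ℝ be a nondecreasing sequence of arrival times with A(0) = 0, L(n) ≥ 0 job service times, and Z(n) ≥ 0 auxiliary times for n ≥ 1. Define the single-queue multi-server start-of-service times by V(1) = A(1) and V(n) = max{ A(n), V(n−1) + Z(n−1) } for n ≥ 2, and departures D(n) = V(n) + L(n). Then for all n ≥ 1, V(n) = max_{m ∈ [1,n]} { A(m) + Σ_{ν=m}^{n−1} Z(ν) } and D(n) = max_{m ∈ [1,n]} { A(m) + S(m,n) } with S(m,n) = L(n) + Σ_{ν=m}^{n−1} Z(ν); that is, the single-queue multi-server system is an exact S(m,n) server. Moreover, if the values Z(n) are replaced by pointwise larger nonnegative values Z'(n) ≥ Z(n), the resulting S'(m,n) satisfies D(n) ≤ max_{m ∈ [1,n]} { A(m) + S'(m,n) }, i.e. the system is an S'(m,n) server. -/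
private lemma sup'_add_const (s : Finset ℕ) (h : s.Nonempty) (f : ℕ → ℝ) (c : ℝ) :
    s.sup' h (fun m => f m + c) = s.sup' h f + c := by
  apply le_antisymm
  · exact Finset.sup'_le _ _ fun b hb => add_le_add_left (Finset.le_sup' f hb) c
  · have : s.sup' h f ≤ s.sup' h (fun m => f m + c) - c :=
      Finset.sup'_le _ _ fun b hb => le_sub_iff_add_le.mpr (Finset.le_sup' (fun m => f m + c) hb)
    linarith

/-- **A single-queue multi-server system is an exact max-plus server.** -/
theorem single_queue_multiserver_maxplus_server
    (A L Z V D : ℕ → ℝ)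
    (hA0 : A 0 = 0) (hAmono : Monotone A) (hL : ∀ n, 0 ≤ L n) (hZ : ∀ n, 0 ≤ Z n)
    (hV1 : V 1 = A 1)
    (hVrec : ∀ n, 2 ≤ n → V n = max (A n) (V (n - 1) + Z (n - 1)))
    (hD : ∀ n, D n = V n + L n) :
    (∀ n, ∀ hn : 1 ≤ n,
      V n = (Finset.Icc 1 n).sup' (Finset.nonempty_Icc.mpr hn)
              (fun m => A m + ∑ ν ∈ Finset.Icc m (n - 1), Z ν) ∧
      D n = (Finset.Icc 1 n).sup' (Finset.nonempty_Icc.mpr hn)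
              (fun m => A m + (L n + ∑ ν ∈ Finset.Icc m (n - 1), Z ν))) ∧
    (∀ Z' : ℕ → ℝ, (∀ n, Z n ≤ Z' n) → ∀ n, ∀ hn : 1 ≤ n,
      D n ≤ (Finset.Icc 1 n).sup' (Finset.nonempty_Icc.mpr hn)
              (fun m => A m + (L n + ∑ ν ∈ Finset.Icc m (n - 1), Z' ν))) := by
  have key : ∀ k : ℕ, V (k+1) = (Finset.Icc 1 (k+1)).sup'
      (Finset.nonempty_Icc.mpr (by omega))
      (fun m => A m + ∑ ν ∈ Finset.Icc m k, Z ν) := by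
    intro k
    induction k with
    | zero => simp [hV1]
    | succ k ih =>
      have hrec := hVrec (k+2) (by omega)
      have h21 : k + 2 - 1 = k + 1 := rfl
      rw [h21] at hrec
      have hne1 : (Finset.Icc 1 (k+1)).Nonempty := Finset.nonempty_Icc.mpr (by omega)
      have hsplit : ∀ m ∈ Finset.Icc 1 (k+1),
          A m + ∑ ν ∈ Finset.Icc m (k+1), Z ν
            = (A m + ∑ ν ∈ Finset.Icc m k, Z ν) + Z (k+1) := by
        intro m hm
        rw [Finset.sum_Icc_succ_top (Finset.mem_Icc.mp hm).2 Z]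
        ring
      have hins : Finset.Icc 1 (k+2) = insert (k+2) (Finset.Icc 1 (k+1)) := by
        ext x; simp only [Finset.mem_Icc, Finset.mem_insert]; omega
      have hrhs : (Finset.Icc 1 (k+2)).sup' (Finset.nonempty_Icc.mpr (by omega))
          (fun m => A m + ∑ ν ∈ Finset.Icc m (k+1), Z ν)
          = (A (k+2) + ∑ ν ∈ Finset.Icc (k+2) (k+1), Z ν) ⊔
            (Finset.Icc 1 (k+1)).sup' hne1 (fun m => A m + ∑ ν ∈ Finset.Icc m (k+1), Z ν) := by
        rw [Finset.sup'_congr _ hins (fun x _ => rfl), Finset.sup'_insert]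
      rw [hrec, ih, hrhs, Finset.sup'_congr hne1 rfl hsplit, sup'_add_const,
        show Finset.Icc (k+2) (k+1) = ∅ from Finset.Icc_eq_empty (by omega),
        Finset.sum_empty, add_zero]
  have keyV : ∀ n, ∀ hn : 1 ≤ n,
      V n = (Finset.Icc 1 n).sup' (Finset.nonempty_Icc.mpr hn)
              (fun m => A m + ∑ ν ∈ Finset.Icc m (n - 1), Z ν) := by
    intro n hn
    obtain ⟨k, rfl⟩ : ∃ k, n = k + 1 := ⟨n - 1, by omega⟩
    simpa using key k
  have keyD : ∀ n, ∀ hn : 1 ≤ n,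
      D n = (Finset.Icc 1 n).sup' (Finset.nonempty_Icc.mpr hn)
              (fun m => A m + (L n + ∑ ν ∈ Finset.Icc m (n - 1), Z ν)) := by
    intro n hn
    rw [hD n, keyV n hn, ← sup'_add_const]
    exact Finset.sup'_congr _ rfl (fun x _ => by ring)
  refine ⟨fun n hn => ⟨keyV n hn, keyD n hn⟩, fun Z' hZ' n hn => ?_⟩
  rw [keyD n hn]
  apply Finset.sup'_le
  intro m hm
  refine le_trans ?_ (Finset.le_sup'
    (fun m => A m + (L n + ∑ ν ∈ Finset.Icc m (n - 1), Z' ν)) hm)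
  have : ∑ ν ∈ Finset.Icc m (n - 1), Z ν ≤ ∑ ν ∈ Finset.Icc m (n - 1), Z' ν :=
    Finset.sum_le_sum fun i _ => hZ' i
  linarith
end

section
/- Consider a single-queue multi-server system with k servers, GI arrivals and exponential service: let (a(ν))_{ν ≥ 1} be i.i.d. nonnegative inter-arrival times with A(m,n) = Σ_{ν=m}^{n−1} a(ν); let (Z(ν))_{ν ≥ 1} be i.i.d. exponential random variables with rate kμ, independent of the arrivals, and define the waiting time bound process W(n) = max_{m ∈ [1,n]} { Σ_{ν=m}^{n−1} Z(ν) − A(m,n) } (the term m = n is 0, so W(n) ≥ 0); let L(n) be exponential with rate μ, independent of W(n), and T(n) = W(n) + L(n). Fix θ with 0 < θ < kμ, θ ≠ μ, such that E[exp(θ Z(1))] · E[exp(−θ a(1))] ≤ 1, i.e. (kμ/(kμ−θ)) · E[exp(−θ a(1))] ≤ 1. Then for all n ≥ 1 and τ ≥ 0: P[W(n) > τ] ≤ exp(−θτ), and P[T(n) > τ] ≤ (μ/(μ−θ)) · (exp(−θτ) − exp(−μτ)) + exp(−μτ). -/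
open MeasureTheory ProbabilityTheory Real

/-- Waiting time process of the single-queue multi-server system:
`W n = max_{m ∈ [1,n]} (∑_{ν=m}^{n-1} Z ν - ∑_{ν=m}^{n-1} a ν)`; the term `m = n` is `0`,
so `W n ≥ 0` and the real-valued `⨆` (empty supremum `0`) realizes this maximum. -/
noncomputable def sqWait {Ω : Type*} (Z a : ℕ → Ω → ℝ) (n : ℕ) (ω : Ω) : ℝ :=
  ⨆ m ∈ Finset.Icc 1 n,
    ((∑ ν ∈ Finset.Icc m (n - 1), Z ν ω) - ∑ ν ∈ Finset.Icc m (n - 1), a ν ω)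

open scoped ENNReal NNReal

lemma real_biSup_finset_eq (s : Finset ℕ) (hs : s.Nonempty) (f : ℕ → ℝ) :
    (⨆ m ∈ s, f m) = max (s.sup' hs f) 0 := by
  have hfun : ∀ m : ℕ, (⨆ _ : m ∈ s, f m) = if m ∈ s then f m else 0 := by
    intro m
    by_cases h : m ∈ s
    · rw [if_pos h, ciSup_pos h]
    · haveI : IsEmpty (m ∈ s) := ⟨h⟩
      rw [if_neg h, Real.iSup_of_isEmpty]
  rw [iSup_congr hfun]
  obtain ⟨m₀, hm₀⟩ := Infinite.exists_notMem_finset s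
  have hb : BddAbove (Set.range fun m => if m ∈ s then f m else 0) := by
    apply Set.Finite.bddAbove
    apply Set.Finite.subset ((s.image f).finite_toSet.insert 0)
    rintro x ⟨m, rfl⟩
    by_cases h : m ∈ s
    · simp only [if_pos h]
      exact Set.mem_insert_of_mem _ (Finset.mem_coe.mpr (Finset.mem_image_of_mem f h))
    · simp only [if_neg h]
      exact Set.mem_insert _ _
  apply le_antisymm
  · refine ciSup_le fun m => ?_
    by_cases h : m ∈ s
    · rw [if_pos h]; exact le_max_of_le_left (Finset.le_sup' f h)
    · rw [if_neg h]; exact le_max_right _ _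
  · refine max_le ?_ ?_
    · refine Finset.sup'_le _ _ fun m hm => ?_
      have h := le_ciSup hb m
      rwa [if_pos hm] at h
    · have h := le_ciSup hb m₀
      rwa [if_neg hm₀] at h

lemma sqWait_eq_sup' {Ω : Type*} (Z a : ℕ → Ω → ℝ) {n : ℕ} (hn : 1 ≤ n) (ω : Ω) :
    sqWait Z a n ω = (Finset.Icc 1 n).sup' (Finset.nonempty_Icc.mpr hn)
      (fun m => (∑ ν ∈ Finset.Icc m (n - 1), Z ν ω) - ∑ ν ∈ Finset.Icc m (n - 1), a ν ω) := by
  rw [sqWait, real_biSup_finset_eq]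
  apply max_eq_left
  refine Finset.le_sup'_of_le _ (Finset.mem_Icc.mpr ⟨hn, le_rfl⟩) ?_
  rw [Finset.Icc_eq_empty (by omega : ¬ n ≤ n - 1)]
  simp

lemma sqWait_zero {Ω : Type*} (Z a : ℕ → Ω → ℝ) (ω : Ω) : sqWait Z a 0 ω = 0 := by
  rw [sqWait, Finset.Icc_eq_empty (by omega : ¬ (1:ℕ) ≤ 0)]
  have : ∀ m : ℕ, (⨆ _ : m ∈ (∅ : Finset ℕ),
      ((∑ ν ∈ Finset.Icc m (0 - 1), Z ν ω) - ∑ ν ∈ Finset.Icc m (0 - 1), a ν ω)) = 0 := by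
    intro m
    haveI : IsEmpty (m ∈ (∅ : Finset ℕ)) := ⟨fun h => by simp at h⟩
    exact Real.iSup_of_isEmpty _
  rw [iSup_congr this]
  exact Real.iSup_const_zero

lemma sqWait_one {Ω : Type*} (Z a : ℕ → Ω → ℝ) (ω : Ω) : sqWait Z a 1 ω = 0 := by
  rw [sqWait_eq_sup' Z a le_rfl ω]
  simp

lemma sqWait_nonneg {Ω : Type*} (Z a : ℕ → Ω → ℝ) {n : ℕ} (hn : 1 ≤ n) (ω : Ω) :
    0 ≤ sqWait Z a n ω := by
  rw [sqWait_eq_sup' Z a hn ω]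
  refine Finset.le_sup'_of_le _ (Finset.mem_Icc.mpr ⟨hn, le_rfl⟩) ?_
  rw [Finset.Icc_eq_empty (by omega : ¬ n ≤ n - 1)]
  simp

lemma sqWait_succ {Ω : Type*} (Z a : ℕ → Ω → ℝ) {n : ℕ} (hn : 1 ≤ n) (ω : Ω) :
    sqWait Z a (n + 1) ω = max (sqWait Z a n ω + (Z n ω - a n ω)) 0 := by
  obtain ⟨p, rfl⟩ : ∃ p, n = p + 1 := ⟨n - 1, by omega⟩
  have h2 : (1:ℕ) ≤ p + 2 := by omega
  rw [sqWait_eq_sup' Z a h2 ω, sqWait_eq_sup' Z a hn ω]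
  have hins : Finset.Icc 1 (p + 2) = insert (p + 2) (Finset.Icc 1 (p + 1)) :=
    (Finset.insert_Icc_right_eq_Icc_add_one (by omega)).symm
  have hne : (Finset.Icc 1 (p+1)).Nonempty := ⟨p+1, Finset.mem_Icc.mpr ⟨by omega, le_rfl⟩⟩
  rw [Finset.sup'_congr _ hins (fun m _ => rfl)]
  rw [Finset.sup'_insert (H := hne)]
  have htop : (∑ ν ∈ Finset.Icc (p+2) (p + 2 - 1), Z ν ω)
      - ∑ ν ∈ Finset.Icc (p+2) (p + 2 - 1), a ν ω = 0 := by
    rw [Finset.Icc_eq_empty (by omega : ¬ p + 2 ≤ p + 2 - 1)]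
    simp
  have hstep : ∀ m ∈ Finset.Icc 1 (p+1),
      (∑ ν ∈ Finset.Icc m (p + 2 - 1), Z ν ω) - ∑ ν ∈ Finset.Icc m (p + 2 - 1), a ν ω
        = ((∑ ν ∈ Finset.Icc m (p + 1 - 1), Z ν ω) - ∑ ν ∈ Finset.Icc m (p + 1 - 1), a ν ω)
          + (Z (p+1) ω - a (p+1) ω) := by
    intro m hm
    have hm' : m ≤ p + 1 := (Finset.mem_Icc.mp hm).2
    have e1 : (p + 2 - 1 : ℕ) = p + 1 := by omega
    have e2 : (p + 1 - 1 : ℕ) = p := by omega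
    rw [e1, e2, Finset.sum_Icc_succ_top hm', Finset.sum_Icc_succ_top hm']
    ring
  rw [Finset.sup'_congr hne rfl hstep, ← Finset.sup'_add]
  rw [htop, sup_comm, max_comm _ (0:ℝ)]

lemma sqWait_measurable {Ω' : Type*} [MeasurableSpace Ω'] {Z a : ℕ → Ω' → ℝ}
    (hZ : ∀ ν, Measurable (Z ν)) (ha : ∀ ν, Measurable (a ν)) :
    ∀ n, Measurable (sqWait Z a n) := by
  intro n
  induction n with
  | zero =>
    have h : sqWait Z a 0 = fun _ => 0 := funext fun ω => sqWait_zero Z a ω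
    rw [h]; exact measurable_const
  | succ p ih =>
    rcases Nat.eq_zero_or_pos p with hp | hp
    · subst hp
      have h : sqWait Z a 1 = fun _ => 0 := funext fun ω => sqWait_one Z a ω
      rw [h]; exact measurable_const
    · have h : sqWait Z a (p + 1)
          = fun ω => max (sqWait Z a p ω + (Z p ω - a p ω)) 0 :=
        funext fun ω => sqWait_succ Z a hp ω
      rw [h]
      exact (ih.add ((hZ p).sub (ha p))).max measurable_const

lemma sqWait_congr {Ω₁ Ω₂ : Type*} {Z a : ℕ → Ω₁ → ℝ} {Z' a' : ℕ → Ω₂ → ℝ} {n : ℕ}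
    {ω₁ : Ω₁} {ω₂ : Ω₂}
    (hZ : ∀ ν, 1 ≤ ν → ν ≤ n - 1 → Z ν ω₁ = Z' ν ω₂)
    (ha : ∀ ν, 1 ≤ ν → ν ≤ n - 1 → a ν ω₁ = a' ν ω₂) :
    sqWait Z a n ω₁ = sqWait Z' a' n ω₂ := by
  rw [sqWait, sqWait]
  refine iSup_congr fun m => iSup_congr fun hm => ?_
  have h1 : 1 ≤ m := (Finset.mem_Icc.mp hm).1
  congr 1
  · refine Finset.sum_congr rfl fun ν hν => ?_
    have := Finset.mem_Icc.mp hν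
    exact hZ ν (le_trans h1 this.1) this.2
  · refine Finset.sum_congr rfl fun ν hν => ?_
    have := Finset.mem_Icc.mp hν
    exact ha ν (le_trans h1 this.1) this.2

lemma integral_exp_neg_mul_Ioi {c : ℝ} (hc : 0 < c) (b : ℝ) :
    ∫ x in Set.Ioi b, exp (-c * x) = exp (-c * b) / c := by
  have hd : ∀ x ∈ Set.Ici b, HasDerivAt (fun y => -exp (-c * y) / c) (exp (-c * x)) x := by
    intro x _
    have h := (((hasDerivAt_id x).const_mul (-c)).exp).neg.div_const c
    refine h.congr_deriv ?_
    field_simp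
    rfl
  have ht : Filter.Tendsto (fun y => -exp (-c * y) / c) Filter.atTop (nhds 0) := by
    have h1 : Filter.Tendsto (fun y : ℝ => exp (-c * y)) Filter.atTop (nhds 0) :=
      Real.tendsto_exp_atBot.comp (Filter.tendsto_id.const_mul_atTop_of_neg (by linarith))
    have := (h1.neg).div_const c
    simpa using this
  have h := integral_Ioi_of_hasDerivAt_of_tendsto' hd (exp_neg_integrableOn_Ioi b hc) ht
  rw [h]; ring

lemma integral_exp_mul_Ioc {c : ℝ} (hc : c ≠ 0) {t : ℝ} (ht : 0 ≤ t) :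
    ∫ x in Set.Ioc 0 t, exp (c * x) = (exp (c * t) - 1) / c := by
  rw [← intervalIntegral.integral_of_le ht]
  have hd : ∀ x ∈ Set.uIcc (0:ℝ) t, HasDerivAt (fun y => exp (c * y) / c) (exp (c * x)) x := by
    intro x _
    have h := (((hasDerivAt_id x).const_mul c).exp).div_const c
    refine h.congr_deriv ?_
    field_simp
    rfl
  rw [intervalIntegral.integral_eq_sub_of_hasDerivAt hd
    ((continuous_exp.comp (continuous_const.mul continuous_id)).intervalIntegrable 0 t)]
  simp [exp_zero]
  ring

lemma tail_step {Ω : Type*} [MeasurableSpace Ω] (P : Measure Ω) [IsProbabilityMeasure P]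
    {V X : Ω → ℝ} (hV : Measurable V) (hX : Measurable X)
    (hind : IndepFun X V P) (θ τ : ℝ)
    (hVtail : ∀ s : ℝ, P {ω | s < V ω} ≤ ENNReal.ofReal (min 1 (exp (-θ * s)))) :
    P {ω | τ < V ω + X ω} ≤ ∫⁻ x, ENNReal.ofReal (min 1 (exp (-θ * (τ - x)))) ∂(P.map X) := by
  have hPV : IsProbabilityMeasure (P.map V) := Measure.isProbabilityMeasure_map hV.aemeasurable
  have hmap : P.map (fun ω => (X ω, V ω)) = (P.map X).prod (P.map V) :=
    (indepFun_iff_map_prod_eq_prod_map_map hX.aemeasurable hV.aemeasurable).mp hind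
  have hsmeas : MeasurableSet {p : ℝ × ℝ | τ - p.1 < p.2} :=
    measurableSet_lt (measurable_const.sub measurable_fst) measurable_snd
  have hset : {ω | τ < V ω + X ω} = (fun ω => (X ω, V ω)) ⁻¹' {p : ℝ × ℝ | τ - p.1 < p.2} := by
    ext ω
    simp only [Set.mem_setOf_eq, Set.mem_preimage]
    constructor <;> intro h <;> linarith
  rw [hset, ← Measure.map_apply (hX.prodMk hV) hsmeas, hmap, Measure.prod_apply hsmeas]
  refine lintegral_mono fun x => ?_
  have h2 : Prod.mk x ⁻¹' {p : ℝ × ℝ | τ - p.1 < p.2} = {v : ℝ | τ - x < v} := rfl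
  rw [h2, show {v : ℝ | τ - x < v} = Set.Ioi (τ - x) from rfl,
    Measure.map_apply hV measurableSet_Ioi]
  exact hVtail (τ - x)

lemma lintegral_min_le_mgf (ν : Measure ℝ) (θ τ : ℝ) :
    ∫⁻ x, ENNReal.ofReal (min 1 (exp (-θ * (τ - x)))) ∂ν
      ≤ ENNReal.ofReal (exp (-θ * τ)) * ∫⁻ x, ENNReal.ofReal (exp (θ * x)) ∂ν := by
  rw [← lintegral_const_mul' _ _ ENNReal.ofReal_ne_top]
  refine lintegral_mono fun x => ?_
  rw [← ENNReal.ofReal_mul (exp_nonneg _), ← Real.exp_add]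
  refine ENNReal.ofReal_le_ofReal ((min_le_right _ _).trans (le_of_eq ?_))
  congr 1
  ring

lemma lintegral_exp_mul_expMeasure {r θ : ℝ} (hr : 0 < r) (hθ : θ < r) :
    ∫⁻ z, ENNReal.ofReal (exp (θ * z)) ∂(expMeasure r) ≤ ENNReal.ofReal (r / (r - θ)) := by
  have hpdf : Measurable (exponentialPDF r) := (measurable_exponentialPDFReal r).ennreal_ofReal
  have hexp : Measurable fun z : ℝ => ENNReal.ofReal (exp (θ * z)) :=
    (measurable_exp.comp (measurable_const_mul θ)).ennreal_ofReal
  have h1 : expMeasure r = volume.withDensity (exponentialPDF r) := rfl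
  rw [h1, lintegral_withDensity_eq_lintegral_mul _ hpdf hexp]
  have hle : ∀ z : ℝ, (exponentialPDF r * fun z => ENNReal.ofReal (exp (θ * z))) z
      ≤ (Set.Ici (0:ℝ)).indicator (fun z => ENNReal.ofReal (r * exp (-(r - θ) * z))) z := by
    intro z
    rcases lt_or_ge z 0 with hz | hz
    · rw [Pi.mul_apply, exponentialPDF_of_neg hz, zero_mul]
      exact zero_le
    · rw [Pi.mul_apply, exponentialPDF_of_nonneg hz,
        Set.indicator_of_mem (Set.mem_Ici.mpr hz),
        ← ENNReal.ofReal_mul (by positivity)]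
      apply ENNReal.ofReal_le_ofReal
      rw [mul_assoc, ← Real.exp_add]
      apply le_of_eq
      congr 2
      ring
  calc ∫⁻ z, (exponentialPDF r * fun z => ENNReal.ofReal (exp (θ * z))) z
      ≤ ∫⁻ z, (Set.Ici (0:ℝ)).indicator (fun z => ENNReal.ofReal (r * exp (-(r - θ) * z))) z :=
        lintegral_mono hle
    _ = ∫⁻ z in Set.Ici 0, ENNReal.ofReal (r * exp (-(r - θ) * z)) :=
        lintegral_indicator measurableSet_Ici _
    _ = ENNReal.ofReal (∫ z in Set.Ici (0:ℝ), r * exp (-(r - θ) * z)) := by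
        rw [← ofReal_integral_eq_lintegral_ofReal]
        · exact Iff.mpr integrableOn_Ici_iff_integrableOn_Ioi
            ((exp_neg_integrableOn_Ioi 0 (by linarith)).const_mul r)
        · exact Filter.Eventually.of_forall fun z => by positivity
    _ = ENNReal.ofReal (r / (r - θ)) := by
        rw [MeasureTheory.integral_Ici_eq_integral_Ioi, MeasureTheory.integral_const_mul,
          integral_exp_neg_mul_Ioi (by linarith : (0:ℝ) < r - θ)]
        congr 1
        rw [mul_zero, Real.exp_zero]
        field_simp

lemma lintegral_min_exp_expMeasure {μr θ τ : ℝ} (hμ : 0 < μr) (hθ : 0 < θ) (hne : θ ≠ μr)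
    (hτ : 0 ≤ τ) :
    ∫⁻ x, ENNReal.ofReal (min 1 (exp (-θ * (τ - x)))) ∂(expMeasure μr)
      ≤ ENNReal.ofReal ((μr / (μr - θ)) * (exp (-θ * τ) - exp (-μr * τ)) + exp (-μr * τ)) := by
  have hpdf : Measurable (exponentialPDF μr) := (measurable_exponentialPDFReal μr).ennreal_ofReal
  have hmin : Measurable fun x : ℝ => ENNReal.ofReal (min 1 (exp (-θ * (τ - x)))) := by
    apply Measurable.ennreal_ofReal
    exact measurable_const.min
      (measurable_exp.comp ((measurable_const.sub measurable_id).const_mul (-θ)))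
  have h1 : expMeasure μr = volume.withDensity (exponentialPDF μr) := rfl
  rw [h1, lintegral_withDensity_eq_lintegral_mul _ hpdf hmin]
  set g1 : ℝ → ℝ≥0∞ := (Set.Icc 0 τ).indicator
    (fun x => ENNReal.ofReal (μr * exp (-μr * x) * exp (-θ * (τ - x)))) with hg1
  set g2 : ℝ → ℝ≥0∞ := (Set.Ioi τ).indicator
    (fun x => ENNReal.ofReal (μr * exp (-μr * x))) with hg2
  have hle : ∀ x : ℝ,
      (exponentialPDF μr * fun x => ENNReal.ofReal (min 1 (exp (-θ * (τ - x))))) x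
        ≤ g1 x + g2 x := by
    intro x
    rcases lt_or_ge x 0 with hx | hx
    · rw [Pi.mul_apply, exponentialPDF_of_neg hx, zero_mul]
      exact zero_le
    · rw [Pi.mul_apply, exponentialPDF_of_nonneg hx, ← ENNReal.ofReal_mul (by positivity)]
      rcases le_or_gt x τ with hxt | hxt
      · refine le_trans ?_ le_self_add
        rw [hg1, Set.indicator_of_mem (Set.mem_Icc.mpr ⟨hx, hxt⟩),
          show -μr * x = -(μr * x) by ring]
        exact ENNReal.ofReal_le_ofReal
          (mul_le_mul_of_nonneg_left (min_le_right _ _) (by positivity))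
      · refine le_trans ?_ le_add_self
        rw [hg2, Set.indicator_of_mem (Set.mem_Ioi.mpr hxt),
          show -μr * x = -(μr * x) by ring]
        exact ENNReal.ofReal_le_ofReal
          (mul_le_of_le_one_right (by positivity) (min_le_left _ _))
  have hI1 : ∫⁻ x, g1 x = ENNReal.ofReal ((μr / (μr - θ)) * (exp (-θ * τ) - exp (-μr * τ))) := by
    rw [hg1, lintegral_indicator measurableSet_Icc]
    have hcont : Continuous fun x : ℝ => μr * exp (-μr * x) * exp (-θ * (τ - x)) := by
      continuity
    rw [← ofReal_integral_eq_lintegral_ofReal (hcont.integrableOn_Icc)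
      (Filter.Eventually.of_forall fun x => by positivity)]
    congr 1
    have hfun : ∀ x : ℝ, μr * exp (-μr * x) * exp (-θ * (τ - x))
        = (μr * exp (-θ * τ)) * exp ((θ - μr) * x) := by
      intro x
      rw [mul_assoc, mul_assoc, ← Real.exp_add, ← Real.exp_add]
      congr 2
      ring
    simp only [hfun]
    rw [MeasureTheory.integral_const_mul, MeasureTheory.integral_Icc_eq_integral_Ioc,
      integral_exp_mul_Ioc (sub_ne_zero.mpr hne) hτ]
    have hE : exp (-θ * τ) * exp ((θ - μr) * τ) = exp (-μr * τ) := by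
      rw [← Real.exp_add]; congr 1; ring
    have hd1 : θ - μr ≠ 0 := sub_ne_zero.mpr hne
    have hd2 : μr - θ ≠ 0 := sub_ne_zero.mpr (Ne.symm hne)
    calc μr * exp (-θ * τ) * ((exp ((θ - μr) * τ) - 1) / (θ - μr))
        = μr * (exp (-θ * τ) * exp ((θ - μr) * τ) - exp (-θ * τ)) / (θ - μr) := by ring
      _ = μr * (exp (-μr * τ) - exp (-θ * τ)) / (θ - μr) := by rw [hE]
      _ = μr / (μr - θ) * (exp (-θ * τ) - exp (-μr * τ)) := by field_simp; ring
  have hI2 : ∫⁻ x, g2 x = ENNReal.ofReal (exp (-μr * τ)) := by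
    rw [hg2, lintegral_indicator measurableSet_Ioi]
    rw [← ofReal_integral_eq_lintegral_ofReal
      ((exp_neg_integrableOn_Ioi τ hμ).const_mul μr)
      (Filter.Eventually.of_forall fun x => by positivity)]
    rw [MeasureTheory.integral_const_mul, integral_exp_neg_mul_Ioi hμ]
    congr 1
    field_simp
  have hnn1 : 0 ≤ μr / (μr - θ) * (exp (-θ * τ) - exp (-μr * τ)) := by
    rcases lt_or_gt_of_ne hne with h | h
    · apply mul_nonneg (div_nonneg hμ.le (by linarith))
      rw [sub_nonneg, Real.exp_le_exp]
      nlinarith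
    · refine mul_nonneg_iff.mpr (Or.inr ⟨?_, ?_⟩)
      · apply div_nonpos_of_nonneg_of_nonpos hμ.le
        linarith
      · rw [sub_nonpos, Real.exp_le_exp]
        nlinarith
  calc ∫⁻ x, (exponentialPDF μr * fun x => ENNReal.ofReal (min 1 (exp (-θ * (τ - x))))) x
      ≤ ∫⁻ x, (g1 x + g2 x) := lintegral_mono hle
    _ = (∫⁻ x, g1 x) + ∫⁻ x, g2 x := by
        apply lintegral_add_left
        exact (((measurable_const.mul
          (measurable_exp.comp (measurable_id.const_mul (-μr)))).mul
          (measurable_exp.comp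
            ((measurable_const.sub measurable_id).const_mul (-θ)))).ennreal_ofReal).indicator
          measurableSet_Icc
    _ ≤ ENNReal.ofReal ((μr / (μr - θ)) * (exp (-θ * τ) - exp (-μr * τ)) + exp (-μr * τ)) := by
        rw [hI1, hI2, ← ENNReal.ofReal_add hnn1 (by positivity)]

lemma le_ofReal_min {p : ℝ≥0∞} {x : ℝ} (h1 : p ≤ 1) (h2 : p ≤ ENNReal.ofReal x) :
    p ≤ ENNReal.ofReal (min 1 x) := by
  rcases le_total (1:ℝ) x with h | h
  · rw [min_eq_left h]
    simpa using h1
  · rw [min_eq_right h]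
    exact h2

lemma merged_iIndep {Ω : Type*} [MeasurableSpace Ω] {P : Measure Ω}
    {Z a : ℕ → Ω → ℝ}
    (haiid : iIndepFun a P)
    (hZiid : iIndepFun Z P)
    (hZa : IndepFun (fun ω (ν : ℕ) => Z ν ω) (fun ω (ν : ℕ) => a ν ω) P) :
    iIndepFun
      (fun i => if Even i then Z (i / 2) else a (i / 2)) P := by
  classical
  rw [iIndepFun_iff_measure_inter_preimage_eq_mul]
  intro S sets hsets
  set g : ℕ → Ω → ℝ := fun i => if Even i then Z (i / 2) else a (i / 2) with hgdef
  show P (⋂ i ∈ S, g i ⁻¹' sets i) = ∏ i ∈ S, P (g i ⁻¹' sets i)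
  set SE := S.filter (fun i => Even i) with hSE
  set SO := S.filter (fun i => ¬ Even i) with hSO
  have hSEs : ∀ i ∈ SE, i ∈ S := fun i hi => (Finset.mem_filter.mp hi).1
  have hSOs : ∀ i ∈ SO, i ∈ S := fun i hi => (Finset.mem_filter.mp hi).1
  have hSEe : ∀ i ∈ SE, Even i := fun i hi => (Finset.mem_filter.mp hi).2
  have hSOo : ∀ i ∈ SO, ¬ Even i := fun i hi => (Finset.mem_filter.mp hi).2
  have hAmeas : MeasurableSet (⋂ i ∈ SE, (fun z : ℕ → ℝ => z (i / 2)) ⁻¹' sets i) :=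
    Finset.measurableSet_biInter _ fun i hi =>
      (measurable_pi_apply _) (hsets i (hSEs i hi))
  have hBmeas : MeasurableSet (⋂ i ∈ SO, (fun z : ℕ → ℝ => z (i / 2)) ⁻¹' sets i) :=
    Finset.measurableSet_biInter _ fun i hi =>
      (measurable_pi_apply _) (hsets i (hSOs i hi))
  have hEeq : (⋂ i ∈ SE, g i ⁻¹' sets i)
      = (fun ω (ν : ℕ) => Z ν ω) ⁻¹' (⋂ i ∈ SE, (fun z : ℕ → ℝ => z (i / 2)) ⁻¹' sets i) := by
    rw [Set.preimage_iInter₂]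
    refine Set.iInter₂_congr fun i hi => ?_
    rw [hgdef]
    simp only [if_pos (hSEe i hi)]
    rfl
  have hOeq : (⋂ i ∈ SO, g i ⁻¹' sets i)
      = (fun ω (ν : ℕ) => a ν ω) ⁻¹' (⋂ i ∈ SO, (fun z : ℕ → ℝ => z (i / 2)) ⁻¹' sets i) := by
    rw [Set.preimage_iInter₂]
    refine Set.iInter₂_congr fun i hi => ?_
    rw [hgdef]
    simp only [if_neg (hSOo i hi)]
    rfl
  have hinter : (⋂ i ∈ S, g i ⁻¹' sets i)
      = (⋂ i ∈ SE, g i ⁻¹' sets i) ∩ (⋂ i ∈ SO, g i ⁻¹' sets i) := by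
    rw [show S = SE ∪ SO from (Finset.filter_union_filter_not_eq _ S).symm,
      ← Finset.set_biInter_coe, Finset.coe_union, Set.biInter_union,
      Finset.set_biInter_coe, Finset.set_biInter_coe]
  have hEfac : P (⋂ i ∈ SE, g i ⁻¹' sets i) = ∏ i ∈ SE, P (g i ⁻¹' sets i) := by
    have h1 : (⋂ i ∈ SE, g i ⁻¹' sets i)
        = ⋂ ν ∈ SE.image (· / 2), Z ν ⁻¹' (fun ν => sets (2 * ν)) ν := by
      rw [Finset.set_biInter_finset_image]
      refine Set.iInter₂_congr fun i hi => ?_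
      have h2 : 2 * (i / 2) = i := by
        have := Nat.even_iff.mp (hSEe i hi)
        omega
      rw [hgdef]
      simp only [if_pos (hSEe i hi), h2]
    have h2 : ∀ ν ∈ SE.image (· / 2), MeasurableSet ((fun ν => sets (2 * ν)) ν) := by
      intro ν hν
      obtain ⟨i, hi, rfl⟩ := Finset.mem_image.mp hν
      have h3 : 2 * (i / 2) = i := by
        have := Nat.even_iff.mp (hSEe i hi)
        omega
      show MeasurableSet (sets (2 * (i / 2)))
      rw [h3]
      exact hsets i (hSEs i hi)
    rw [h1, hZiid.measure_inter_preimage_eq_mul (SE.image (· / 2)) h2,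
      Finset.prod_image (fun i hi j hj hij => by
        have h1 := Nat.even_iff.mp (hSEe i hi)
        have h2 := Nat.even_iff.mp (hSEe j hj)
        omega)]
    refine Finset.prod_congr rfl fun i hi => ?_
    have h3 : 2 * (i / 2) = i := by
      have := Nat.even_iff.mp (hSEe i hi)
      omega
    rw [hgdef]
    simp only [if_pos (hSEe i hi), h3]
  have hOfac : P (⋂ i ∈ SO, g i ⁻¹' sets i) = ∏ i ∈ SO, P (g i ⁻¹' sets i) := by
    have h1 : (⋂ i ∈ SO, g i ⁻¹' sets i)
        = ⋂ ν ∈ SO.image (· / 2), a ν ⁻¹' (fun ν => sets (2 * ν + 1)) ν := by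
      rw [Finset.set_biInter_finset_image]
      refine Set.iInter₂_congr fun i hi => ?_
      have h2 : 2 * (i / 2) + 1 = i := by
        have := Nat.odd_iff.mp (Nat.not_even_iff_odd.mp (hSOo i hi))
        omega
      rw [hgdef]
      simp only [if_neg (hSOo i hi), h2]
    have h2 : ∀ ν ∈ SO.image (· / 2), MeasurableSet ((fun ν => sets (2 * ν + 1)) ν) := by
      intro ν hν
      obtain ⟨i, hi, rfl⟩ := Finset.mem_image.mp hν
      have h3 : 2 * (i / 2) + 1 = i := by
        have := Nat.odd_iff.mp (Nat.not_even_iff_odd.mp (hSOo i hi))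
        omega
      show MeasurableSet (sets (2 * (i / 2) + 1))
      rw [h3]
      exact hsets i (hSOs i hi)
    rw [h1, haiid.measure_inter_preimage_eq_mul (SO.image (· / 2)) h2,
      Finset.prod_image (fun i hi j hj hij => by
        have h1 := Nat.odd_iff.mp (Nat.not_even_iff_odd.mp (hSOo i hi))
        have h2 := Nat.odd_iff.mp (Nat.not_even_iff_odd.mp (hSOo j hj))
        omega)]
    refine Finset.prod_congr rfl fun i hi => ?_
    have h3 : 2 * (i / 2) + 1 = i := by
      have := Nat.odd_iff.mp (Nat.not_even_iff_odd.mp (hSOo i hi))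
      omega
    rw [hgdef]
    simp only [if_neg (hSOo i hi), h3]
  rw [hinter, hEeq, hOeq,
    hZa.measure_inter_preimage_eq_mul _ _ hAmeas hBmeas,
    ← hEeq, ← hOeq, hEfac, hOfac,
    ← Finset.prod_filter_mul_prod_filter_not S (fun i => Even i)]

lemma key_indep {Ω : Type*} [MeasurableSpace Ω] {P : Measure Ω} {Z a : ℕ → Ω → ℝ}
    (hameas : ∀ ν, Measurable (a ν)) (hZmeas : ∀ ν, Measurable (Z ν))
    (haiid : iIndepFun a P)
    (hZiid : iIndepFun Z P)
    (hZa : IndepFun (fun ω (ν : ℕ) => Z ν ω) (fun ω (ν : ℕ) => a ν ω) P) (n : ℕ) :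
    IndepFun (fun ω => Z n ω - a n ω) (sqWait Z a n) P := by
  classical
  set g : ℕ → Ω → ℝ := fun i => if Even i then Z (i / 2) else a (i / 2) with hgdef
  have hgmeas : ∀ i, Measurable (g i) := by
    intro i
    rw [hgdef]
    dsimp only
    split_ifs
    · exact hZmeas _
    · exact hameas _
  have hiid := merged_iIndep haiid hZiid hZa
  have hdisj : Disjoint ({2 * n, 2 * n + 1} : Finset ℕ) (Finset.range (2 * n)) := by
    rw [Finset.disjoint_left]
    intro i hi hir
    rw [Finset.mem_insert, Finset.mem_singleton] at hi
    rw [Finset.mem_range] at hir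
    omega
  have hbase := hiid.indepFun_finset {2 * n, 2 * n + 1} (Finset.range (2 * n)) hdisj hgmeas
  have hm1 : (2 * n : ℕ) ∈ ({2 * n, 2 * n + 1} : Finset ℕ) := by simp
  have hm2 : (2 * n + 1 : ℕ) ∈ ({2 * n, 2 * n + 1} : Finset ℕ) := by simp
  set φ₁ : (({2 * n, 2 * n + 1} : Finset ℕ) → ℝ) → ℝ := fun v => v ⟨2 * n, hm1⟩ - v ⟨2 * n + 1, hm2⟩
    with hφ₁
  set Z' : ℕ → ((Finset.range (2 * n) : Finset ℕ) → ℝ) → ℝ := fun ν v =>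
    if h : 2 * ν ∈ Finset.range (2 * n) then v ⟨2 * ν, h⟩ else 0 with hZ'
  set a' : ℕ → ((Finset.range (2 * n) : Finset ℕ) → ℝ) → ℝ := fun ν v =>
    if h : 2 * ν + 1 ∈ Finset.range (2 * n) then v ⟨2 * ν + 1, h⟩ else 0 with ha'
  have hφ₁m : Measurable φ₁ := (measurable_pi_apply _).sub (measurable_pi_apply _)
  have hZ'm : ∀ ν, Measurable (Z' ν) := by
    intro ν
    rw [hZ']
    dsimp only
    split_ifs
    · exact measurable_pi_apply _
    · exact measurable_const
  have ha'm : ∀ ν, Measurable (a' ν) := by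
    intro ν
    rw [ha']
    dsimp only
    split_ifs
    · exact measurable_pi_apply _
    · exact measurable_const
  have hφ₂m : Measurable (sqWait Z' a' n) := sqWait_measurable hZ'm ha'm n
  have hcomp := hbase.comp hφ₁m hφ₂m
  have he1 : (φ₁ ∘ fun ω (i : ({2 * n, 2 * n + 1} : Finset ℕ)) => g (i : ℕ) ω)
      = fun ω => Z n ω - a n ω := by
    funext ω
    simp only [Function.comp_apply, hφ₁, hgdef]
    have h1 : Even (2 * n) := even_two_mul n
    have h2 : ¬ Even (2 * n + 1) := by
      rw [Nat.even_add_one]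
      simpa using h1
    rw [if_pos h1, if_neg h2]
    congr 2 <;> omega
  have he2 : (sqWait Z' a' n ∘ fun ω (i : (Finset.range (2 * n) : Finset ℕ)) => g (i : ℕ) ω)
      = sqWait Z a n := by
    funext ω
    simp only [Function.comp_apply]
    refine (sqWait_congr ?_ ?_).symm
    · intro ν h1 h2
      have hmem : 2 * ν ∈ Finset.range (2 * n) := by
        rw [Finset.mem_range]
        omega
      rw [hZ']
      dsimp only
      rw [dif_pos hmem]
      show Z ν ω = g (2 * ν) ω
      rw [hgdef]
      have h3 : Even (2 * ν) := even_two_mul ν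
      simp only [if_pos h3]
      congr 1
      omega
    · intro ν h1 h2
      have hmem : 2 * ν + 1 ∈ Finset.range (2 * n) := by
        rw [Finset.mem_range]
        omega
      rw [ha']
      dsimp only
      rw [dif_pos hmem]
      show a ν ω = g (2 * ν + 1) ω
      rw [hgdef]
      have h3 : ¬ Even (2 * ν + 1) := by
        rw [Nat.even_add_one]
        simpa using even_two_mul ν
      simp only [if_neg h3]
      congr 1
      omega
  rw [he1, he2] at hcomp
  exact hcomp

/-- **Waiting and sojourn time bounds for the single-queue multi-server (GI|M|k) system.**
The inter-arrival times `a` are i.i.d.; the inter-idle times `Z ν` are i.i.d. exponential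
with rate `k·μ`, independent of the arrivals; the job service time `L n` is exponential with
rate `μ` and independent of the waiting time `W n`; and `0 < θ < k·μ`, `θ ≠ μ`, with
`(kμ/(kμ-θ)) · E[exp (-θ a 1)] ≤ 1`.  Then `P[W n > τ] ≤ exp (-θ τ)` and, for the sojourn
time `T n = W n + L n`, `P[T n > τ] ≤ (μ/(μ-θ)) (exp (-θ τ) - exp (-μ τ)) + exp (-μ τ)`. -/
theorem single_queue_multiserver_bounds
    {Ω : Type*} [MeasurableSpace Ω] (P : Measure Ω) [IsProbabilityMeasure P]
    (k : ℕ) (hk : 1 ≤ k) (μ : ℝ) (hμ : 0 < μ)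
    (a Z L : ℕ → Ω → ℝ)
    (hameas : ∀ ν, Measurable (a ν)) (hZmeas : ∀ ν, Measurable (Z ν))
    (hLmeas : ∀ n, Measurable (L n))
    (hanonneg : ∀ ν ω, 0 ≤ a ν ω)
    (haiid : iIndepFun a P)
    (haid : ∀ ν, 1 ≤ ν → IdentDistrib (a ν) (a 1) P P)
    (hZiid : iIndepFun Z P)
    (hZexp : ∀ ν, 1 ≤ ν → P.map (Z ν) = expMeasure ((k : ℝ) * μ))
    (hZa : IndepFun (fun ω (ν : ℕ) => Z ν ω) (fun ω (ν : ℕ) => a ν ω) P)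
    (hLexp : ∀ n, 1 ≤ n → P.map (L n) = expMeasure μ)
    (hLW : ∀ n, 1 ≤ n → IndepFun (L n) (sqWait Z a n) P)
    (θ : ℝ) (hθ0 : 0 < θ) (hθk : θ < (k : ℝ) * μ) (hθμ : θ ≠ μ)
    (hstab : ((k : ℝ) * μ / ((k : ℝ) * μ - θ)) * (∫ ω, exp (-θ * a 1 ω) ∂P) ≤ 1) :
    ∀ n : ℕ, 1 ≤ n → ∀ τ : ℝ, 0 ≤ τ →
      P {ω | τ < sqWait Z a n ω} ≤ ENNReal.ofReal (exp (-θ * τ)) ∧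
      P {ω | τ < sqWait Z a n ω + L n ω}
        ≤ ENNReal.ofReal ((μ / (μ - θ)) * (exp (-θ * τ) - exp (-μ * τ)) + exp (-μ * τ)) := by
  have hk1 : (1:ℝ) ≤ (k:ℝ) := by exact_mod_cast hk
  have hkμ : (0:ℝ) < (k:ℝ) * μ := by nlinarith
  have hWmeas := sqWait_measurable hZmeas hameas
  -- the moment generating function bound for the increments
  have hmgf : ∀ p : ℕ, 1 ≤ p →
      ∫⁻ x, ENNReal.ofReal (exp (θ * x)) ∂(P.map (fun ω => Z p ω - a p ω)) ≤ 1 := by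
    intro p hp
    have hexpm : Measurable fun x : ℝ => ENNReal.ofReal (exp (θ * x)) :=
      (measurable_exp.comp (measurable_id.const_mul θ)).ennreal_ofReal
    have hexpma : Measurable fun x : ℝ => ENNReal.ofReal (exp (-θ * x)) :=
      (measurable_exp.comp (measurable_id.const_mul (-θ))).ennreal_ofReal
    rw [lintegral_map hexpm (g := fun ω => Z p ω - a p ω) ((hZmeas p).sub (hameas p))]
    have hindZa : IndepFun (Z p) (a p) P :=
      hZa.comp (measurable_pi_apply p) (measurable_pi_apply p)
    have hindE : IndepFun (fun ω => ENNReal.ofReal (exp (θ * Z p ω)))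
        (fun ω => ENNReal.ofReal (exp (-θ * a p ω))) P :=
      hindZa.comp hexpm hexpma
    have hZbound : ∫⁻ ω, ENNReal.ofReal (exp (θ * Z p ω)) ∂P
        ≤ ENNReal.ofReal (((k:ℝ) * μ) / ((k:ℝ) * μ - θ)) := by
      rw [← lintegral_map hexpm (hZmeas p), hZexp p hp]
      exact lintegral_exp_mul_expMeasure hkμ hθk
    have haint : Integrable (fun ω => exp (-θ * a 1 ω)) P := by
      refine Integrable.mono' (integrable_const 1)
        ((measurable_exp.comp ((hameas 1).const_mul (-θ))).aestronglyMeasurable)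
        (Filter.Eventually.of_forall fun ω => ?_)
      rw [Real.norm_eq_abs, abs_of_nonneg (exp_nonneg _)]
      apply Real.exp_le_one_iff.mpr
      have := hanonneg 1 ω
      nlinarith
    have habound : ∫⁻ ω, ENNReal.ofReal (exp (-θ * a p ω)) ∂P
        = ENNReal.ofReal (∫ ω, exp (-θ * a 1 ω) ∂P) := by
      rw [← lintegral_map hexpma (hameas p), (haid p hp).map_eq,
        lintegral_map hexpma (hameas 1),
        ← ofReal_integral_eq_lintegral_ofReal haint
          (Filter.Eventually.of_forall fun ω => exp_nonneg _)]
    calc ∫⁻ ω, ENNReal.ofReal (exp (θ * (Z p ω - a p ω))) ∂P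
        = ∫⁻ ω, ENNReal.ofReal (exp (θ * Z p ω)) * ENNReal.ofReal (exp (-θ * a p ω)) ∂P := by
          refine lintegral_congr fun ω => ?_
          rw [← ENNReal.ofReal_mul (exp_nonneg _), ← Real.exp_add]
          congr 2
          ring
      _ = (∫⁻ ω, ENNReal.ofReal (exp (θ * Z p ω)) ∂P)
          * ∫⁻ ω, ENNReal.ofReal (exp (-θ * a p ω)) ∂P :=
          lintegral_mul_eq_lintegral_mul_lintegral_of_indepFun
            (hexpm.comp (hZmeas p)) (hexpma.comp (hameas p)) hindE
      _ ≤ ENNReal.ofReal (((k:ℝ) * μ) / ((k:ℝ) * μ - θ))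
          * ENNReal.ofReal (∫ ω, exp (-θ * a 1 ω) ∂P) :=
          mul_le_mul' hZbound (le_of_eq habound)
      _ = ENNReal.ofReal ((((k:ℝ) * μ) / ((k:ℝ) * μ - θ)) * ∫ ω, exp (-θ * a 1 ω) ∂P) :=
          (ENNReal.ofReal_mul (div_nonneg hkμ.le (by linarith))).symm
      _ ≤ 1 := by
          rw [← ENNReal.ofReal_one]
          exact ENNReal.ofReal_le_ofReal hstab
  have hind := fun p => key_indep hameas hZmeas haiid hZiid hZa p
  -- the waiting time bound, by induction (Lindley recursion)
  have main : ∀ m : ℕ, ∀ t : ℝ,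
      P {ω | t < sqWait Z a (m+1) ω} ≤ ENNReal.ofReal (min 1 (exp (-θ * t))) := by
    intro m
    induction m with
    | zero =>
      intro t
      have hset : {ω | t < sqWait Z a 1 ω} = {ω : Ω | t < 0} := by
        ext ω
        simp [sqWait_one]
      rw [hset]
      refine le_ofReal_min prob_le_one ?_
      rcases lt_or_ge t 0 with h | h
      · refine le_trans prob_le_one ?_
        rw [← ENNReal.ofReal_one]
        exact ENNReal.ofReal_le_ofReal (Real.one_le_exp (by nlinarith))
      · have he : {ω : Ω | t < 0} = ∅ := by
          ext ω
          simp only [Set.mem_setOf_eq, Set.mem_empty_iff_false, iff_false, not_lt]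
          linarith
        rw [he]
        simp
    | succ p ih =>
      intro t
      refine le_ofReal_min prob_le_one ?_
      rcases lt_or_ge t 0 with h | h
      · refine le_trans prob_le_one ?_
        rw [← ENNReal.ofReal_one]
        exact ENNReal.ofReal_le_ofReal (Real.one_le_exp (by nlinarith))
      · have hset : {ω | t < sqWait Z a (p+1+1) ω}
            = {ω | t < sqWait Z a (p+1) ω + (Z (p+1) ω - a (p+1) ω)} := by
          ext ω
          rw [Set.mem_setOf_eq, Set.mem_setOf_eq, sqWait_succ Z a (by omega) ω, lt_max_iff]
          constructor
          · rintro (h1 | h1)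
            · exact h1
            · linarith
          · exact Or.inl
        rw [hset]
        have h1 := tail_step P (hWmeas (p+1)) ((hZmeas (p+1)).sub (hameas (p+1)))
          (hind (p+1)) θ t ih
        refine h1.trans ((lintegral_min_le_mgf _ θ t).trans ?_)
        calc ENNReal.ofReal (exp (-θ * t))
            * ∫⁻ x, ENNReal.ofReal (exp (θ * x)) ∂(P.map (fun ω => Z (p+1) ω - a (p+1) ω))
            ≤ ENNReal.ofReal (exp (-θ * t)) * 1 := mul_le_mul' le_rfl (hmgf (p+1) (by omega))
          _ = ENNReal.ofReal (exp (-θ * t)) := mul_one _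
  intro n hn τ hτ
  obtain ⟨m, rfl⟩ : ∃ m, n = m + 1 := ⟨n - 1, by omega⟩
  constructor
  · exact (main m τ).trans (ENNReal.ofReal_le_ofReal (min_le_right _ _))
  · have h1 := tail_step P (hWmeas (m+1)) (hLmeas (m+1)) (hLW (m+1) hn) θ τ (main m)
    rw [hLexp (m+1) hn] at h1
    exact h1.trans (lintegral_min_exp_expMeasure hμ hθ0 hθμ hτ)
end
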